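/- arXiv:1608.07021 — 7 statements merged into one kernel-verified Lean document; each statement's English description precedes it below -/
import Mathlib

section
/- Let f : 2^N → ℝ ∪ {-∞} be an M♮-concave function. For any X, Y ∈ argmax f (the set of maximizers of f over 2^N) and any I ⊆ X \ Y, there exists J ⊆ Y \ X such that (X \ I) ∪ J ∈ argmax f and (Y \ J) ∪ I ∈ argmax f. -/
open Finset

/-- (M♮-EXC): exchange property for set functions into ℝ ∪ {-∞}. -/
def MExc {N : Type*} [DecidableEq N] (f : Finset N → WithBot ℝ) : Prop :=
  ∀ X Y : Finset N, ∀ i ∈ X \ Y,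
    f X + f Y ≤ max (f (X.erase i) + f (insert i Y))
      ((Y \ X).sup fun j => f (insert j (X.erase i)) + f ((insert i Y).erase j))

namespace MExAux
set_option linter.unusedSectionVars false
set_option linter.unnecessarySimpa false

open Sum

attribute [local instance] Classical.propDecidable

lemma both_eq {M x y : WithBot ℝ} (hM : M ≠ ⊥) (hx : x ≤ M) (hy : y ≤ M)
    (h : M + M ≤ x + y) : x = M ∧ y = M := by
  lift M to ℝ using hM
  have hx' : x ≠ ⊥ := by
    rintro rfl
    simp only [WithBot.bot_add] at h
    exact absurd h (by simp [← WithBot.coe_add])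
  have hy' : y ≠ ⊥ := by
    rintro rfl
    simp only [WithBot.add_bot] at h
    exact absurd h (by simp [← WithBot.coe_add])
  lift x to ℝ using hx'
  lift y to ℝ using hy'
  rw [← WithBot.coe_add, ← WithBot.coe_add, WithBot.coe_le_coe] at h
  rw [WithBot.coe_le_coe] at hx hy
  constructor <;> · rw [WithBot.coe_eq_coe]; linarith

variable {N : Type*} [DecidableEq N] {f : Finset N → WithBot ℝ}

/-- `Z` is a maximizer of `f`. -/
def Mx (f : Finset N → WithBot ℝ) (Z : Finset N) : Prop := ∀ W, f W ≤ f Z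

lemma mx_ne_bot (hdom : ∃ X, f X ≠ ⊥) {A : Finset N} (hA : Mx f A) : f A ≠ ⊥ := by
  obtain ⟨W, hW⟩ := hdom
  intro h
  exact hW (le_bot_iff.mp (h ▸ hA W))

lemma mx_of_eq {A B : Finset N} (hA : Mx f A) (h : f B = f A) : Mx f B :=
  fun W => h ▸ hA W

lemma mx_eq {A B : Finset N} (hA : Mx f A) (hB : Mx f B) : f A = f B :=
  le_antisymm (hB A) (hA B)

/-- single exchange property at maximizers -/
lemma sexc (hdom : ∃ X, f X ≠ ⊥) (hf : MExc f) {A B : Finset N}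
    (hA : Mx f A) (hB : Mx f B) {a : N} (ha : a ∈ A \ B) :
    (Mx f (A.erase a) ∧ Mx f (insert a B)) ∨
    ∃ b ∈ B \ A, Mx f (insert b (A.erase a)) ∧ Mx f ((insert a B).erase b) := by
  have h := hf A B a ha
  rw [mx_eq hA hB] at h
  have hMb : f B ≠ ⊥ := mx_ne_bot hdom hB
  rcases le_max_iff.mp h with h1 | h2
  · obtain ⟨h3, h4⟩ := both_eq hMb (hB _) (hB _) h1
    exact Or.inl ⟨mx_of_eq hB h3, mx_of_eq hB h4⟩
  · have hne : (B \ A).Nonempty := by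
      rcases (B \ A).eq_empty_or_nonempty with he | hne
      · rw [he] at h2
        simp only [Finset.sup_empty, le_bot_iff] at h2
        exact absurd h2 (by
          intro hc
          rcases WithBot.add_eq_bot.mp hc with h | h <;> exact hMb h)
      · exact hne
    obtain ⟨b, hb, hbe⟩ := Finset.exists_mem_eq_sup _ hne
      (fun j => f (insert j (A.erase a)) + f ((insert a B).erase j))
    rw [hbe] at h2
    obtain ⟨h3, h4⟩ := both_eq hMb (hB _) (hB _) h2
    exact Or.inr ⟨b, hb, mx_of_eq hB h3, mx_of_eq hB h4⟩

/-- augmentation property at maximizers -/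
lemma aug (hdom : ∃ X, f X ≠ ⊥) (hf : MExc f) :
    ∀ (k : ℕ) {A B : Finset N}, (B \ A).card ≤ k → Mx f A → Mx f B →
      A.card < B.card → ∃ j ∈ B \ A, Mx f (insert j A) := by
  intro k
  induction k with
  | zero =>
    intro A B hk hA hB hcard
    rw [Nat.le_zero, Finset.card_eq_zero, Finset.sdiff_eq_empty_iff_subset] at hk
    exact absurd (Finset.card_le_card hk) (by omega)
  | succ k ih =>
    intro A B hk hA hB hcard
    have hne : (B \ A).Nonempty := by
      rw [Finset.nonempty_iff_ne_empty]
      intro he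
      rw [Finset.sdiff_eq_empty_iff_subset] at he
      exact absurd (Finset.card_le_card he) (by omega)
    obtain ⟨j, hj⟩ := hne
    rcases sexc hdom hf hB hA hj with ⟨h1, h2⟩ | ⟨x, hx, h1, h2⟩
    · exact ⟨j, hj, h2⟩
    · -- B' := insert x (B.erase j)
      have hjB : j ∈ B := (Finset.mem_sdiff.mp hj).1
      have hjA : j ∉ A := (Finset.mem_sdiff.mp hj).2
      have hxA : x ∈ A := (Finset.mem_sdiff.mp hx).1
      have hxB : x ∉ B := (Finset.mem_sdiff.mp hx).2
      set B' := insert x (B.erase j) with hB'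
      have hcard' : B'.card = B.card := by
        rw [hB', Finset.card_insert_of_notMem (fun hc => hxB (Finset.mem_of_mem_erase hc)),
          Finset.card_erase_of_mem hjB]
        have : 1 ≤ B.card := Finset.card_pos.mpr ⟨j, hjB⟩
        omega
      have hBA' : B' \ A = (B \ A).erase j := by
        ext y
        simp only [hB', Finset.mem_sdiff, Finset.mem_insert, Finset.mem_erase]
        constructor
        · rintro ⟨hy | ⟨hy1, hy2⟩, hy3⟩
          · exact absurd (hy ▸ hxA) hy3
          · exact ⟨hy1, hy2, hy3⟩
        · rintro ⟨hy1, hy2, hy3⟩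
          exact ⟨Or.inr ⟨hy1, hy2⟩, hy3⟩
      have hk' : (B' \ A).card ≤ k := by
        rw [hBA']
        have := Finset.card_erase_of_mem hj
        have : 1 ≤ (B \ A).card := Finset.card_pos.mpr ⟨j, hj⟩
        rw [Finset.card_erase_of_mem hj]
        omega
      obtain ⟨j', hj', hmx⟩ := ih hk' hA h1 (hcard' ▸ hcard)
      refine ⟨j', ?_, hmx⟩
      rw [hBA'] at hj'
      exact Finset.mem_of_mem_erase hj'


section BaseFamily
open Sum
set_option linter.unusedSectionVars false

variable [Fintype N]

lemma toLeft_erase_inl (B : Finset (N ⊕ N)) (a : N) :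
    (B.erase (inl a)).toLeft = B.toLeft.erase a := by
  ext y; simp [Finset.mem_erase]

lemma toLeft_erase_inr (B : Finset (N ⊕ N)) (t : N) :
    (B.erase (inr t)).toLeft = B.toLeft := by
  ext y; simp [Finset.mem_erase]

lemma card_swap {γ : Type*} [DecidableEq γ] {B : Finset γ} {i j : γ}
    (hi : i ∈ B) (hj : j ∉ B) : (insert j (B.erase i)).card = B.card := by
  rw [Finset.card_insert_of_notMem (fun hc => hj (Finset.mem_of_mem_erase hc)),
    Finset.card_erase_of_mem hi]
  have : 1 ≤ B.card := Finset.card_pos.mpr ⟨i, hi⟩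
  omega

/-- auxiliary base family on `N ⊕ N` -/
def Bse (f : Finset N → WithBot ℝ) (B : Finset (N ⊕ N)) : Prop :=
  Mx f B.toLeft ∧ B.card = Fintype.card N

lemma bse_exch (hdom : ∃ X, f X ≠ ⊥) (hf : MExc f) {B₁ B₂ : Finset (N ⊕ N)} {i : N ⊕ N}
    (h₁ : Bse f B₁) (h₂ : Bse f B₂) (hi : i ∈ B₁ \ B₂) :
    ∃ j ∈ B₂ \ B₁, Bse f (insert j (B₁.erase i)) := by
  obtain ⟨hA₁, hc₁⟩ := h₁
  obtain ⟨hA₂, hc₂⟩ := h₂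
  have hiB₁ : i ∈ B₁ := (Finset.mem_sdiff.mp hi).1
  have hiB₂ : i ∉ B₂ := (Finset.mem_sdiff.mp hi).2
  have hcc₁ := Finset.card_toLeft_add_card_toRight (u := B₁)
  have hcc₂ := Finset.card_toLeft_add_card_toRight (u := B₂)
  cases i with
  | inr t =>
    have htB₁ : t ∈ B₁.toRight := Finset.mem_toRight.mpr hiB₁
    have htB₂ : t ∉ B₂.toRight := fun hc => hiB₂ (Finset.mem_toRight.mp hc)
    by_cases hne : (B₂.toRight \ B₁.toRight).Nonempty
    · obtain ⟨s, hs⟩ := hne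
      rw [Finset.mem_sdiff] at hs
      have hsB₂ : inr s ∈ B₂ := Finset.mem_toRight.mp hs.1
      have hsB₁ : inr s ∉ B₁ := fun hc => hs.2 (Finset.mem_toRight.mpr hc)
      refine ⟨inr s, Finset.mem_sdiff.mpr ⟨hsB₂, hsB₁⟩, ?_, ?_⟩
      · rw [Finset.toLeft_insert_inr, toLeft_erase_inr]; exact hA₁
      · rw [card_swap hiB₁ hsB₁]; exact hc₁
    · rw [Finset.not_nonempty_iff_eq_empty, Finset.sdiff_eq_empty_iff_subset] at hne
      have hsub2 : B₂.toRight ⊆ B₁.toRight.erase t :=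
        fun x hx => Finset.mem_erase.mpr ⟨fun hc => htB₂ (hc ▸ hx), hne hx⟩
      have hlt : B₁.toLeft.card < B₂.toLeft.card := by
        have h3 := Finset.card_le_card hsub2
        rw [Finset.card_erase_of_mem htB₁] at h3
        have : 1 ≤ B₁.toRight.card := Finset.card_pos.mpr ⟨t, htB₁⟩
        omega
      obtain ⟨b, hb, hmx⟩ := aug hdom hf _ le_rfl hA₁ hA₂ hlt
      rw [Finset.mem_sdiff] at hb
      have hbB₂ : inl b ∈ B₂ := Finset.mem_toLeft.mp hb.1
      have hbB₁ : inl b ∉ B₁ := fun hc => hb.2 (Finset.mem_toLeft.mpr hc)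
      refine ⟨inl b, Finset.mem_sdiff.mpr ⟨hbB₂, hbB₁⟩, ?_, ?_⟩
      · rw [Finset.toLeft_insert_inl, toLeft_erase_inr]; exact hmx
      · rw [card_swap hiB₁ hbB₁]; exact hc₁
  | inl a =>
    have haA : a ∈ B₁.toLeft \ B₂.toLeft := by
      rw [Finset.mem_sdiff, Finset.mem_toLeft, Finset.mem_toLeft]
      exact ⟨hiB₁, hiB₂⟩
    rcases sexc hdom hf hA₁ hA₂ haA with ⟨hEr, _⟩ | ⟨b, hb, hIns, _⟩
    · by_cases hne : (B₂.toRight \ B₁.toRight).Nonempty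
      · obtain ⟨s, hs⟩ := hne
        rw [Finset.mem_sdiff] at hs
        have hsB₂ : inr s ∈ B₂ := Finset.mem_toRight.mp hs.1
        have hsB₁ : inr s ∉ B₁ := fun hc => hs.2 (Finset.mem_toRight.mpr hc)
        refine ⟨inr s, Finset.mem_sdiff.mpr ⟨hsB₂, hsB₁⟩, ?_, ?_⟩
        · rw [Finset.toLeft_insert_inr, toLeft_erase_inl]; exact hEr
        · rw [card_swap hiB₁ hsB₁]; exact hc₁
      · rw [Finset.not_nonempty_iff_eq_empty, Finset.sdiff_eq_empty_iff_subset] at hne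
        have haB₁ : a ∈ B₁.toLeft := Finset.mem_toLeft.mpr hiB₁
        have hlt : (B₁.toLeft.erase a).card < B₂.toLeft.card := by
          have h3 := Finset.card_le_card hne
          rw [Finset.card_erase_of_mem haB₁]
          have : 1 ≤ B₁.toLeft.card := Finset.card_pos.mpr ⟨a, haB₁⟩
          omega
        obtain ⟨b, hb, hmx⟩ := aug hdom hf _ le_rfl hEr hA₂ hlt
        rw [Finset.mem_sdiff] at hb
        have hbB₂ : inl b ∈ B₂ := Finset.mem_toLeft.mp hb.1
        have hbB₁ : inl b ∉ B₁ := by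
          intro hc
          have hba : b ≠ a := fun hc2 => (Finset.mem_sdiff.mp haA).2 (hc2 ▸ hb.1)
          exact hb.2 (Finset.mem_erase.mpr ⟨hba, Finset.mem_toLeft.mpr hc⟩)
        refine ⟨inl b, Finset.mem_sdiff.mpr ⟨hbB₂, hbB₁⟩, ?_, ?_⟩
        · rw [Finset.toLeft_insert_inl, toLeft_erase_inl]; exact hmx
        · rw [card_swap hiB₁ hbB₁]; exact hc₁
    · rw [Finset.mem_sdiff] at hb
      have hbB₂ : inl b ∈ B₂ := Finset.mem_toLeft.mp hb.1
      have hbB₁ : inl b ∉ B₁ := fun hc => hb.2 (Finset.mem_toLeft.mpr hc)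
      refine ⟨inl b, Finset.mem_sdiff.mpr ⟨hbB₂, hbB₁⟩, ?_, ?_⟩
      · rw [Finset.toLeft_insert_inl, toLeft_erase_inl]; exact hIns
      · rw [card_swap hiB₁ hbB₁]; exact hc₁

end BaseFamily


section PartD

variable {γ : Type*} [DecidableEq γ] [Fintype γ]
variable {Bs : Finset γ → Prop} {n : ℕ}

/-- independent sets of a base family -/
def Ind (Bs : Finset γ → Prop) (Z : Finset γ) : Prop := ∃ B, Bs B ∧ Z ⊆ B

lemma ind_mono {Z Z' : Finset γ} (h : Z' ⊆ Z) (hZ : Ind Bs Z) : Ind Bs Z' := by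
  obtain ⟨B, hB, hZB⟩ := hZ
  exact ⟨B, hB, h.trans hZB⟩

variable (hcard : ∀ ⦃B⦄, Bs B → B.card = n)
variable (hex : ∀ ⦃B₁ B₂ : Finset γ⦄ ⦃i⦄, Bs B₁ → Bs B₂ → i ∈ B₁ \ B₂ →
  ∃ j ∈ B₂ \ B₁, Bs (insert j (B₁.erase i)))

include hcard hex in
/-- independence augmentation -/
lemma ind_aug {Z₁ Z₂ : Finset γ} (h₁ : Ind Bs Z₁) (h₂ : Ind Bs Z₂)
    (hlt : Z₁.card < Z₂.card) : ∃ e ∈ Z₂ \ Z₁, Ind Bs (insert e Z₁) := by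
  obtain ⟨B₂, hB₂, hZ₂⟩ := h₂
  set S : Finset (Finset γ) := Finset.univ.filter (fun B => Bs B ∧ Z₁ ⊆ B) with hS
  have hSne : S.Nonempty := by
    obtain ⟨B₁, hB₁, hZ₁⟩ := h₁
    exact ⟨B₁, by simp [hS, hB₁, hZ₁]⟩
  obtain ⟨B, hBS, hmax⟩ := S.exists_max_image (fun B => (B ∩ B₂).card) hSne
  rw [hS, Finset.mem_filter] at hBS
  obtain ⟨-, hBs, hZ₁B⟩ := hBS
  by_cases hca : ∃ e ∈ Z₂, e ∉ Z₁ ∧ e ∈ B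
  · obtain ⟨e, he₂, he₁, heB⟩ := hca
    exact ⟨e, Finset.mem_sdiff.mpr ⟨he₂, he₁⟩, B, hBs, Finset.insert_subset heB hZ₁B⟩
  · push_neg at hca
    have hBZ₂ : ∀ e ∈ B, e ∈ Z₂ → e ∈ Z₁ := fun e heB heZ₂ => by
      by_contra hc; exact (hca e heZ₂ hc) heB
    have hBB₂ : B \ B₂ ⊆ Z₁ := by
      intro x hx
      by_contra hxZ₁
      have hxB : x ∈ B := (Finset.mem_sdiff.mp hx).1
      have hxB₂ : x ∉ B₂ := (Finset.mem_sdiff.mp hx).2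
      obtain ⟨j, hj, hBs'⟩ := hex hBs hB₂ hx
      have hjB₂ : j ∈ B₂ := (Finset.mem_sdiff.mp hj).1
      have hjB : j ∉ B := (Finset.mem_sdiff.mp hj).2
      have hsub : Z₁ ⊆ insert j (B.erase x) := by
        intro z hz
        exact Finset.mem_insert.mpr (Or.inr (Finset.mem_erase.mpr
          ⟨fun hc => hxZ₁ (hc ▸ hz), hZ₁B hz⟩))
      have hmem : insert j (B.erase x) ∈ S := by
        rw [hS, Finset.mem_filter]
        exact ⟨Finset.mem_univ _, hBs', hsub⟩
      have hint : (insert j (B.erase x)) ∩ B₂ = insert j (B ∩ B₂) := by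
        ext y
        simp only [Finset.mem_inter, Finset.mem_insert, Finset.mem_erase]
        constructor
        · rintro ⟨hy | ⟨hy1, hy2⟩, hy3⟩
          · exact Or.inl hy
          · exact Or.inr ⟨hy2, hy3⟩
        · rintro (rfl | ⟨hy1, hy2⟩)
          · exact ⟨Or.inl rfl, hjB₂⟩
          · exact ⟨Or.inr ⟨fun hc => hxB₂ (hc ▸ hy2), hy1⟩, hy2⟩
      have hcardlt := hmax _ hmem
      rw [hint, Finset.card_insert_of_notMem
        (fun hc => hjB (Finset.mem_inter.mp hc).1)] at hcardlt
      omega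
    have h1 : (B \ B₂).card + (B ∩ B₂).card = B.card := Finset.card_sdiff_add_card_inter B B₂
    have h2 : ((B ∩ B₂) \ Z₂).card + ((B ∩ B₂) ∩ Z₂).card = (B ∩ B₂).card :=
      Finset.card_sdiff_add_card_inter _ _
    have h3 : ((B ∩ B₂) ∩ Z₂).card ≤ (Z₁ ∩ Z₂).card := by
      apply Finset.card_le_card
      intro y hy
      simp only [Finset.mem_inter] at hy ⊢
      exact ⟨hBZ₂ y hy.1.1 hy.2, hy.2⟩
    have h4 : ((B ∩ B₂) \ Z₂).card ≤ B₂.card - Z₂.card := by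
      rw [← Finset.card_sdiff_of_subset hZ₂]
      apply Finset.card_le_card
      intro y hy
      simp only [Finset.mem_sdiff, Finset.mem_inter] at hy ⊢
      exact ⟨hy.1.2, hy.2⟩
    have h5 : (B \ B₂).card ≤ (Z₁ \ Z₂).card := by
      apply Finset.card_le_card
      intro y hy
      simp only [Finset.mem_sdiff] at hy ⊢
      exact ⟨hBB₂ (Finset.mem_sdiff.mpr hy), fun hc => hy.2 (hZ₂ hc)⟩
    have h6 : (Z₁ \ Z₂).card + (Z₁ ∩ Z₂).card = Z₁.card := Finset.card_sdiff_add_card_inter _ _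
    have h7 : B.card = n := hcard hBs
    have h8 : B₂.card = n := hcard hB₂
    have h9 : Z₂.card ≤ n := h8 ▸ Finset.card_le_card hZ₂
    omega

/-- rank function of the base family -/
noncomputable def rk (Bs : Finset γ → Prop) (S : Finset γ) : ℕ :=
  (S.powerset.filter (Ind Bs)).sup Finset.card

variable (hne : ∃ B, Bs B)

lemma ind_empty (hne : ∃ B, Bs B) : Ind Bs ∅ := by
  obtain ⟨B, hB⟩ := hne
  exact ⟨B, hB, Finset.empty_subset _⟩

lemma card_le_rk {Z S : Finset γ} (hZS : Z ⊆ S) (hZ : Ind Bs Z) : Z.card ≤ rk Bs S :=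
  Finset.le_sup (Finset.mem_filter.mpr ⟨Finset.mem_powerset.mpr hZS, hZ⟩)

lemma exists_rk_set (hne : ∃ B, Bs B) (S : Finset γ) :
    ∃ J ⊆ S, Ind Bs J ∧ J.card = rk Bs S := by
  have hfne : (S.powerset.filter (Ind Bs)).Nonempty :=
    ⟨∅, Finset.mem_filter.mpr ⟨Finset.mem_powerset.mpr (Finset.empty_subset _), ind_empty hne⟩⟩
  obtain ⟨J, hJ, hJe⟩ := Finset.exists_mem_eq_sup _ hfne Finset.card
  rw [Finset.mem_filter, Finset.mem_powerset] at hJ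
  exact ⟨J, hJ.1, hJ.2, hJe.symm⟩

lemma rk_mono {S T : Finset γ} (h : S ⊆ T) : rk Bs S ≤ rk Bs T := by
  apply Finset.sup_le
  intro Z hZ
  rw [Finset.mem_filter, Finset.mem_powerset] at hZ
  exact card_le_rk (hZ.1.trans h) hZ.2

lemma rk_le_card (S : Finset γ) : rk Bs S ≤ S.card := by
  apply Finset.sup_le
  intro Z hZ
  rw [Finset.mem_filter, Finset.mem_powerset] at hZ
  exact Finset.card_le_card hZ.1

lemma rk_eq_card_of_ind {S : Finset γ} (hS : Ind Bs S) : rk Bs S = S.card :=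
  le_antisymm (rk_le_card S) (card_le_rk Finset.Subset.rfl hS)

include hcard hex hne in
lemma ind_extend : ∀ (m : ℕ) {S J : Finset γ}, rk Bs S - J.card ≤ m → J ⊆ S → Ind Bs J →
    ∃ J', J ⊆ J' ∧ J' ⊆ S ∧ Ind Bs J' ∧ J'.card = rk Bs S := by
  intro m
  induction m with
  | zero =>
    intro S J h hJS hJ
    have := card_le_rk hJS hJ
    exact ⟨J, Finset.Subset.rfl, hJS, hJ, by omega⟩
  | succ m ih =>
    intro S J h hJS hJ
    by_cases heq : rk Bs S ≤ J.card
    · have := card_le_rk hJS hJ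
      exact ⟨J, Finset.Subset.rfl, hJS, hJ, by omega⟩
    · obtain ⟨W, hWS, hWind, hWcard⟩ := exists_rk_set hne S
      obtain ⟨e, he, hind⟩ := ind_aug hcard hex hJ hWind (by omega)
      have heS : e ∈ S := hWS (Finset.mem_sdiff.mp he).1
      have heJ : e ∉ J := (Finset.mem_sdiff.mp he).2
      obtain ⟨J', h1, h2, h3, h4⟩ := ih (J := insert e J) (S := S)
        (by rw [Finset.card_insert_of_notMem heJ]; omega)
        (Finset.insert_subset heS hJS) hind
      exact ⟨J', (Finset.subset_insert _ _).trans h1, h2, h3, h4⟩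

include hcard hex hne in
lemma rk_submod (S T : Finset γ) :
    rk Bs (S ∪ T) + rk Bs (S ∩ T) ≤ rk Bs S + rk Bs T := by
  obtain ⟨J₀, hJ₀sub, hJ₀ind, hJ₀card⟩ := exists_rk_set hne (S ∩ T)
  obtain ⟨J₁, hJ₀J₁, hJ₁sub, hJ₁ind, hJ₁card⟩ := ind_extend hcard hex hne (rk Bs (S ∪ T))
    (Nat.sub_le _ _) (hJ₀sub.trans (Finset.inter_subset_union)) hJ₀ind
  have h1 : (J₁ ∩ S).card ≤ rk Bs S := card_le_rk Finset.inter_subset_right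
    (ind_mono Finset.inter_subset_left hJ₁ind)
  have h2 : (J₁ ∩ T).card ≤ rk Bs T := card_le_rk Finset.inter_subset_right
    (ind_mono Finset.inter_subset_left hJ₁ind)
  have h3 : (J₁ ∩ S) ∩ (J₁ ∩ T) = J₁ ∩ (S ∩ T) := by
    ext y; simp only [Finset.mem_inter]; tauto
  have h4 : (J₁ ∩ S) ∪ (J₁ ∩ T) = J₁ := by
    ext y
    simp only [Finset.mem_inter, Finset.mem_union]
    constructor
    · tauto
    · intro hy
      rcases Finset.mem_union.mp (hJ₁sub hy) with h | h
      · exact Or.inl ⟨hy, h⟩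
      · exact Or.inr ⟨hy, h⟩
  have h5 := Finset.card_inter_add_card_union (J₁ ∩ S) (J₁ ∩ T)
  rw [h3, h4] at h5
  have h6 : J₀.card ≤ (J₁ ∩ (S ∩ T)).card := Finset.card_le_card
    (Finset.subset_inter hJ₀J₁ hJ₀sub)
  have h7 : (J₁ ∩ (S ∩ T)).card ≤ rk Bs (S ∩ T) := card_le_rk Finset.inter_subset_right
    (ind_mono Finset.inter_subset_left hJ₁ind)
  omega

include hne in
lemma rk_empty : rk Bs ∅ = 0 := by
  have := rk_le_card (Bs := Bs) (∅ : Finset γ)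
  simpa using this

include hcard hne in
lemma rk_le_n (S : Finset γ) : rk Bs S ≤ n := by
  obtain ⟨J, hJsub, hJind, hJcard⟩ := exists_rk_set hne S
  obtain ⟨B, hB, hJB⟩ := hJind
  rw [← hJcard]
  exact (Finset.card_le_card hJB).trans (le_of_eq (hcard hB))

include hcard in
lemma rk_of_base {B : Finset γ} (hB : Bs B) : rk Bs B = n := by
  rw [rk_eq_card_of_ind ⟨B, hB, Finset.Subset.rfl⟩, hcard hB]

include hcard hne in
lemma base_of_rk_card {S : Finset γ} (h1 : rk Bs S = n) (h2 : S.card = n) : Bs S := by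
  obtain ⟨J, hJsub, hJind, hJcard⟩ := exists_rk_set hne S
  obtain ⟨B, hB, hJB⟩ := hJind
  have hJn : J.card = n := by rw [hJcard, h1]
  have hJeqB : J = B := Finset.eq_of_subset_of_card_le hJB (by rw [hJn, hcard hB])
  have hBS : B ⊆ S := hJeqB ▸ hJsub
  have : B = S := Finset.eq_of_subset_of_card_le hBS (by rw [h2, hcard hB])
  exact this ▸ hB

end PartD

section PartE

variable {γ : Type*} [DecidableEq γ]

/-- axioms for an (integer) matroid rank function -/
structure IsRk (ρ : Finset γ → ℕ) : Prop where
  empty : ρ ∅ = 0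
  mono : ∀ ⦃S T : Finset γ⦄, S ⊆ T → ρ S ≤ ρ T
  submod : ∀ S T : Finset γ, ρ (S ∪ T) + ρ (S ∩ T) ≤ ρ S + ρ T
  unit : ∀ x : γ, ρ {x} ≤ 1

lemma IsRk.insert_le {ρ : Finset γ → ℕ} (h : IsRk ρ) (S : Finset γ) (x : γ) :
    ρ (insert x S) ≤ ρ S + 1 := by
  have h1 := h.submod S {x}
  have h2 := h.unit x
  have h3 : S ∪ {x} = insert x S := by ext y; simp [or_comm]
  rw [h3] at h1
  omega

lemma IsRk.union_card_le {ρ : Finset γ → ℕ} (h : IsRk ρ) (S T : Finset γ) :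
    ρ (S ∪ T) ≤ ρ S + T.card := by
  induction T using Finset.induction_on with
  | empty => simpa using h.mono (Finset.union_subset Finset.Subset.rfl (Finset.empty_subset S))
  | @insert a T ha ih =>
    rw [Finset.union_insert, Finset.card_insert_of_notMem ha]
    have := h.insert_le (S ∪ T) a
    omega

/-- contraction of a rank function by a fixed set -/
lemma IsRk.contract {ρ : Finset γ → ℕ} (h : IsRk ρ) (D : Finset γ) :
    IsRk (fun S => ρ (S ∪ D) - ρ D) := by
  constructor
  · simp
  · intro S T hST
    exact Nat.sub_le_sub_right (h.mono (Finset.union_subset_union hST Finset.Subset.rfl)) _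
  · intro S T
    have h1 := h.submod (S ∪ D) (T ∪ D)
    have h2 : (S ∪ D) ∪ (T ∪ D) = (S ∪ T) ∪ D := by ext y; simp; tauto
    have h3 : (S ∪ D) ∩ (T ∪ D) = (S ∩ T) ∪ D := by ext y; simp; tauto
    rw [h2, h3] at h1
    have m1 : ρ D ≤ ρ ((S ∪ T) ∪ D) := h.mono Finset.subset_union_right
    have m2 : ρ D ≤ ρ ((S ∩ T) ∪ D) := h.mono Finset.subset_union_right
    have m3 : ρ D ≤ ρ (S ∪ D) := h.mono Finset.subset_union_right
    have m4 : ρ D ≤ ρ (T ∪ D) := h.mono Finset.subset_union_right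
    omega
  · intro x
    have h1 := h.union_card_le D {x}
    have h2 : D ∪ {x} = {x} ∪ D := Finset.union_comm _ _
    rw [h2] at h1
    simp only [Finset.card_singleton] at h1
    omega

/-- the "dual" rank function on a ground set `E` -/
lemma IsRk.dual {ρ : Finset γ → ℕ} (h : IsRk ρ) (E : Finset γ) :
    IsRk (fun S => S.card + ρ (E \ S) - ρ E) := by
  have key : ∀ S : Finset γ, ρ E ≤ ρ (E \ S) + S.card := by
    intro S
    have h1 : E ⊆ (E \ S) ∪ S := by intro y hy; by_cases hyS : y ∈ S <;> simp [hy, hyS]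
    calc ρ E ≤ ρ ((E \ S) ∪ S) := h.mono h1
    _ ≤ ρ (E \ S) + S.card := h.union_card_le _ _
  constructor
  · simp
  · intro S T hST
    -- card S + ρ (E\S) ≤ card T + ρ (E\T) + ... need: ρ(E\S) ≤ ρ(E\T) + (T\S).card
    have h1 : E \ S ⊆ (E \ T) ∪ (T \ S) := by
      intro y hy
      simp only [Finset.mem_sdiff, Finset.mem_union] at hy ⊢
      by_cases hyT : y ∈ T
      · exact Or.inr ⟨hyT, hy.2⟩
      · exact Or.inl ⟨hy.1, hyT⟩
    have h2 : ρ (E \ S) ≤ ρ (E \ T) + (T \ S).card :=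
      (h.mono h1).trans (h.union_card_le _ _)
    have h3 : S.card + (T \ S).card = T.card := by
      rw [add_comm]; exact Finset.card_sdiff_add_card_eq_card hST
    omega
  · intro S T
    have h1 : E \ (S ∪ T) = (E \ S) ∩ (E \ T) := by ext y; simp; tauto
    have h2 : E \ (S ∩ T) = (E \ S) ∪ (E \ T) := by ext y; simp; tauto
    have h3 := h.submod (E \ S) (E \ T)
    have h4 := Finset.card_inter_add_card_union S T
    have k1 := key (S ∪ T)
    have k2 := key (S ∩ T)
    have k3 := key S
    have k4 := key T
    rw [h1] at k1
    rw [h2] at k2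
    rw [h1, h2]
    omega
  · intro x
    have h1 : ρ (E \ {x}) ≤ ρ E := h.mono (Finset.sdiff_subset)
    have k1 := key {x}
    simp only [Finset.card_singleton] at *
    omega

lemma IsRk.union_singleton_le {ρ : Finset γ → ℕ} (h : IsRk ρ) (S : Finset γ) (x : γ) :
    ρ (S ∪ {x}) ≤ ρ S + ρ {x} := by
  have h1 := h.submod S {x}
  omega

/-- Matroid intersection theorem, rank function form. -/
theorem int_thm : ∀ (m : ℕ) (E : Finset γ) (ρ₁ ρ₂ : Finset γ → ℕ), IsRk ρ₁ → IsRk ρ₂ →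
    ∀ (k : ℕ), E.card ≤ m → (∀ Z ⊆ E, k ≤ ρ₁ Z + ρ₂ (E \ Z)) →
    ∃ T ⊆ E, T.card = k ∧ ρ₁ T = k ∧ ρ₂ T = k := by
  intro m
  induction m with
  | zero =>
    intro E ρ₁ ρ₂ h₁ h₂ k hEm hmin
    have hE : E = ∅ := Finset.card_eq_zero.mp (Nat.le_zero.mp hEm)
    have := hmin ∅ (Finset.empty_subset _)
    rw [hE] at this
    simp only [Finset.sdiff_empty] at this
    rw [h₁.empty, h₂.empty] at this
    refine ⟨∅, Finset.empty_subset _, ?_, ?_, ?_⟩ <;> simp [h₁.empty, h₂.empty] <;> omega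
  | succ m ih =>
    intro E ρ₁ ρ₂ h₁ h₂ k hEm hmin
    by_cases hk0 : k = 0
    · subst hk0
      exact ⟨∅, Finset.empty_subset _, by simp, by simp [h₁.empty], by simp [h₂.empty]⟩
    rcases E.eq_empty_or_nonempty with hE | ⟨e, he⟩
    · have h0 := hmin ∅ (Finset.empty_subset _)
      rw [hE] at h0
      simp only [Finset.sdiff_empty] at h0
      rw [h₁.empty, h₂.empty] at h0
      omega
    have hcard' : (E.erase e).card ≤ m := by
      have h1 : 1 ≤ E.card := Finset.card_pos.mpr ⟨e, he⟩
      rw [Finset.card_erase_of_mem he]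
      omega
    by_cases hbad : ∃ x ∈ E, ρ₁ {x} = 0 ∨ ρ₂ {x} = 0
    · obtain ⟨x, hxE, hx⟩ := hbad
      have hcardx : (E.erase x).card ≤ m := by
        have h1 : 1 ≤ E.card := Finset.card_pos.mpr ⟨x, hxE⟩
        rw [Finset.card_erase_of_mem hxE]
        omega
      have hmin' : ∀ Z ⊆ E.erase x, k ≤ ρ₁ Z + ρ₂ ((E.erase x) \ Z) := by
        intro Z hZ
        have hxZ : x ∉ Z := fun hc => (Finset.mem_erase.mp (hZ hc)).1 rfl
        rcases hx with hx1 | hx2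
        · have hsub : Z ∪ {x} ⊆ E := by
            intro y hy
            rcases Finset.mem_union.mp hy with hy | hy
            · exact (Finset.erase_subset _ _) (hZ hy)
            · rw [Finset.mem_singleton.mp hy]; exact hxE
          have h := hmin (Z ∪ {x}) hsub
          have hE1 : E \ (Z ∪ {x}) = (E.erase x) \ Z := by
            ext y
            simp only [Finset.mem_sdiff, Finset.mem_union, Finset.mem_erase,
              Finset.mem_singleton]
            tauto
          rw [hE1] at h
          have h2 := h₁.union_singleton_le Z x
          omega
        · have h := hmin Z (hZ.trans (Finset.erase_subset _ _))
          have hE2 : E \ Z = ((E.erase x) \ Z) ∪ {x} := by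
            ext y
            simp only [Finset.mem_sdiff, Finset.mem_union, Finset.mem_erase,
              Finset.mem_singleton]
            constructor
            · rintro ⟨hy1, hy2⟩
              by_cases hyx : y = x
              · exact Or.inr hyx
              · exact Or.inl ⟨⟨hyx, hy1⟩, hy2⟩
            · rintro (⟨⟨hy1, hy2⟩, hy3⟩ | rfl)
              · exact ⟨hy2, hy3⟩
              · exact ⟨hxE, hxZ⟩
          rw [hE2] at h
          have h2 := h₂.union_singleton_le ((E.erase x) \ Z) x
          omega
      obtain ⟨T, hT1, hT2, hT3, hT4⟩ := ih (E.erase x) ρ₁ ρ₂ h₁ h₂ k hcardx hmin'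
      exact ⟨T, hT1.trans (Finset.erase_subset _ _), hT2, hT3, hT4⟩
    · push_neg at hbad
      have hx1 : ρ₁ {e} = 1 := by
        have := (hbad e he).1
        have := h₁.unit e
        omega
      have hx2 : ρ₂ {e} = 1 := by
        have := (hbad e he).2
        have := h₂.unit e
        omega
      by_cases hdel : ∀ Z ⊆ E.erase e, k ≤ ρ₁ Z + ρ₂ ((E.erase e) \ Z)
      · obtain ⟨T, hT1, hT2, hT3, hT4⟩ := ih (E.erase e) ρ₁ ρ₂ h₁ h₂ k hcard' hdel
        exact ⟨T, hT1.trans (Finset.erase_subset _ _), hT2, hT3, hT4⟩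
      · push_neg at hdel
        obtain ⟨Z₁, hZ₁sub, hZ₁⟩ := hdel
        have h₁' : IsRk (fun S => ρ₁ (S ∪ {e}) - ρ₁ {e}) := h₁.contract {e}
        have h₂' : IsRk (fun S => ρ₂ (S ∪ {e}) - ρ₂ {e}) := h₂.contract {e}
        have heZ₁ : e ∉ Z₁ := fun hc => (Finset.mem_erase.mp (hZ₁sub hc)).1 rfl
        have hminc : ∀ Z ⊆ E.erase e,
            k - 1 ≤ ρ₁ (Z ∪ {e}) - ρ₁ {e} + (ρ₂ ((E.erase e \ Z) ∪ {e}) - ρ₂ {e}) := by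
          by_contra hc
          push_neg at hc
          obtain ⟨Z₂, hZ₂sub, hZ₂⟩ := hc
          have heZ₂ : e ∉ Z₂ := fun hcc => (Finset.mem_erase.mp (hZ₂sub hcc)).1 rfl
          have hA := hmin (Z₁ ∩ Z₂)
            ((Finset.inter_subset_left).trans (hZ₁sub.trans (Finset.erase_subset _ _)))
          have hBsub : (Z₁ ∪ Z₂) ∪ {e} ⊆ E := by
            intro y hy
            rcases Finset.mem_union.mp hy with hy | hy
            · rcases Finset.mem_union.mp hy with hy | hy
              · exact (Finset.erase_subset _ _) (hZ₁sub hy)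
              · exact (Finset.erase_subset _ _) (hZ₂sub hy)
            · rw [Finset.mem_singleton.mp hy]; exact he
          have hB := hmin ((Z₁ ∪ Z₂) ∪ {e}) hBsub
          have s1 := h₁.submod Z₁ (Z₂ ∪ {e})
          have i1 : Z₁ ∪ (Z₂ ∪ {e}) = (Z₁ ∪ Z₂) ∪ {e} := by
            rw [Finset.union_assoc]
          have i2 : Z₁ ∩ (Z₂ ∪ {e}) = Z₁ ∩ Z₂ := by
            ext y
            simp only [Finset.mem_inter, Finset.mem_union, Finset.mem_singleton]
            constructor
            · rintro ⟨hy1, hy2 | rfl⟩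
              · exact ⟨hy1, hy2⟩
              · exact absurd hy1 heZ₁
            · rintro ⟨hy1, hy2⟩
              exact ⟨hy1, Or.inl hy2⟩
          rw [i1, i2] at s1
          have s2 := h₂.submod (E.erase e \ Z₁) ((E.erase e \ Z₂) ∪ {e})
          have i3 : (E.erase e \ Z₁) ∪ ((E.erase e \ Z₂) ∪ {e}) = E \ (Z₁ ∩ Z₂) := by
            ext y
            by_cases hye : y = e
            · subst hye
              simp [he, heZ₁]
            · simp only [Finset.mem_union, Finset.mem_sdiff, Finset.mem_erase,
                Finset.mem_singleton, Finset.mem_inter]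
              tauto
          have i4 : (E.erase e \ Z₁) ∩ ((E.erase e \ Z₂) ∪ {e}) = E \ ((Z₁ ∪ Z₂) ∪ {e}) := by
            ext y
            by_cases hye : y = e
            · subst hye
              simp
            · simp only [Finset.mem_inter, Finset.mem_union, Finset.mem_sdiff,
                Finset.mem_erase, Finset.mem_singleton]
              tauto
          rw [i3, i4] at s2
          have m1 : 1 ≤ ρ₁ (Z₂ ∪ {e}) := by
            have := h₁.mono (Finset.subset_union_right (s₁ := Z₂) (s₂ := ({e} : Finset γ)))
            omega
          have m2 : 1 ≤ ρ₂ ((E.erase e \ Z₂) ∪ {e}) := by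
            have := h₂.mono (Finset.subset_union_right (s₁ := E.erase e \ Z₂) (s₂ := ({e} : Finset γ)))
            omega
          rw [hx1] at hZ₂
          rw [hx2] at hZ₂
          omega
        obtain ⟨T', hT'sub, hT'card, hT'1, hT'2⟩ := ih (E.erase e)
          (fun S => ρ₁ (S ∪ {e}) - ρ₁ {e}) (fun S => ρ₂ (S ∪ {e}) - ρ₂ {e})
          h₁' h₂' (k - 1) hcard' (by
            intro Z hZ
            have := hminc Z hZ
            simpa using this)
        simp only [hx1, hx2] at hT'1 hT'2
        have heT' : e ∉ T' := fun hcc => (Finset.mem_erase.mp (hT'sub hcc)).1 rfl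
        have hm1 : 1 ≤ ρ₁ (T' ∪ {e}) := by
          have := h₁.mono (Finset.subset_union_right (s₁ := T') (s₂ := ({e} : Finset γ)))
          omega
        have hm2 : 1 ≤ ρ₂ (T' ∪ {e}) := by
          have := h₂.mono (Finset.subset_union_right (s₁ := T') (s₂ := ({e} : Finset γ)))
          omega
        refine ⟨T' ∪ {e}, ?_, ?_, ?_, ?_⟩
        · intro y hy
          rcases Finset.mem_union.mp hy with hy | hy
          · exact (Finset.erase_subset _ _) (hT'sub hy)
          · rw [Finset.mem_singleton.mp hy]; exact he
        · have hins : T' ∪ {e} = insert e T' := by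
            ext y; simp [or_comm]
          rw [hins, Finset.card_insert_of_notMem heT']
          omega
        · omega
        · omega

end PartE


set_option maxHeartbeats 1600000 in
theorem mnat_concave_multiple_exchange_argmax' {N : Type*} [Fintype N] [DecidableEq N]
    (f : Finset N → WithBot ℝ) (hdom : ∃ X, f X ≠ ⊥) (hf : MExc f)
    (X Y : Finset N) (hX : ∀ Z : Finset N, f Z ≤ f X) (hY : ∀ Z : Finset N, f Z ≤ f Y)
    (I : Finset N) (hI : I ⊆ X \ Y) :
    ∃ J ⊆ Y \ X, (∀ Z : Finset N, f Z ≤ f ((X \ I) ∪ J)) ∧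
      (∀ Z : Finset N, f Z ≤ f ((Y \ J) ∪ I)) := by
  classical
  have hXle : X.card ≤ Fintype.card N := by
    rw [← Finset.card_univ]; exact Finset.card_le_univ X
  have hYle : Y.card ≤ Fintype.card N := by
    rw [← Finset.card_univ]; exact Finset.card_le_univ Y
  obtain ⟨TX, hTXsub, hTXcard⟩ := Finset.exists_subset_card_eq
    (s := (Finset.univ : Finset N)) (n := Fintype.card N - X.card)
    (by rw [Finset.card_univ]; omega)
  obtain ⟨TY, hTYsub, hTYcard⟩ := Finset.exists_subset_card_eq
    (s := (Finset.univ : Finset N)) (n := Fintype.card N - Y.card)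
    (by rw [Finset.card_univ]; omega)
  set B₁ : Finset (N ⊕ N) := X.disjSum TX with hB₁def
  set B₂ : Finset (N ⊕ N) := Y.disjSum TY with hB₂def
  have hB₁ : Bse f B₁ := by
    constructor
    · rw [hB₁def, Finset.toLeft_disjSum]; exact hX
    · rw [hB₁def, Finset.card_disjSum, hTXcard]; omega
  have hB₂ : Bse f B₂ := by
    constructor
    · rw [hB₂def, Finset.toLeft_disjSum]; exact hY
    · rw [hB₂def, Finset.card_disjSum, hTYcard]; omega
  have hne : ∃ B, Bse f B := ⟨B₁, hB₁⟩
  have hcard : ∀ ⦃B : Finset (N ⊕ N)⦄, Bse f B → B.card = Fintype.card N := fun B h => h.2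
  have hex : ∀ ⦃Ba Bb : Finset (N ⊕ N)⦄ ⦃i⦄, Bse f Ba → Bse f Bb → i ∈ Ba \ Bb →
      ∃ j ∈ Bb \ Ba, Bse f (insert j (Ba.erase i)) :=
    fun Ba Bb i ha hb hi => bse_exch hdom hf ha hb hi
  have hIX : I ⊆ X := fun a ha => (Finset.mem_sdiff.mp (hI ha)).1
  have hIY : ∀ a ∈ I, a ∉ Y := fun a ha => (Finset.mem_sdiff.mp (hI ha)).2
  set Ibb : Finset (N ⊕ N) := I.disjSum ∅ with hIbbdef
  have hIbbB₁ : Ibb ⊆ B₁ := by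
    intro u hu
    cases u with
    | inl a =>
      rw [hIbbdef, Finset.inl_mem_disjSum] at hu
      rw [hB₁def, Finset.inl_mem_disjSum]
      exact hIX hu
    | inr b =>
      rw [hIbbdef, Finset.inr_mem_disjSum] at hu
      exact absurd hu (Finset.notMem_empty b)
  have hIbbB₂ : ∀ u ∈ Ibb, u ∉ B₂ := by
    intro u hu
    cases u with
    | inl a =>
      rw [hIbbdef, Finset.inl_mem_disjSum] at hu
      rw [hB₂def, Finset.inl_mem_disjSum]
      exact hIY a hu
    | inr b =>
      rw [hIbbdef, Finset.inr_mem_disjSum] at hu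
      exact absurd hu (Finset.notMem_empty b)
  have hIbbcard : Ibb.card = I.card := by
    rw [hIbbdef, Finset.card_disjSum, Finset.card_empty]
    omega
  set D : Finset (N ⊕ N) := B₁ \ Ibb with hDdef
  set C : Finset (N ⊕ N) := Ibb ∪ (B₂ ∩ B₁) with hCdef
  set E : Finset (N ⊕ N) := B₂ \ B₁ with hEdef
  set ρ : Finset (N ⊕ N) → ℕ := rk (Bse f) with hρdef
  have hρ : IsRk ρ := by
    refine ⟨rk_empty hne, fun S T h => rk_mono h, rk_submod hcard hex hne, fun x => ?_⟩
    have := rk_le_card (Bs := Bse f) ({x} : Finset (N ⊕ N))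
    simpa using this
  have hDB₁ : D ⊆ B₁ := by rw [hDdef]; exact Finset.sdiff_subset
  have hCB₁ : C ⊆ B₁ := by
    rw [hCdef]
    exact Finset.union_subset hIbbB₁ Finset.inter_subset_right
  have hdisj1 : Disjoint Ibb (B₂ ∩ B₁) := Finset.disjoint_left.mpr
    (fun u hu hc => hIbbB₂ u hu (Finset.mem_inter.mp hc).1)
  have hDcard : D.card + I.card = Fintype.card N := by
    have h1 := Finset.card_le_card hIbbB₁
    have h2 := hcard hB₁
    rw [hDdef, Finset.card_sdiff_of_subset hIbbB₁, hIbbcard]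
    rw [hIbbcard] at h1
    omega
  have hCcard : C.card = I.card + (B₂ ∩ B₁).card := by
    rw [hCdef, Finset.card_union_of_disjoint hdisj1, hIbbcard]
  have hEcard : E.card + (B₂ ∩ B₁).card = Fintype.card N := by
    rw [hEdef, Finset.card_sdiff_add_card_inter]
    exact hcard hB₂
  have hρD : ρ D = D.card := rk_eq_card_of_ind ⟨B₁, hB₁, hDB₁⟩
  have hρC : ρ C = C.card := rk_eq_card_of_ind ⟨B₁, hB₁, hCB₁⟩
  have hρB₁ : ρ B₁ = Fintype.card N := rk_of_base hcard hB₁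
  have hρB₂ : ρ B₂ = Fintype.card N := rk_of_base hcard hB₂
  have hρlen : ∀ S, ρ S ≤ Fintype.card N := fun S => rk_le_n hcard hne S
  have hECn : ρ (E ∪ C) = Fintype.card N := by
    refine le_antisymm (hρlen _) ?_
    have hsub : B₂ ⊆ E ∪ C := by
      intro u hu
      by_cases huB₁ : u ∈ B₁
      · exact Finset.mem_union.mpr (Or.inr (by
          rw [hCdef]
          exact Finset.mem_union.mpr (Or.inr (Finset.mem_inter.mpr ⟨hu, huB₁⟩))))
      · exact Finset.mem_union.mpr (Or.inl (by
          rw [hEdef]; exact Finset.mem_sdiff.mpr ⟨hu, huB₁⟩))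
    calc Fintype.card N = ρ B₂ := hρB₂.symm
    _ ≤ ρ (E ∪ C) := rk_mono hsub
  have hmincond : ∀ Z ⊆ E, I.card ≤ (fun S => ρ (S ∪ D) - ρ D) Z +
      (fun S => S.card + (fun S' => ρ (S' ∪ C) - ρ C) (E \ S) - (fun S' => ρ (S' ∪ C) - ρ C) E)
        (E \ Z) := by
    intro Z hZ
    have hZE : E \ (E \ Z) = Z := Finset.sdiff_sdiff_eq_self hZ
    simp only [hZE]
    have hZB₂ : Z ⊆ B₂ := fun u hu => (Finset.mem_sdiff.mp (by
      rw [← hEdef]; exact hZ hu)).1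
    have hZB₁ : ∀ u ∈ Z, u ∉ B₁ := fun u hu =>
      (Finset.mem_sdiff.mp (show u ∈ B₂ \ B₁ by rw [← hEdef]; exact hZ hu)).2
    have hu1 : (Z ∪ D) ∪ (Z ∪ C) = Z ∪ B₁ := by
      ext u
      simp only [Finset.mem_union, hDdef, hCdef, Finset.mem_sdiff, Finset.mem_inter]
      constructor
      · rintro ((hu | ⟨hu, _⟩) | (hu | (hu | ⟨_, hu⟩)))
        · exact Or.inl hu
        · exact Or.inr hu
        · exact Or.inl hu
        · exact Or.inr (hIbbB₁ hu)
        · exact Or.inr hu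
      · rintro (hu | hu)
        · exact Or.inl (Or.inl hu)
        · by_cases hui : u ∈ Ibb
          · exact Or.inr (Or.inr (Or.inl hui))
          · exact Or.inl (Or.inr ⟨hu, hui⟩)
    have hu2 : (Z ∪ D) ∩ (Z ∪ C) = Z ∪ (B₂ ∩ B₁) := by
      ext u
      simp only [Finset.mem_inter, Finset.mem_union, hDdef, hCdef, Finset.mem_sdiff]
      constructor
      · rintro ⟨hu | ⟨hu1', hu2'⟩, hv⟩
        · exact Or.inl hu
        · rcases hv with hv | (hv | hv)
          · exact Or.inl hv
          · exact absurd hv hu2'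
          · exact Or.inr hv
      · rintro (hu | hu)
        · exact ⟨Or.inl hu, Or.inl hu⟩
        · have huB₁ : u ∈ B₁ := hu.2
          by_cases hui : u ∈ Ibb
          · exact absurd hu.1 (hIbbB₂ u hui)
          · exact ⟨Or.inr ⟨huB₁, hui⟩, Or.inr (Or.inr hu)⟩
    have hsm : ρ ((Z ∪ D) ∪ (Z ∪ C)) + ρ ((Z ∪ D) ∩ (Z ∪ C)) ≤ ρ (Z ∪ D) + ρ (Z ∪ C) :=
      rk_submod hcard hex hne (Z ∪ D) (Z ∪ C)
    rw [hu1, hu2] at hsm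
    have hf2 : Fintype.card N ≤ ρ (Z ∪ B₁) := by
      rw [← hρB₁]
      exact rk_mono Finset.subset_union_right
    have hf3 : ρ (Z ∪ (B₂ ∩ B₁)) = Z.card + (B₂ ∩ B₁).card := by
      have h := rk_eq_card_of_ind (Bs := Bse f) (S := Z ∪ (B₂ ∩ B₁)) ⟨B₂, hB₂,
        Finset.union_subset hZB₂ Finset.inter_subset_left⟩
      rw [Finset.card_union_of_disjoint (Finset.disjoint_left.mpr
        (fun u hu hc => hZB₁ u hu (Finset.mem_inter.mp hc).2))] at h
      exact h
    have hZcard : Z.card + (E \ Z).card = E.card := by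
      rw [add_comm]; exact Finset.card_sdiff_add_card_eq_card hZ
    have hmono1 : ρ D ≤ ρ (Z ∪ D) := rk_mono Finset.subset_union_right
    have hmono2 : ρ C ≤ ρ (Z ∪ C) := rk_mono Finset.subset_union_right
    have hb1 : ρ (Z ∪ D) ≤ Fintype.card N := hρlen _
    have hb2 : ρ (Z ∪ C) ≤ Fintype.card N := hρlen _
    have hb3 : ρ C ≤ Fintype.card N := hρlen _
    omega
  obtain ⟨T, hTsub, hTcard, hT1, hT2⟩ := int_thm E.card E
    (fun S => ρ (S ∪ D) - ρ D)
    (fun S => S.card + (fun S' => ρ (S' ∪ C) - ρ C) (E \ S) - (fun S' => ρ (S' ∪ C) - ρ C) E)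
    (hρ.contract D) ((hρ.contract C).dual E) I.card le_rfl hmincond
  dsimp only at hT1 hT2
  have hTB₁ : ∀ u ∈ T, u ∉ B₁ := fun u hu =>
    (Finset.mem_sdiff.mp (show u ∈ B₂ \ B₁ by rw [← hEdef]; exact hTsub hu)).2
  have hρTD : ρ (T ∪ D) = Fintype.card N := by
    have hmono1 : ρ D ≤ ρ (T ∪ D) := rk_mono Finset.subset_union_right
    have := hρlen (T ∪ D)
    omega
  have hPcard : (T ∪ D).card = Fintype.card N := by
    rw [Finset.card_union_of_disjoint (Finset.disjoint_left.mpr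
      (fun u hu hc => hTB₁ u hu (hDB₁ hc)))]
    omega
  have hBP : Bse f (T ∪ D) := base_of_rk_card hcard hne hρTD hPcard
  have hρ2 : ρ ((E \ T) ∪ C) = Fintype.card N := by
    rcases Nat.eq_zero_or_pos I.card with h0 | hpos
    · have hT0 : T = ∅ := Finset.card_eq_zero.mp (by omega)
      rw [hT0, Finset.sdiff_empty]
      exact hECn
    · have hmonoE : ρ ((E \ T) ∪ C) ≤ ρ (E ∪ C) :=
        rk_mono (Finset.union_subset_union Finset.sdiff_subset Finset.Subset.rfl)
      have hmono2 : ρ C ≤ ρ ((E \ T) ∪ C) := rk_mono Finset.subset_union_right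
      have hmono3 : ρ C ≤ ρ (E ∪ C) := rk_mono Finset.subset_union_right
      omega
  have hQcard : ((E \ T) ∪ C).card = Fintype.card N := by
    rw [Finset.card_union_of_disjoint (Finset.disjoint_left.mpr (fun u hu hc => by
      have h1 : u ∉ B₁ := (Finset.mem_sdiff.mp (show u ∈ B₂ \ B₁ by
        rw [← hEdef]; exact (Finset.mem_sdiff.mp hu).1)).2
      exact h1 (hCB₁ hc)))]
    have h2 : (E \ T).card + T.card = E.card := Finset.card_sdiff_add_card_eq_card hTsub
    omega
  have hBQ : Bse f ((E \ T) ∪ C) := base_of_rk_card hcard hne hρ2 hQcard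
  set J : Finset N := T.toLeft with hJdef
  have hEleft : E.toLeft = Y \ X := by
    rw [hEdef, Finset.toLeft_sdiff, hB₁def, hB₂def, Finset.toLeft_disjSum,
      Finset.toLeft_disjSum]
  have hJsub : J ⊆ Y \ X := by
    rw [hJdef, ← hEleft]
    exact Finset.toLeft_subset_toLeft hTsub
  have hJX : ∀ a ∈ J, a ∉ X := fun a ha => (Finset.mem_sdiff.mp (hJsub ha)).2
  have hP : (T ∪ D).toLeft = (X \ I) ∪ J := by
    rw [Finset.toLeft_union, hDdef, Finset.toLeft_sdiff, hB₁def, Finset.toLeft_disjSum,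
      hIbbdef, Finset.toLeft_disjSum, ← hJdef]
    exact Finset.union_comm _ _
  have hQ : ((E \ T) ∪ C).toLeft = (Y \ J) ∪ I := by
    rw [Finset.toLeft_union, Finset.toLeft_sdiff, hEleft, ← hJdef, hCdef,
      Finset.toLeft_union, hIbbdef, Finset.toLeft_disjSum, Finset.toLeft_inter,
      hB₁def, hB₂def, Finset.toLeft_disjSum, Finset.toLeft_disjSum]
    ext a
    simp only [Finset.mem_union, Finset.mem_sdiff, Finset.mem_inter]
    constructor
    · rintro ((⟨⟨ha1, ha2⟩, ha3⟩) | (ha | ⟨ha1, ha2⟩))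
      · exact Or.inl ⟨ha1, ha3⟩
      · exact Or.inr ha
      · exact Or.inl ⟨ha1, fun hc => hJX a hc ha2⟩
    · rintro (⟨ha1, ha2⟩ | ha)
      · by_cases haX : a ∈ X
        · exact Or.inr (Or.inr ⟨ha1, haX⟩)
        · exact Or.inl ⟨⟨ha1, haX⟩, ha2⟩
      · exact Or.inr (Or.inl ha)
  refine ⟨J, hJsub, ?_, ?_⟩
  · have h := hBP.1
    rw [hP] at h
    exact h
  · have h := hBQ.1
    rw [hQ] at h
    exact h

end MExAux

theorem mnat_concave_multiple_exchange_argmax {N : Type*} [Fintype N] [DecidableEq N]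
    (f : Finset N → WithBot ℝ) (hdom : ∃ X, f X ≠ ⊥) (hf : MExc f)
    (X Y : Finset N) (hX : ∀ Z : Finset N, f Z ≤ f X) (hY : ∀ Z : Finset N, f Z ≤ f Y)
    (I : Finset N) (hI : I ⊆ X \ Y) :
    ∃ J ⊆ Y \ X, (∀ Z : Finset N, f Z ≤ f ((X \ I) ∪ J)) ∧
      (∀ Z : Finset N, f Z ≤ f ((Y \ J) ∪ I)) :=
  MExAux.mnat_concave_multiple_exchange_argmax' f hdom hf X Y hX hY I hI
end

section
/- Let X and Y be bases of a matroid M on a finite ground set, and let I ⊆ X \ Y. Then there exists J ⊆ Y \ X such that (X \ I) ∪ J and (Y \ J) ∪ I are both bases of M. -/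
open Finset

section Aux

variable {α : Type*}

/-- The rank of a set in a matroid, defined as the cardinality of a chosen basis. -/
private noncomputable def mrk (M : Matroid α) (A : Set α) : ℕ :=
  (M.exists_isBasis' A).choose.ncard

private lemma basis'_ncard_eq {M : Matroid α} {I A : Set α} (hI : M.IsBasis' I A) :
    I.ncard = mrk M A := by
  have h := hI.encard_eq_encard (M.exists_isBasis' A).choose_spec
  unfold mrk
  rw [Set.ncard_def, Set.ncard_def, h]

private lemma basis_ncard_eq {M : Matroid α} {I A : Set α} (hI : M.IsBasis I A) :
    I.ncard = mrk M A :=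
  basis'_ncard_eq hI.isBasis'

private lemma mrk_indep {M : Matroid α} {S : Set α} (hS : M.Indep S) :
    mrk M S = S.ncard :=
  (basis_ncard_eq hS.isBasis_self).symm

private lemma indep_ncard_le_mrk {M : Matroid α} [M.Finite] {S A : Set α} (hS : M.Indep S)
    (hSA : S ⊆ A) (hA : A ⊆ M.E) : S.ncard ≤ mrk M A := by
  obtain ⟨J, hJ, hSJ⟩ := hS.subset_isBasis_of_subset hSA hA
  rw [← basis_ncard_eq hJ]
  exact Set.ncard_le_ncard hSJ (M.set_finite J hJ.indep.subset_ground)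

private lemma mrk_mono {M : Matroid α} [M.Finite] {A B : Set α} (h : A ⊆ B) (hB : B ⊆ M.E) :
    mrk M A ≤ mrk M B := by
  obtain ⟨I, hI⟩ := M.exists_isBasis' A
  rw [← basis'_ncard_eq hI]
  exact indep_ncard_le_mrk hI.indep (hI.subset.trans h) hB

private lemma indep_of_mrk_ge {M : Matroid α} [M.Finite] {A : Set α} (hA : A ⊆ M.E)
    (h : A.ncard ≤ mrk M A) : M.Indep A := by
  obtain ⟨I, hI⟩ := M.exists_isBasis A hA
  have hfin := M.set_finite A hA
  have hIA : I = A :=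
    Set.eq_of_subset_of_ncard_le hI.subset (by rw [basis_ncard_eq hI]; exact h) hfin
  exact hIA ▸ hI.indep

private lemma mrk_submod {M : Matroid α} [M.Finite] {A B : Set α} (hA : A ⊆ M.E)
    (hB : B ⊆ M.E) : mrk M (A ∪ B) + mrk M (A ∩ B) ≤ mrk M A + mrk M B := by
  obtain ⟨I₀, hI₀⟩ := M.exists_isBasis (A ∩ B) (Set.inter_subset_left.trans hA)
  obtain ⟨K, hK, hIK⟩ := hI₀.indep.subset_isBasis_of_subset
    (hI₀.subset.trans (Set.inter_subset_left.trans Set.subset_union_left))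
    (Set.union_subset hA hB)
  have hKfin : K.Finite := M.set_finite K hK.indep.subset_ground
  have hI₀eq : I₀ = K ∩ (A ∩ B) :=
    hI₀.eq_of_subset_indep (hK.indep.inter_right _) (Set.subset_inter hIK hI₀.subset)
      Set.inter_subset_right
  have hKsub : K ⊆ A ∪ B := hK.subset
  have hKU : (K ∩ A) ∪ (K ∩ B) = K := by
    rw [← Set.inter_union_distrib_left, Set.inter_eq_left.mpr hKsub]
  have hKI : (K ∩ A) ∩ (K ∩ B) = K ∩ (A ∩ B) := by
    ext x; simp only [Set.mem_inter_iff]; tauto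
  have key : K.ncard + I₀.ncard = (K ∩ A).ncard + (K ∩ B).ncard := by
    rw [hI₀eq, ← hKI, ← Set.ncard_union_add_ncard_inter (K ∩ A) (K ∩ B)
      (hKfin.subset Set.inter_subset_left) (hKfin.subset Set.inter_subset_left), hKU]
  rw [← basis_ncard_eq hK, ← basis_ncard_eq hI₀]
  calc K.ncard + I₀.ncard = (K ∩ A).ncard + (K ∩ B).ncard := key
    _ ≤ mrk M A + mrk M B :=
      Nat.add_le_add
        (indep_ncard_le_mrk (hK.indep.inter_right _) Set.inter_subset_right hA)
        (indep_ncard_le_mrk (hK.indep.inter_right _) Set.inter_subset_right hB)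

private lemma indep_ncard_le_base {M : Matroid α} [M.Finite] {S B : Set α} (hS : M.Indep S)
    (hB : M.IsBase B) : S.ncard ≤ B.ncard := by
  obtain ⟨B', hB', hSB'⟩ := hS.exists_isBase_superset
  rw [← hB'.ncard_eq_ncard_of_isBase hB]
  exact Set.ncard_le_ncard hSB' (M.set_finite B' hB'.subset_ground)

private lemma base_of_indep_card {M : Matroid α} [M.Finite] {S B : Set α} (hS : M.Indep S)
    (hB : M.IsBase B) (h : B.ncard ≤ S.ncard) : M.IsBase S := by
  obtain ⟨B', hB', hSB'⟩ := hS.exists_isBase_superset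
  have hSB : S = B' :=
    Set.eq_of_subset_of_ncard_le hSB' (by rw [hB'.ncard_eq_ncard_of_isBase hB]; exact h)
      (M.set_finite B' hB'.subset_ground)
  exact hSB ▸ hB'

/-- The key partition lemma: if the rank condition holds, a set `G` disjoint from independent
sets `P` and `Q` can be partitioned into `S₁ ∪ S₂` with `S₁ ∪ P` and `S₂ ∪ Q` independent. -/
private lemma partition_lemma {M : Matroid α} [M.Finite] :
    ∀ n (G P Q : Set α), G.ncard = n → G ⊆ M.E → P ⊆ M.E → Q ⊆ M.E →
    Disjoint G (P ∪ Q) → M.Indep P → M.Indep Q →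
    (∀ S ⊆ G, S.ncard + P.ncard + Q.ncard ≤ mrk M (S ∪ P) + mrk M (S ∪ Q)) →
    ∃ S₁ S₂, S₁ ∪ S₂ = G ∧ Disjoint S₁ S₂ ∧ M.Indep (S₁ ∪ P) ∧ M.Indep (S₂ ∪ Q) := by
  intro n
  induction n with
  | zero =>
    intro G P Q hn hGE hPE hQE hdis hP hQ hyp
    have hGfin : G.Finite := M.set_finite G hGE
    have hG : G = ∅ := (Set.ncard_eq_zero hGfin).mp hn
    exact ⟨∅, ∅, by simp [hG], Set.disjoint_empty _, by simpa, by simpa⟩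
  | succ n ih =>
    intro G P Q hn hGE hPE hQE hdis hP hQ hyp
    have hGfin : G.Finite := M.set_finite G hGE
    obtain ⟨e, he⟩ := Set.nonempty_of_ncard_ne_zero (by omega : G.ncard ≠ 0)
    have heE : e ∈ M.E := hGE he
    have hePQ : e ∉ P ∪ Q := (Set.disjoint_left.mp hdis he)
    have heP : e ∉ P := fun h => hePQ (Or.inl h)
    have heQ : e ∉ Q := fun h => hePQ (Or.inr h)
    have hPfin : P.Finite := M.set_finite P hPE
    have hQfin : Q.Finite := M.set_finite Q hQE
    set G' : Set α := G \ {e} with hG'def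
    have hG'card : G'.ncard = n := by
      rw [hG'def, Set.ncard_diff_singleton_of_mem he, hn]
      omega
    have hG'E : G' ⊆ M.E := (Set.diff_subset).trans hGE
    have hG'G : G' ⊆ G := Set.diff_subset
    have heG' : e ∉ G' := fun h => h.2 rfl
    have hiPcard : (insert e P).ncard = P.ncard + 1 := Set.ncard_insert_of_notMem heP hPfin
    have hiQcard : (insert e Q).ncard = Q.ncard + 1 := Set.ncard_insert_of_notMem heQ hQfin
    by_cases ha : ∀ S ⊆ G', S.ncard + (insert e P).ncard + Q.ncard ≤
        mrk M (S ∪ insert e P) + mrk M (S ∪ Q)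
    · -- we can add `e` to the `P` side
      have hiPE : insert e P ⊆ M.E := Set.insert_subset heE hPE
      have hiP : M.Indep (insert e P) := by
        have h0 := ha ∅ (Set.empty_subset _)
        simp only [Set.ncard_empty, Set.empty_union] at h0
        rw [mrk_indep hQ] at h0
        exact indep_of_mrk_ge hiPE (by omega)
      have hdis' : Disjoint G' (insert e P ∪ Q) := by
        rw [Set.disjoint_left]
        rintro x hx hx'
        rcases hx' with hx' | hx'
        · rcases hx' with rfl | hx'
          · exact heG' hx
          · exact Set.disjoint_left.mp hdis (hG'G hx) (Or.inl hx')
        · exact Set.disjoint_left.mp hdis (hG'G hx) (Or.inr hx')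
      obtain ⟨S₁, S₂, hu, hd, h1, h2⟩ :=
        ih G' (insert e P) Q hG'card hG'E hiPE hQE hdis' hiP hQ ha
      have heS₂ : e ∉ S₂ := fun h => heG' (hu ▸ (Or.inr h : e ∈ S₁ ∪ S₂))
      refine ⟨insert e S₁, S₂, ?_, ?_, ?_, h2⟩
      · rw [Set.insert_union, hu, hG'def, Set.insert_diff_singleton,
          Set.insert_eq_self.mpr he]
      · refine Set.disjoint_left.mpr fun x hx hx' => ?_
        rcases Set.mem_insert_iff.mp hx with rfl | hx
        · exact heS₂ hx'
        · exact Set.disjoint_left.mp hd hx hx'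
      · have : insert e S₁ ∪ P = S₁ ∪ insert e P := by
          rw [Set.insert_union, Set.union_insert]
        exact this ▸ h1
    · by_cases hb : ∀ S ⊆ G', S.ncard + P.ncard + (insert e Q).ncard ≤
          mrk M (S ∪ P) + mrk M (S ∪ insert e Q)
      · -- we can add `e` to the `Q` side
        have hiQE : insert e Q ⊆ M.E := Set.insert_subset heE hQE
        have hiQ : M.Indep (insert e Q) := by
          have h0 := hb ∅ (Set.empty_subset _)
          simp only [Set.ncard_empty, Set.empty_union] at h0
          rw [mrk_indep hP] at h0
          exact indep_of_mrk_ge hiQE (by omega)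
        have hdis' : Disjoint G' (P ∪ insert e Q) := by
          rw [Set.disjoint_left]
          rintro x hx hx'
          rcases hx' with hx' | hx'
          · exact Set.disjoint_left.mp hdis (hG'G hx) (Or.inl hx')
          · rcases hx' with rfl | hx'
            · exact heG' hx
            · exact Set.disjoint_left.mp hdis (hG'G hx) (Or.inr hx')
        obtain ⟨S₁, S₂, hu, hd, h1, h2⟩ :=
          ih G' P (insert e Q) hG'card hG'E hPE hiQE hdis' hP hiQ hb
        have heS₁ : e ∉ S₁ := fun h => heG' (hu ▸ (Or.inl h : e ∈ S₁ ∪ S₂))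
        refine ⟨S₁, insert e S₂, ?_, ?_, h1, ?_⟩
        · rw [Set.union_insert, hu, hG'def, Set.insert_diff_singleton,
            Set.insert_eq_self.mpr he]
        · refine Set.disjoint_right.mpr fun x hx hx' => ?_
          rcases Set.mem_insert_iff.mp hx with rfl | hx
          · exact heS₁ hx'
          · exact Set.disjoint_left.mp hd hx' hx
        · have : insert e S₂ ∪ Q = S₂ ∪ insert e Q := by
            rw [Set.insert_union, Set.union_insert]
          exact this ▸ h2
      · -- both fail: contradiction via submodularity
        exfalso
        push_neg at ha hb
        obtain ⟨A, hAG', hAlt⟩ := ha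
        obtain ⟨B, hBG', hBlt⟩ := hb
        have hAfin : A.Finite := hGfin.subset (hAG'.trans hG'G)
        have hBfin : B.Finite := hGfin.subset (hBG'.trans hG'G)
        have heA : e ∉ A := fun h => heG' (hAG' h)
        have heB : e ∉ B := fun h => heG' (hBG' h)
        have hAE : A ⊆ M.E := (hAG'.trans hG'G).trans hGE
        have hBE : B ⊆ M.E := (hBG'.trans hG'G).trans hGE
        -- submodularity on the P side
        have hsubP : mrk M ((A ∪ B ∪ {e}) ∪ P) + mrk M ((A ∩ B) ∪ P) ≤
            mrk M (A ∪ insert e P) + mrk M (B ∪ P) := by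
          have hsm := mrk_submod (M := M) (A := A ∪ insert e P) (B := B ∪ P)
            (Set.union_subset hAE (Set.insert_subset heE hPE)) (Set.union_subset hBE hPE)
          have hU : (A ∪ insert e P) ∪ (B ∪ P) = (A ∪ B ∪ {e}) ∪ P := by
            ext x
            simp only [Set.mem_union, Set.mem_insert_iff, Set.mem_singleton_iff]
            tauto
          have hmono : mrk M ((A ∩ B) ∪ P) ≤ mrk M ((A ∪ insert e P) ∩ (B ∪ P)) := by
            refine mrk_mono ?_ (Set.inter_subset_right.trans (Set.union_subset hBE hPE))
            intro x hx
            rcases hx with hx | hx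
            · exact ⟨Or.inl hx.1, Or.inl hx.2⟩
            · exact ⟨Or.inr (Or.inr hx), Or.inr hx⟩
          rw [hU] at hsm
          omega
        -- submodularity on the Q side
        have hsubQ : mrk M ((A ∪ B ∪ {e}) ∪ Q) + mrk M ((A ∩ B) ∪ Q) ≤
            mrk M (A ∪ Q) + mrk M (B ∪ insert e Q) := by
          have hsm := mrk_submod (M := M) (A := A ∪ Q) (B := B ∪ insert e Q)
            (Set.union_subset hAE hQE) (Set.union_subset hBE (Set.insert_subset heE hQE))
          have hU : (A ∪ Q) ∪ (B ∪ insert e Q) = (A ∪ B ∪ {e}) ∪ Q := by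
            ext x
            simp only [Set.mem_union, Set.mem_insert_iff, Set.mem_singleton_iff]
            tauto
          have hmono : mrk M ((A ∩ B) ∪ Q) ≤ mrk M ((A ∪ Q) ∩ (B ∪ insert e Q)) := by
            refine mrk_mono ?_
              (Set.inter_subset_left.trans (Set.union_subset hAE hQE))
            intro x hx
            rcases hx with hx | hx
            · exact ⟨Or.inl hx.1, Or.inl hx.2⟩
            · exact ⟨Or.inr hx, Or.inr (Or.inr hx)⟩
          rw [hU] at hsm
          omega
        -- hypothesis at `A ∪ B ∪ {e}` and at `A ∩ B`
        have hABe : A ∪ B ∪ {e} ⊆ G := by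
          refine Set.union_subset (Set.union_subset (hAG'.trans hG'G) (hBG'.trans hG'G)) ?_
          intro x hx; rw [hx]; exact he
        have hH1 := hyp (A ∪ B ∪ {e}) hABe
        have hH2 := hyp (A ∩ B) ((Set.inter_subset_left.trans hAG').trans hG'G)
        have hcard1 : (A ∪ B ∪ {e}).ncard = (A ∪ B).ncard + 1 := by
          rw [Set.union_singleton]
          exact Set.ncard_insert_of_notMem (by simp [heA, heB]) (hAfin.union hBfin)
        have hcard2 : (A ∪ B).ncard + (A ∩ B).ncard = A.ncard + B.ncard :=
          Set.ncard_union_add_ncard_inter A B hAfin hBfin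
        omega

end Aux

theorem matroid_base_multiple_exchange {α : Type*} (M : Matroid α) [M.Finite]
    (X Y : Set α) (hX : M.IsBase X) (hY : M.IsBase Y) (I : Set α) (hI : I ⊆ X \ Y) :
    ∃ J ⊆ Y \ X, M.IsBase ((X \ I) ∪ J) ∧ M.IsBase ((Y \ J) ∪ I) := by
  classical
  have hXE : X ⊆ M.E := hX.subset_ground
  have hYE : Y ⊆ M.E := hY.subset_ground
  have hXfin : X.Finite := M.set_finite X hXE
  have hYfin : Y.Finite := M.set_finite Y hYE
  have hIX : I ⊆ X := fun x hx => (hI hx).1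
  have hIY : ∀ x ∈ I, x ∉ Y := fun x hx => (hI hx).2
  set G : Set α := Y \ X with hGdef
  set P : Set α := X \ I with hPdef
  set Q : Set α := I ∪ (X ∩ Y) with hQdef
  have hGE : G ⊆ M.E := (Set.diff_subset).trans hYE
  have hPE : P ⊆ M.E := (Set.diff_subset).trans hXE
  have hQX : Q ⊆ X := Set.union_subset hIX Set.inter_subset_left
  have hQE : Q ⊆ M.E := hQX.trans hXE
  have hGfin : G.Finite := hYfin.subset Set.diff_subset
  have hPfin : P.Finite := hXfin.subset Set.diff_subset
  have hQfin : Q.Finite := hXfin.subset hQX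
  have hP : M.Indep P := hX.indep.subset Set.diff_subset
  have hQ : M.Indep Q := hX.indep.subset hQX
  have hPQ : P ∪ Q = X := by
    ext x
    simp only [hPdef, hQdef, Set.mem_union, Set.mem_diff, Set.mem_inter_iff]
    constructor
    · rintro (hx | hx | hx)
      · exact hx.1
      · exact hIX hx
      · exact hx.1
    · intro hx
      by_cases hxI : x ∈ I
      · exact Or.inr (Or.inl hxI)
      · exact Or.inl ⟨hx, hxI⟩
  have hdis : Disjoint G (P ∪ Q) := by
    rw [hPQ]
    exact Set.disjoint_left.mpr fun x hx hx' => hx.2 hx'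
  have hXYP : X ∩ Y ⊆ P := fun x hx => ⟨hx.1, fun hxI => hIY x hxI hx.2⟩
  have hXYQ : X ∩ Y ⊆ Q := Set.subset_union_right
  -- cardinality bookkeeping
  have hcP : P.ncard + I.ncard = X.ncard := by
    rw [← Set.ncard_union_eq (Set.disjoint_left.mpr fun x hx hxI => hx.2 hxI) hPfin
      (hXfin.subset hIX), Set.diff_union_of_subset hIX]
  have hcQ : Q.ncard = I.ncard + (X ∩ Y).ncard := by
    rw [hQdef, Set.ncard_union_eq
      (Set.disjoint_left.mpr fun x hxI hx => hIY x hxI hx.2) (hXfin.subset hIX)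
      (hXfin.subset Set.inter_subset_left)]
  -- verify the rank hypothesis
  have hyp : ∀ S ⊆ G, S.ncard + P.ncard + Q.ncard ≤ mrk M (S ∪ P) + mrk M (S ∪ Q) := by
    intro S hS
    have hSY : S ⊆ Y := hS.trans Set.diff_subset
    have hSX : ∀ x ∈ S, x ∉ X := fun x hx => (hS hx).2
    have hSE : S ⊆ M.E := hSY.trans hYE
    have hSfin : S.Finite := hYfin.subset hSY
    have hsm := mrk_submod (M := M) (A := S ∪ P) (B := S ∪ Q)
      (Set.union_subset hSE hPE) (Set.union_subset hSE hQE)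
    have hU : (S ∪ P) ∪ (S ∪ Q) = S ∪ X := by
      rw [Set.union_union_union_comm, Set.union_self, hPQ]
    have hmono : mrk M (S ∪ (X ∩ Y)) ≤ mrk M ((S ∪ P) ∩ (S ∪ Q)) := by
      refine mrk_mono ?_ (Set.inter_subset_left.trans (Set.union_subset hSE hPE))
      intro x hx
      rcases hx with hx | hx
      · exact ⟨Or.inl hx, Or.inl hx⟩
      · exact ⟨Or.inr (hXYP hx), Or.inr (hXYQ hx)⟩
    have h2 : X.ncard ≤ mrk M (S ∪ X) := by
      rw [← mrk_indep hX.indep]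
      exact mrk_mono Set.subset_union_right (Set.union_subset hSE hXE)
    have h3 : mrk M (S ∪ (X ∩ Y)) = S.ncard + (X ∩ Y).ncard := by
      rw [mrk_indep (hY.indep.subset (Set.union_subset hSY Set.inter_subset_right)),
        Set.ncard_union_eq (Set.disjoint_left.mpr fun x hx hx' => hSX x hx hx'.1)
          hSfin (hXfin.subset Set.inter_subset_left)]
    rw [hU] at hsm
    omega
  obtain ⟨S₁, S₂, hu, hd, h1, h2⟩ :=
    partition_lemma G.ncard G P Q rfl hGE hPE hQE hdis hP hQ hyp
  have hS₁G : S₁ ⊆ G := hu ▸ Set.subset_union_left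
  have hS₂G : S₂ ⊆ G := hu ▸ Set.subset_union_right
  have hS₁fin : S₁.Finite := hGfin.subset hS₁G
  have hS₂fin : S₂.Finite := hGfin.subset hS₂G
  -- cardinalities force both unions to be bases
  have hc1 : (S₁ ∪ P).ncard = S₁.ncard + P.ncard :=
    Set.ncard_union_eq (Set.disjoint_left.mpr fun x hx hx' => (hS₁G hx).2 hx'.1) hS₁fin hPfin
  have hc2 : (S₂ ∪ Q).ncard = S₂.ncard + Q.ncard :=
    Set.ncard_union_eq (Set.disjoint_left.mpr fun x hx hx' => (hS₂G hx).2 (hQX hx')) hS₂fin hQfin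
  have hsum : S₁.ncard + S₂.ncard = G.ncard := by
    rw [← Set.ncard_union_eq hd hS₁fin hS₂fin, hu]
  have hXY : X.ncard = Y.ncard := hX.ncard_eq_ncard_of_isBase hY
  have hGY : G.ncard + (X ∩ Y).ncard = Y.ncard := by
    rw [← Set.ncard_union_eq (Set.disjoint_left.mpr fun x hx hx' => hx.2 hx'.1)
      hGfin (hXfin.subset Set.inter_subset_left)]
    congr 1
    ext x
    simp only [hGdef, Set.mem_union, Set.mem_diff, Set.mem_inter_iff]
    constructor
    · rintro (hx | hx)
      · exact hx.1
      · exact hx.2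
    · intro hx
      by_cases hxX : x ∈ X
      · exact Or.inr ⟨hxX, hx⟩
      · exact Or.inl ⟨hx, hxX⟩
  have hb1 : (S₁ ∪ P).ncard ≤ X.ncard := indep_ncard_le_base h1 hX
  have hb2 : (S₂ ∪ Q).ncard ≤ X.ncard := indep_ncard_le_base h2 hX
  have hbase1 : M.IsBase (S₁ ∪ P) := base_of_indep_card h1 hX (by omega)
  have hbase2 : M.IsBase (S₂ ∪ Q) := base_of_indep_card h2 hX (by omega)
  refine ⟨S₁, hS₁G, ?_, ?_⟩
  · rwa [Set.union_comm]
  · have hset : (Y \ S₁) ∪ I = S₂ ∪ Q := by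
      ext x
      simp only [hQdef, Set.mem_union, Set.mem_diff, Set.mem_inter_iff]
      constructor
      · rintro (⟨hxY, hxS₁⟩ | hxI)
        · by_cases hxX : x ∈ X
          · exact Or.inr (Or.inr ⟨hxX, hxY⟩)
          · have hxG : x ∈ G := ⟨hxY, hxX⟩
            rcases (hu ▸ hxG : x ∈ S₁ ∪ S₂) with h | h
            · exact absurd h hxS₁
            · exact Or.inl h
        · exact Or.inr (Or.inl hxI)
      · rintro (hx | hx | hx)
        · exact Or.inl ⟨(hS₂G hx).1, fun hx' => Set.disjoint_left.mp hd hx' hx⟩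
        · exact Or.inr hx
        · exact Or.inl ⟨hx.2, fun hx' => (hS₁G hx').2 hx.1⟩
    rw [hset]
    exact hbase2
end

section
/- Let f : 2^N → ℝ ∪ {-∞} be M♮-concave, let X, Y ∈ dom f and I ⊆ X \ Y. Set C = X ∩ Y, X₀ = X \ Y, Y₀ = Y \ X, and define f₁(J) = f((X₀ \ I) ∪ C ∪ J) and f₂(J) = f(I ∪ C ∪ (Y₀ \ J)) for J ⊆ Y₀, with conjugates g₁(q) = max_{J ⊆ Y₀} { f₁(J) − q(J) } and g₂(q) = max_{J ⊆ Y₀} { f₂(J) − q(J) } for q ∈ ℝ^{Y₀}, where q(J) = Σ_{j ∈ J} q_j. Then for every q ∈ ℝ^{Y₀}, g₁(q) + g₂(−q) ≥ f(X) + f(Y). -/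
open Finset

set_option linter.unusedSectionVars false
set_option maxHeartbeats 1000000

namespace ConjAux

variable {N : Type*} [Fintype N] [DecidableEq N]

noncomputable def g (f : Finset N → WithBot ℝ) (p : N → ℝ) : WithBot ℝ :=
  univ.sup fun Z : Finset N => f Z + ((-(∑ e ∈ Z, p e) : ℝ) : WithBot ℝ)

lemma le_g (f : Finset N → WithBot ℝ) (p : N → ℝ) (Z : Finset N) :
    f Z + ((-(∑ e ∈ Z, p e) : ℝ) : WithBot ℝ) ≤ g f p :=
  Finset.le_sup (f := fun Z : Finset N => f Z + ((-(∑ e ∈ Z, p e) : ℝ) : WithBot ℝ)) (mem_univ Z)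

def addc (p : N → ℝ) (e : N) (s : ℝ) : N → ℝ := fun x => if x = e then p x + s else p x

lemma sum_addc (p : N → ℝ) (e : N) (s : ℝ) (Z : Finset N) :
    ∑ x ∈ Z, addc p e s x = (∑ x ∈ Z, p x) + (if e ∈ Z then s else 0) := by
  unfold addc
  rw [← Finset.sum_ite_eq' Z e (fun _ => s), ← Finset.sum_add_distrib]
  apply Finset.sum_congr rfl
  intro x hx
  by_cases h : x = e <;> simp [h]

lemma comb (x y : WithBot ℝ) (a b : ℝ) :
    (x + (a : WithBot ℝ)) + (y + (b : WithBot ℝ)) = (x + y) + (((a + b) : ℝ) : WithBot ℝ) := by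
  rw [WithBot.coe_add]
  exact add_add_add_comm x _ y _

lemma pairL {u v x y : WithBot ℝ} {c a b : ℝ} (hc : c ≤ a + b)
    (h1 : x + ((a : ℝ) : WithBot ℝ) ≤ u) (h2 : y + ((b : ℝ) : WithBot ℝ) ≤ v) :
    (x + y) + ((c : ℝ) : WithBot ℝ) ≤ u + v := by
  calc (x + y) + ((c : ℝ) : WithBot ℝ) ≤ (x + y) + (((a + b) : ℝ) : WithBot ℝ) :=
        add_le_add_right (WithBot.coe_le_coe.2 hc) _
    _ = (x + ((a : ℝ) : WithBot ℝ)) + (y + ((b : ℝ) : WithBot ℝ)) := (comb x y a b).symm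
    _ ≤ u + v := add_le_add h1 h2

lemma pairR {u v x y : WithBot ℝ} {c a b : ℝ} (hc : c ≤ a + b)
    (h1 : y + ((a : ℝ) : WithBot ℝ) ≤ u) (h2 : x + ((b : ℝ) : WithBot ℝ) ≤ v) :
    (x + y) + ((c : ℝ) : WithBot ℝ) ≤ u + v := by
  rw [add_comm x y]; exact pairL hc h1 h2

lemma cancel_coe {u v : WithBot ℝ} (c : ℝ) (h : u + (c : WithBot ℝ) ≤ v + (c : WithBot ℝ)) :
    u ≤ v := by
  cases v with
  | bot =>
    cases u with
    | bot => exact le_refl _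
    | coe r =>
      exfalso
      rw [WithBot.bot_add, ← WithBot.coe_add, le_bot_iff] at h
      exact WithBot.coe_ne_bot h
  | coe r =>
    cases u with
    | bot => exact bot_le
    | coe r' =>
      rw [← WithBot.coe_add, ← WithBot.coe_add, WithBot.coe_le_coe] at h
      exact WithBot.coe_le_coe.2 (by linarith)

lemma two_coord (f : Finset N → WithBot ℝ) (hf : MExc f)
    (p : N → ℝ) (e e' : N) (hee : e ≠ e') (s t : ℝ) (hs : 0 ≤ s) (ht : 0 ≤ t) :
    g f p + g f (addc (addc p e s) e' t) ≤ g f (addc p e s) + g f (addc p e' t) := by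
  obtain ⟨B, -, hB⟩ := Finset.exists_mem_eq_sup (univ : Finset (Finset N)) univ_nonempty
      (fun Z : Finset N => f Z + ((-(∑ x ∈ Z, p x) : ℝ) : WithBot ℝ))
  obtain ⟨A, -, hA⟩ := Finset.exists_mem_eq_sup (univ : Finset (Finset N)) univ_nonempty
      (fun Z : Finset N => f Z + ((-(∑ x ∈ Z, addc (addc p e s) e' t x) : ℝ) : WithBot ℝ))
  have hT1 : ∀ Z : Finset N,
      f Z + ((-((∑ x ∈ Z, p x) + (if e ∈ Z then s else 0)) : ℝ) : WithBot ℝ) ≤ g f (addc p e s) := by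
    intro Z
    have h := le_g f (addc p e s) Z
    rwa [sum_addc] at h
  have hT2 : ∀ Z : Finset N,
      f Z + ((-((∑ x ∈ Z, p x) + (if e' ∈ Z then t else 0)) : ℝ) : WithBot ℝ) ≤ g f (addc p e' t) := by
    intro Z
    have h := le_g f (addc p e' t) Z
    rwa [sum_addc] at h
  have hSA : ∑ x ∈ A, addc (addc p e s) e' t x
      = (∑ x ∈ A, p x) + ((if e ∈ A then s else 0) + (if e' ∈ A then t else 0)) := by
    rw [sum_addc, sum_addc]; ring
  rw [show g f p = f B + ((-(∑ x ∈ B, p x) : ℝ) : WithBot ℝ) from hB,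
    show g f (addc (addc p e s) e' t)
      = f A + ((-(∑ x ∈ A, addc (addc p e s) e' t x) : ℝ) : WithBot ℝ) from hA, hSA,
    comb]
  set SA := ∑ x ∈ A, p x with hSAdef
  set SB := ∑ x ∈ B, p x with hSBdef
  by_cases h1 : e' ∈ A ∨ e' ∉ B
  · -- pair A with T1 (g ps), B with T2 (g pt)
    refine pairR (a := -(SA + (if e ∈ A then s else 0))) (b := -(SB + (if e' ∈ B then t else 0)))
      ?_ (hT1 A) (hT2 B)
    rcases h1 with h | h <;> split_ifs <;> simp_all <;> linarith
  by_cases h2 : e ∈ A ∨ e ∉ B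
  · -- pair B with T1 (g ps), A with T2 (g pt)
    refine pairL (a := -(SB + (if e ∈ B then s else 0))) (b := -(SA + (if e' ∈ A then t else 0)))
      ?_ (hT1 B) (hT2 A)
    rcases h2 with h | h <;> split_ifs <;> simp_all <;> linarith
  push_neg at h1 h2
  obtain ⟨he'A, he'B⟩ := h1
  obtain ⟨heA, heB⟩ := h2
  rw [if_neg heA, if_neg he'A]
  by_cases hfB : f B = ⊥
  · rw [hfB]; simp
  by_cases hfA : f A = ⊥
  · rw [hfA]; simp
  have hexc := hf B A e (mem_sdiff.mpr ⟨heB, heA⟩)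
  rcases le_max_iff.mp hexc with hcase | hcase
  · -- branch (a) : B' = B.erase e, A' = insert e A
    have hSB' : ∑ x ∈ B.erase e, p x = SB - p e := by
      have := Finset.sum_erase_add B p heB
      rw [hSBdef]; linarith
    have hSA' : ∑ x ∈ insert e A, p x = SA + p e := by
      rw [Finset.sum_insert heA, hSAdef]; ring
    calc (f B + f A) + ((-SB + -(SA + (0 + 0)) : ℝ) : WithBot ℝ)
        ≤ (f (B.erase e) + f (insert e A)) + ((-SB + -(SA + (0 + 0)) : ℝ) : WithBot ℝ) :=
          add_le_add_left hcase _
      _ ≤ g f (addc p e s) + g f (addc p e' t) := by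
          refine pairL (a := -((SB - p e) + (if e ∈ B.erase e then s else 0)))
            (b := -((SA + p e) + (if e' ∈ insert e A then t else 0))) ?_ ?_ ?_
          · rw [if_neg (Finset.notMem_erase e B), if_neg (by simp [he'A, Ne.symm hee] : ¬ e' ∈ insert e A)]
            exact le_of_eq (by ring)
          · have := hT1 (B.erase e); rwa [hSB'] at this
          · have := hT2 (insert e A); rwa [hSA'] at this
  · -- branch (b)
    have hnb : f B + f A ≠ ⊥ := by
      simp [WithBot.add_eq_bot, hfA, hfB]
    obtain ⟨j, hjmem, hj⟩ := (Finset.le_sup_iff (bot_lt_iff_ne_bot.mpr hnb)).mp hcase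
    obtain ⟨hjA, hjB⟩ := mem_sdiff.mp hjmem
    have hje : j ≠ e := by rintro rfl; exact heA hjA
    have hje' : e ≠ j := Ne.symm hje
    have hSB' : ∑ x ∈ insert j (B.erase e), p x = SB - p e + p j := by
      rw [Finset.sum_insert (by simp [hjB] : j ∉ B.erase e)]
      have := Finset.sum_erase_add B p heB
      rw [hSBdef]; linarith
    have hSA' : ∑ x ∈ (insert e A).erase j, p x = SA + p e - p j := by
      have hjmem2 : j ∈ insert e A := Finset.mem_insert_of_mem hjA
      have := Finset.sum_erase_add (insert e A) p hjmem2
      rw [Finset.sum_insert heA] at this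
      rw [hSAdef]; linarith
    calc (f B + f A) + ((-SB + -(SA + (0 + 0)) : ℝ) : WithBot ℝ)
        ≤ (f (insert j (B.erase e)) + f ((insert e A).erase j))
            + ((-SB + -(SA + (0 + 0)) : ℝ) : WithBot ℝ) := add_le_add_left hj _
      _ ≤ g f (addc p e s) + g f (addc p e' t) := by
          refine pairL (a := -((SB - p e + p j) + (if e ∈ insert j (B.erase e) then s else 0)))
            (b := -((SA + p e - p j) + (if e' ∈ (insert e A).erase j then t else 0))) ?_ ?_ ?_
          · rw [if_neg (by simp [hje', Finset.notMem_erase] : ¬ e ∈ insert j (B.erase e)),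
              if_neg (by simp [he'A, Ne.symm hee] : ¬ e' ∈ (insert e A).erase j)]
            exact le_of_eq (by ring)
          · have := hT1 (insert j (B.erase e)); rwa [hSB'] at this
          · have := hT2 ((insert e A).erase j); rwa [hSA'] at this

lemma g_ne_bot (f : Finset N → WithBot ℝ) (hne : ∃ Z : Finset N, f Z ≠ ⊥) (p : N → ℝ) :
    g f p ≠ ⊥ := by
  obtain ⟨Z, hZ⟩ := hne
  intro h
  have h2 := le_g f p Z
  rw [h, le_bot_iff] at h2
  rcases WithBot.add_eq_bot.mp h2 with h' | h'
  · exact hZ h'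
  · exact WithBot.coe_ne_bot h'

noncomputable def gr (f : Finset N → WithBot ℝ) (p : N → ℝ) : ℝ := (g f p).unbotD 0

lemma g_eq_gr (f : Finset N → WithBot ℝ) (hne : ∃ Z : Finset N, f Z ≠ ⊥) (p : N → ℝ) :
    g f p = ((gr f p : ℝ) : WithBot ℝ) := by
  cases h : g f p with
  | bot => exact absurd h (g_ne_bot f hne p)
  | coe r => rw [gr, h]; rfl

lemma two_coord_r (f : Finset N → WithBot ℝ) (hne : ∃ Z : Finset N, f Z ≠ ⊥) (hf : MExc f)
    (p : N → ℝ) (e e' : N) (hee : e ≠ e') (s t : ℝ) (hs : 0 ≤ s) (ht : 0 ≤ t) :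
    gr f p + gr f (addc (addc p e s) e' t) ≤ gr f (addc p e s) + gr f (addc p e' t) := by
  have h := two_coord f hf p e e' hee s t hs ht
  rw [g_eq_gr f hne, g_eq_gr f hne, g_eq_gr f hne, g_eq_gr f hne, ← WithBot.coe_add,
    ← WithBot.coe_add, WithBot.coe_le_coe] at h
  exact h

lemma lemC (f : Finset N → WithBot ℝ) (hne : ∃ Z : Finset N, f Z ≠ ⊥) (hf : MExc f)
    (D : Finset N) :
    ∀ (p q : N → ℝ) (e : N) (s : ℝ), 0 ≤ s →
    (∀ x, x ∉ D → p x = q x) → (∀ x, p x ≤ q x) → p e = q e →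
    gr f (addc q e s) + gr f p ≤ gr f (addc p e s) + gr f q := by
  induction D using Finset.induction_on with
  | empty =>
    intro p q e s hs hout hle heq
    have hpq : p = q := funext fun x => hout x (notMem_empty x)
    rw [hpq]
  | @insert e' D' he'D' ih =>
    intro p q e s hs hout hle heq
    by_cases hpq : p e' = q e'
    · refine ih p q e s hs (fun x hx => ?_) hle heq
      by_cases hxe : x = e'
      · rw [hxe]; exact hpq
      · exact hout x (by simp [hxe, hx])
    · have hlt : p e' < q e' := lt_of_le_of_ne (hle e') hpq
      have hee' : e ≠ e' := by rintro rfl; exact hpq heq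
      set q₁ : N → ℝ := fun x => if x = e' then p e' else q x with hq₁
      have hq : q = addc q₁ e' (q e' - p e') := by
        funext x
        by_cases hx : x = e' <;> simp [addc, hq₁, hx]
      have ih1 : gr f (addc q₁ e s) + gr f p ≤ gr f (addc p e s) + gr f q₁ := by
        refine ih p q₁ e s hs (fun x hx => ?_) (fun x => ?_) ?_
        · by_cases hxe : x = e'
          · simp [hq₁, hxe]
          · simp only [hq₁, hxe, if_false]
            exact hout x (by simp [hxe, hx])
        · by_cases hxe : x = e'
          · simp [hq₁, hxe]
          · simp only [hq₁, hxe, if_false]; exact hle x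
        · simp only [hq₁]
          rw [if_neg hee']
          exact heq
      have htc := two_coord_r f hne hf q₁ e e' hee' s (q e' - p e') hs (by linarith)
      have hcomm : addc (addc q₁ e s) e' (q e' - p e') = addc q e s := by
        funext x
        by_cases hx : x = e'
        · subst hx
          simp [addc, hq₁, Ne.symm hee']
          try ring
        · by_cases hx2 : x = e
          · subst hx2
            simp [addc, hq₁, hx, hee']
          · simp [addc, hq₁, hx, hx2]
      rw [hcomm, ← hq] at htc
      linarith [ih1, htc]

lemma submod (f : Finset N → WithBot ℝ) (hne : ∃ Z : Finset N, f Z ≠ ⊥) (hf : MExc f)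
    (D : Finset N) :
    ∀ (p p' : N → ℝ), (∀ x, x ∉ D → p x = p' x) →
    gr f (fun x => max (p x) (p' x)) + gr f (fun x => min (p x) (p' x)) ≤ gr f p + gr f p' := by
  induction D using Finset.induction_on with
  | empty =>
    intro p p' hout
    have hpq : p = p' := funext fun x => hout x (notMem_empty x)
    subst hpq
    have h1 : (fun x => max (p x) (p x)) = p := funext fun x => max_self _
    have h2 : (fun x => min (p x) (p x)) = p := funext fun x => min_self _
    rw [h1, h2]
  | @insert e D' heD' ih =>
    intro p p' hout
    have key : ∀ (p p' : N → ℝ), (∀ x, x ∉ insert e D' → p x = p' x) → p' e < p e →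
        gr f (fun x => max (p x) (p' x)) + gr f (fun x => min (p x) (p' x))
          ≤ gr f p + gr f p' := by
      intro p p' hout hlt
      set s : ℝ := p e - p' e with hsdef
      set p₁ : N → ℝ := fun x => if x = e then p' e else p x with hp₁
      have hp : p = addc p₁ e s := by
        funext x
        by_cases hx : x = e <;> simp [addc, hp₁, hx] <;> ring
      have hmax : (fun x => max (p x) (p' x)) = addc (fun x => max (p₁ x) (p' x)) e s := by
        funext x
        by_cases hx : x = e
        · simp [addc, hp₁, hx, max_eq_left hlt.le, max_self]; ring
        · simp [addc, hp₁, hx]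
      have hmin : (fun x => min (p x) (p' x)) = (fun x => min (p₁ x) (p' x)) := by
        funext x
        by_cases hx : x = e
        · simp [hp₁, hx, min_eq_right hlt.le, min_self]
        · simp [hp₁, hx]
      have ihh : gr f (fun x => max (p₁ x) (p' x)) + gr f (fun x => min (p₁ x) (p' x))
          ≤ gr f p₁ + gr f p' := by
        refine ih p₁ p' (fun x hx => ?_)
        by_cases hxe : x = e
        · simp [hp₁, hxe]
        · simp only [hp₁, hxe, if_false]
          exact hout x (by simp [hxe, hx])
      have hC := lemC f hne hf (univ : Finset N) p₁ (fun x => max (p₁ x) (p' x)) e s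
        (by simp [hsdef]; linarith) (fun x hx => absurd (mem_univ x) hx)
        (fun x => le_max_left _ _) (by simp [hp₁])
      rw [← hmax, ← hp] at hC
      rw [hmax, hmin] at *
      rw [← hmax] at hC
      linarith [ihh, hC]
    rcases lt_trichotomy (p' e) (p e) with hlt | heq | hlt
    · exact key p p' hout hlt
    · refine ih p p' (fun x hx => ?_)
      by_cases hxe : x = e
      · rw [hxe]; exact heq.symm
      · exact hout x (by simp [hxe, hx])
    · have h := key p' p (fun x hx => (hout x hx).symm) hlt
      have h1 : (fun x => max (p' x) (p x)) = (fun x => max (p x) (p' x)) :=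
        funext fun x => max_comm _ _
      have h2 : (fun x => min (p' x) (p x)) = (fun x => min (p x) (p' x)) :=
        funext fun x => min_comm _ _
      rw [h1, h2] at h
      linarith

end ConjAux

open ConjAux

theorem conjugate_lower_bound {N : Type*} [Fintype N] [DecidableEq N]
    (f : Finset N → WithBot ℝ) (hdom : ∃ Z, f Z ≠ ⊥) (hf : MExc f)
    (X Y : Finset N) (hX : f X ≠ ⊥) (hY : f Y ≠ ⊥)
    (I : Finset N) (hI : I ⊆ X \ Y) (q : N → ℝ) :
    f X + f Y ≤
      ((Y \ X).powerset.sup fun J =>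
          f (((X \ Y) \ I) ∪ (X ∩ Y) ∪ J) + ((-(∑ j ∈ J, q j) : ℝ) : WithBot ℝ))
        + ((Y \ X).powerset.sup fun J =>
            f (I ∪ (X ∩ Y) ∪ ((Y \ X) \ J)) + (((∑ j ∈ J, q j) : ℝ) : WithBot ℝ)) := by
  classical
  have hne : ∃ Z, f Z ≠ ⊥ := ⟨X, hX⟩
  obtain ⟨x, hx⟩ : ∃ x : ℝ, f X = ((x : ℝ) : WithBot ℝ) := by
    cases h : f X with
    | bot => exact absurd h hX
    | coe r => exact ⟨r, rfl⟩
  obtain ⟨y, hy⟩ : ∃ y : ℝ, f Y = ((y : ℝ) : WithBot ℝ) := by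
    cases h : f Y with
    | bot => exact absurd h hY
    | coe r => exact ⟨r, rfl⟩
  set Y₀ := Y \ X with hY₀def
  set C := X ∩ Y with hCdef
  set K := (X \ Y) \ I ∪ (X ∩ Y) with hKdef
  set Lt := I ∪ (X ∩ Y) with hLtdef
  set G₁ := Y₀.powerset.sup fun J => f (K ∪ J) + ((-(∑ j ∈ J, q j) : ℝ) : WithBot ℝ) with hG₁def
  set G₂ := Y₀.powerset.sup fun J =>
      f (Lt ∪ (Y₀ \ J)) + (((∑ j ∈ J, q j) : ℝ) : WithBot ℝ) with hG₂def
  -- basic membership facts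
  have hIa : ∀ a, a ∈ I → a ∈ X ∧ a ∉ Y := fun a ha => Finset.mem_sdiff.mp (hI ha)
  have hKeq : K = X \ I := by
    ext a
    have h := hIa a
    simp only [hKdef, mem_union, mem_sdiff, mem_inter, hCdef]
    tauto
  have hKmem : ∀ a, a ∈ K ↔ a ∈ X ∧ a ∉ I := by
    intro a; rw [hKeq]; exact Finset.mem_sdiff
  have hLmem : ∀ a, a ∈ Lt ↔ a ∈ I ∨ (a ∈ X ∧ a ∈ Y) := by
    intro a; simp only [hLtdef, mem_union, mem_inter, hCdef]
  have hY₀mem : ∀ a, a ∈ Y₀ ↔ a ∈ Y ∧ a ∉ X := by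
    intro a; simp only [hY₀def, mem_sdiff]
  have hKY₀ : ∀ a, a ∈ K → a ∉ Y₀ := by
    intro a haK haY
    exact (hY₀mem a |>.mp haY).2 ((hKmem a |>.mp haK).1)
  have hLY₀ : ∀ a, a ∈ Lt → a ∉ Y₀ := by
    intro a haL haY
    rcases (hLmem a).mp haL with h | h
    · exact (hY₀mem a |>.mp haY).2 (hIa a h).1
    · exact (hY₀mem a |>.mp haY).2 h.1
  have hCK : ∀ a, a ∈ C → a ∈ K := by
    intro a ha
    rw [hCdef] at ha
    rw [hKmem]
    obtain ⟨h1, h2⟩ := Finset.mem_inter.mp ha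
    exact ⟨h1, fun hInI => (hIa a hInI).2 h2⟩
  have hCL : ∀ a, a ∈ C → a ∈ Lt := fun a ha => Finset.mem_union_right _ ha
  have hXKL : ∀ a, a ∈ X ↔ (a ∈ K ∨ a ∈ Lt) := by
    intro a
    rw [hKmem, hLmem]
    constructor
    · intro haX
      by_cases haI : a ∈ I
      · exact Or.inr (Or.inl haI)
      · exact Or.inl ⟨haX, haI⟩
    · rintro (⟨h, -⟩ | h | ⟨h, -⟩)
      · exact h
      · exact (hIa a h).1
      · exact h
  have hCKL : ∀ a, a ∈ C ↔ (a ∈ K ∧ a ∈ Lt) := by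
    intro a
    constructor
    · intro h; exact ⟨hCK a h, hCL a h⟩
    · rintro ⟨h1, h2⟩
      rw [hKmem] at h1
      rcases (hLmem a).mp h2 with h | h
      · exact absurd h h1.2
      · rw [hCdef]; exact Finset.mem_inter.mpr ⟨h.1, h.2⟩
  -- constants
  have hFne : (univ : Finset (Finset N)).Nonempty := univ_nonempty
  set F : ℝ := univ.sup' hFne (fun Z : Finset N => (f Z).unbotD 0) with hFdef
  have hF : ∀ Z : Finset N, f Z ≤ ((F : ℝ) : WithBot ℝ) := by
    intro Z
    cases h : f Z with
    | bot => exact bot_le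
    | coe r =>
      refine WithBot.coe_le_coe.2 ?_
      have : (f Z).unbotD 0 ≤ F := Finset.le_sup' (f := fun Z : Finset N => (f Z).unbotD 0) (mem_univ Z)
      rwa [h] at this
  set Q : ℝ := ∑ e ∈ Y₀, |q e| with hQdef
  set qY : ℝ := ∑ e ∈ Y₀, q e with hqYdef
  have hQ0 : 0 ≤ Q := Finset.sum_nonneg fun e _ => abs_nonneg _
  have hFx : x ≤ F := by
    have := hF X; rw [hx] at this; exact WithBot.coe_le_coe.mp this
  have hFy : y ≤ F := by
    have := hF Y; rw [hy] at this; exact WithBot.coe_le_coe.mp this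
  set M : ℝ := 2*F + 2*Q + |qY| + |x| + |y| + 1 with hMdef
  have hM0 : 0 < M := by
    have h1 := neg_abs_le x
    have h2 := neg_abs_le y
    have h3 := abs_nonneg qY
    rw [hMdef]; linarith
  set p : N → ℝ := fun e => if e ∈ K then -M else if e ∈ Y₀ then q e else M with hpdef
  set p' : N → ℝ := fun e => if e ∈ Lt then -M else if e ∈ Y₀ then q e else M with hp'def
  -- lower bounds for min / max conjugates
  have hlow1 : ((x : ℝ) : WithBot ℝ) + ((M * X.card : ℝ) : WithBot ℝ)
      ≤ g f (fun e => min (p e) (p' e)) := by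
    have hpt : ∀ e ∈ X, min (p e) (p' e) = -M := by
      intro e heX
      have heY₀ : e ∉ Y₀ := fun h => ((hY₀mem e).mp h).2 heX
      rcases (hXKL e).mp heX with hK | hL
      · have hpe : p e = -M := by simp [hpdef, hK]
        by_cases hL : e ∈ Lt
        · have hp'e : p' e = -M := by simp [hp'def, hL]
          rw [hpe, hp'e, min_self]
        · have hp'e : p' e = M := by simp [hp'def, hL, heY₀]
          rw [hpe, hp'e]
          exact min_eq_left (by linarith)
      · have hp'e : p' e = -M := by simp [hp'def, hL]
        by_cases hK : e ∈ K
        · have hpe : p e = -M := by simp [hpdef, hK]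
          rw [hpe, hp'e, min_self]
        · have hpe : p e = M := by simp [hpdef, hK, heY₀]
          rw [hpe, hp'e]
          exact min_eq_right (by linarith)
    have hsum : ∑ e ∈ X, min (p e) (p' e) = -(M * X.card) := by
      calc ∑ e ∈ X, min (p e) (p' e) = ∑ _e ∈ X, (-M) := Finset.sum_congr rfl hpt
        _ = X.card • (-M) := Finset.sum_const _
        _ = -(M * X.card) := by rw [nsmul_eq_mul]; ring
    have h := le_g f (fun e => min (p e) (p' e)) X
    rw [hx, hsum, neg_neg] at h
    exact h
  have hlow2 : ((y : ℝ) : WithBot ℝ) + ((M * C.card - qY : ℝ) : WithBot ℝ)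
      ≤ g f (fun e => max (p e) (p' e)) := by
    have hYsplit : C ∪ Y₀ = Y := by
      ext a
      simp only [hCdef, hY₀def, mem_union, mem_inter, mem_sdiff]
      tauto
    have hdisjCY : Disjoint C Y₀ := by
      rw [Finset.disjoint_left]
      intro a haC haY
      exact ((hY₀mem a).mp haY).2 (Finset.mem_inter.mp (hCdef ▸ haC)).1
    have hsumC : ∑ e ∈ C, max (p e) (p' e) = -(M * C.card) := by
      have hpt : ∀ e ∈ C, max (p e) (p' e) = -M := by
        intro e heC
        have hpe : p e = -M := by simp [hpdef, hCK e heC]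
        have hp'e : p' e = -M := by simp [hp'def, hCL e heC]
        rw [hpe, hp'e, max_self]
      calc ∑ e ∈ C, max (p e) (p' e) = ∑ _e ∈ C, (-M) := Finset.sum_congr rfl hpt
        _ = C.card • (-M) := Finset.sum_const _
        _ = -(M * C.card) := by rw [nsmul_eq_mul]; ring
    have hsumY₀ : ∑ e ∈ Y₀, max (p e) (p' e) = qY := by
      refine Finset.sum_congr rfl fun e heY => ?_
      have hK : e ∉ K := fun h => hKY₀ e h heY
      have hL : e ∉ Lt := fun h => hLY₀ e h heY
      have hpe : p e = q e := by simp [hpdef, hK, heY]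
      have hp'e : p' e = q e := by simp [hp'def, hL, heY]
      rw [hpe, hp'e, max_self]
    have hsum : ∑ e ∈ Y, max (p e) (p' e) = -(M * C.card) + qY := by
      rw [← hYsplit, Finset.sum_union hdisjCY, hsumC, hsumY₀]
    have h := le_g f (fun e => max (p e) (p' e)) Y
    rw [hy, hsum] at h
    have hc : -(-(M * C.card) + qY) = M * C.card - qY := by ring
    rw [hc] at h
    exact h
  -- upper bounds
  have hbadbound : ∀ (W : Finset N) (pw : N → ℝ), (∀ e ∈ W, pw e = -M) →
      (∀ e, e ∉ W → e ∈ Y₀ → pw e = q e) → (∀ e, e ∉ W → e ∉ Y₀ → pw e = M) →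
      ∀ Z : Finset N, ¬(W ⊆ Z ∧ Z ⊆ W ∪ Y₀) →
      -(∑ e ∈ Z, pw e) ≤ M * W.card - M + Q := by
    intro W pw hW hYq hout Z hbadZ
    have hsplit1 : ∑ e ∈ Z ∩ W, (-(pw e)) + ∑ e ∈ Z \ W, (-(pw e)) = ∑ e ∈ Z, (-(pw e)) :=
      Finset.sum_inter_add_sum_sdiff Z W _
    have hsplit2 : ∑ e ∈ (Z \ W) ∩ Y₀, (-(pw e)) + ∑ e ∈ (Z \ W) \ Y₀, (-(pw e))
        = ∑ e ∈ Z \ W, (-(pw e)) := Finset.sum_inter_add_sum_sdiff (Z \ W) Y₀ _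
    have hA : ∑ e ∈ Z ∩ W, (-(pw e)) = M * (Z ∩ W).card := by
      have hpt : ∀ e ∈ Z ∩ W, -(pw e) = M := by
        intro e he
        rw [hW e (Finset.mem_inter.mp he).2]; ring
      calc ∑ e ∈ Z ∩ W, (-(pw e)) = ∑ _e ∈ Z ∩ W, M := Finset.sum_congr rfl hpt
        _ = (Z ∩ W).card • M := Finset.sum_const _
        _ = M * (Z ∩ W).card := by rw [nsmul_eq_mul]; ring
    have hB : ∑ e ∈ (Z \ W) ∩ Y₀, (-(pw e)) ≤ Q := by
      have h1 : ∀ e ∈ (Z \ W) ∩ Y₀, -(pw e) ≤ |q e| := by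
        intro e he
        obtain ⟨heZW, heY⟩ := Finset.mem_inter.mp he
        rw [hYq e (Finset.mem_sdiff.mp heZW).2 heY]
        exact neg_le_abs _
      calc ∑ e ∈ (Z \ W) ∩ Y₀, (-(pw e)) ≤ ∑ e ∈ (Z \ W) ∩ Y₀, |q e| := Finset.sum_le_sum h1
        _ ≤ Q := by
            rw [hQdef]
            exact Finset.sum_le_sum_of_subset_of_nonneg Finset.inter_subset_right
              (fun j _ _ => abs_nonneg _)
    have hCc : ∑ e ∈ (Z \ W) \ Y₀, (-(pw e)) = -(M * (((Z \ W) \ Y₀).card : ℝ)) := by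
      have hpt : ∀ e ∈ (Z \ W) \ Y₀, -(pw e) = -M := by
        intro e he
        obtain ⟨heZW, heY⟩ := Finset.mem_sdiff.mp he
        rw [hout e (Finset.mem_sdiff.mp heZW).2 heY]
      calc ∑ e ∈ (Z \ W) \ Y₀, (-(pw e)) = ∑ _e ∈ (Z \ W) \ Y₀, (-M) := Finset.sum_congr rfl hpt
        _ = ((Z \ W) \ Y₀).card • (-M) := Finset.sum_const _
        _ = -(M * (((Z \ W) \ Y₀).card : ℝ)) := by rw [nsmul_eq_mul]; ring
    have hneg : -(∑ e ∈ Z, pw e) = ∑ e ∈ Z, (-(pw e)) := (Finset.sum_neg_distrib _).symm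
    have htot : -(∑ e ∈ Z, pw e) = M * (Z ∩ W).card + (∑ e ∈ (Z \ W) ∩ Y₀, (-(pw e)))
        + (-(M * (((Z \ W) \ Y₀).card : ℝ))) := by
      rw [hneg, ← hsplit1, ← hsplit2, hA, hCc]; ring
    rw [htot]
    by_cases hWZ : W ⊆ Z
    · have hrest : ¬ Z ⊆ W ∪ Y₀ := fun h => hbadZ ⟨hWZ, h⟩
      obtain ⟨a, haZ, haWY⟩ := Finset.not_subset.mp hrest
      have haM : a ∈ (Z \ W) \ Y₀ := by
        rw [Finset.mem_sdiff, Finset.mem_sdiff]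
        exact ⟨⟨haZ, fun h => haWY (Finset.mem_union_left _ h)⟩,
          fun h => haWY (Finset.mem_union_right _ h)⟩
      have hcard1 : (1 : ℝ) ≤ (((Z \ W) \ Y₀).card : ℝ) := by
        exact_mod_cast Finset.card_pos.mpr ⟨a, haM⟩
      have hcard2 : ((Z ∩ W).card : ℝ) ≤ (W.card : ℝ) := by
        exact_mod_cast Finset.card_le_card Finset.inter_subset_right
      have e1 : M * ((Z ∩ W).card : ℝ) ≤ M * (W.card : ℝ) :=
        mul_le_mul_of_nonneg_left hcard2 hM0.le
      have e2 : M * 1 ≤ M * (((Z \ W) \ Y₀).card : ℝ) :=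
        mul_le_mul_of_nonneg_left hcard1 hM0.le
      linarith [hB]
    · obtain ⟨a, haW, haZ⟩ := Finset.not_subset.mp hWZ
      have hss : Z ∩ W ⊂ W := by
        refine (Finset.ssubset_iff_of_subset Finset.inter_subset_right).mpr
          ⟨a, haW, fun h => haZ (Finset.mem_inter.mp h).1⟩
      have hcard2 : ((Z ∩ W).card : ℝ) ≤ (W.card : ℝ) - 1 := by
        have h := Finset.card_lt_card hss
        have h2 : (Z ∩ W).card + 1 ≤ W.card := h
        have h3 : ((Z ∩ W).card : ℝ) + 1 ≤ (W.card : ℝ) := by exact_mod_cast h2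
        linarith
      have hcard3 : (0:ℝ) ≤ (((Z \ W) \ Y₀).card : ℝ) := Nat.cast_nonneg _
      have e1 : M * ((Z ∩ W).card : ℝ) ≤ M * ((W.card : ℝ) - 1) :=
        mul_le_mul_of_nonneg_left hcard2 hM0.le
      have e2 : 0 ≤ M * (((Z \ W) \ Y₀).card : ℝ) := mul_nonneg hM0.le hcard3
      nlinarith [hB]
  have hup1 : g f p ≤ max (G₁ + ((M * K.card : ℝ) : WithBot ℝ))
      ((F + M * K.card - M + Q : ℝ) : WithBot ℝ) := by
    refine Finset.sup_le fun Z _ => ?_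
    by_cases hgood : K ⊆ Z ∧ Z ⊆ K ∪ Y₀
    · obtain ⟨hKZ, hZKY⟩ := hgood
      set J := Z \ K with hJdef
      have hJY₀ : J ⊆ Y₀ := by
        intro a ha
        obtain ⟨haZ, haK⟩ := Finset.mem_sdiff.mp ha
        rcases Finset.mem_union.mp (hZKY haZ) with h | h
        · exact absurd h haK
        · exact h
      have hZeq : K ∪ J = Z := Finset.union_sdiff_of_subset hKZ
      have hsumK : ∑ e ∈ K, p e = -(M * K.card) := by
        have hpt : ∀ e ∈ K, p e = -M := fun e he => by simp [hpdef, he]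
        calc ∑ e ∈ K, p e = ∑ _e ∈ K, (-M) := Finset.sum_congr rfl hpt
          _ = K.card • (-M) := Finset.sum_const _
          _ = -(M * K.card) := by rw [nsmul_eq_mul]; ring
      have hsumJ : ∑ e ∈ J, p e = ∑ j ∈ J, q j := by
        refine Finset.sum_congr rfl fun e he => ?_
        have heY := hJY₀ he
        have heK : e ∉ K := (Finset.mem_sdiff.mp he).2
        simp [hpdef, heK, heY]
      have hsumZ : ∑ e ∈ Z, p e = -(M * K.card) + ∑ j ∈ J, q j := by
        rw [← hZeq, Finset.sum_union Finset.disjoint_sdiff, hsumK, hsumJ]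
      have hterm : f Z + ((-(∑ e ∈ Z, p e) : ℝ) : WithBot ℝ)
          = (f (K ∪ J) + ((-(∑ j ∈ J, q j) : ℝ) : WithBot ℝ)) + ((M * K.card : ℝ) : WithBot ℝ) := by
        rw [hsumZ, ← hZeq]
        have hc : (-((-(M * K.card)) + ∑ j ∈ J, q j)) = (-(∑ j ∈ J, q j)) + M * K.card := by ring
        rw [hc, WithBot.coe_add, ← add_assoc]
      rw [hterm]
      have hle : f (K ∪ J) + ((-(∑ j ∈ J, q j) : ℝ) : WithBot ℝ) ≤ G₁ := by
        rw [hG₁def]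
        exact Finset.le_sup (f := fun J => f (K ∪ J) + ((-(∑ j ∈ J, q j) : ℝ) : WithBot ℝ))
          (Finset.mem_powerset.mpr hJY₀)
      exact le_trans (add_le_add_left hle _) (le_max_left _ _)
    · refine le_trans ?_ (le_max_right _ _)
      have hbound : -(∑ e ∈ Z, p e) ≤ M * K.card - M + Q := by
        refine hbadbound K p (fun e he => by simp [hpdef, he])
          (fun e heK heY => by simp [hpdef, heK, heY])
          (fun e heK heY => by simp [hpdef, heK, heY]) Z hgood
      calc f Z + ((-(∑ e ∈ Z, p e) : ℝ) : WithBot ℝ)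
          ≤ ((F : ℝ) : WithBot ℝ) + ((M * K.card - M + Q : ℝ) : WithBot ℝ) :=
            add_le_add (hF Z) (WithBot.coe_le_coe.2 hbound)
        _ = ((F + M * K.card - M + Q : ℝ) : WithBot ℝ) := by
            rw [← WithBot.coe_add]
            exact WithBot.coe_inj.mpr (by ring)
  have hup2 : g f p' ≤ max (G₂ + ((M * Lt.card - qY : ℝ) : WithBot ℝ))
      ((F + M * Lt.card - M + Q : ℝ) : WithBot ℝ) := by
    refine Finset.sup_le fun Z _ => ?_
    by_cases hgood : Lt ⊆ Z ∧ Z ⊆ Lt ∪ Y₀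
    · obtain ⟨hLZ, hZLY⟩ := hgood
      set J' := Z \ Lt with hJ'def
      have hJ'Y₀ : J' ⊆ Y₀ := by
        intro a ha
        obtain ⟨haZ, haL⟩ := Finset.mem_sdiff.mp ha
        rcases Finset.mem_union.mp (hZLY haZ) with h | h
        · exact absurd h haL
        · exact h
      have hZeq : Lt ∪ J' = Z := Finset.union_sdiff_of_subset hLZ
      set Jc := Y₀ \ J' with hJcdef
      have hJcY₀ : Jc ⊆ Y₀ := Finset.sdiff_subset
      have hJcc : Y₀ \ Jc = J' := Finset.sdiff_sdiff_eq_self hJ'Y₀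
      have hsumL : ∑ e ∈ Lt, p' e = -(M * Lt.card) := by
        have hpt : ∀ e ∈ Lt, p' e = -M := fun e he => by simp [hp'def, he]
        calc ∑ e ∈ Lt, p' e = ∑ _e ∈ Lt, (-M) := Finset.sum_congr rfl hpt
          _ = Lt.card • (-M) := Finset.sum_const _
          _ = -(M * Lt.card) := by rw [nsmul_eq_mul]; ring
      have hsumJ' : ∑ e ∈ J', p' e = ∑ j ∈ J', q j := by
        refine Finset.sum_congr rfl fun e he => ?_
        have heY := hJ'Y₀ he
        have heL : e ∉ Lt := (Finset.mem_sdiff.mp he).2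
        simp [hp'def, heL, heY]
      have hsumZ : ∑ e ∈ Z, p' e = -(M * Lt.card) + ∑ j ∈ J', q j := by
        rw [← hZeq, Finset.sum_union Finset.disjoint_sdiff, hsumL, hsumJ']
      have hsumJc : ∑ j ∈ Jc, q j = qY - ∑ j ∈ J', q j := by
        have h := Finset.sum_sdiff (f := q) hJ'Y₀
        rw [hJcdef, hqYdef]
        linarith
      have hterm : f Z + ((-(∑ e ∈ Z, p' e) : ℝ) : WithBot ℝ)
          = (f (Lt ∪ (Y₀ \ Jc)) + (((∑ j ∈ Jc, q j : ℝ)) : WithBot ℝ))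
            + ((M * Lt.card - qY : ℝ) : WithBot ℝ) := by
        rw [hsumZ, hJcc, ← hZeq, hsumJc]
        have hc : (-((-(M * Lt.card)) + ∑ j ∈ J', q j))
            = (qY - ∑ j ∈ J', q j) + (M * Lt.card - qY) := by ring
        rw [hc, WithBot.coe_add, ← add_assoc]
      rw [hterm]
      have hle : f (Lt ∪ (Y₀ \ Jc)) + (((∑ j ∈ Jc, q j : ℝ)) : WithBot ℝ) ≤ G₂ := by
        rw [hG₂def]
        exact Finset.le_sup
          (f := fun J => f (Lt ∪ (Y₀ \ J)) + (((∑ j ∈ J, q j : ℝ)) : WithBot ℝ))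
          (Finset.mem_powerset.mpr hJcY₀)
      exact le_trans (add_le_add_left hle _) (le_max_left _ _)
    · refine le_trans ?_ (le_max_right _ _)
      have hbound : -(∑ e ∈ Z, p' e) ≤ M * Lt.card - M + Q := by
        refine hbadbound Lt p' (fun e he => by simp [hp'def, he])
          (fun e heL heY => by simp [hp'def, heL, heY])
          (fun e heL heY => by simp [hp'def, heL, heY]) Z hgood
      calc f Z + ((-(∑ e ∈ Z, p' e) : ℝ) : WithBot ℝ)
          ≤ ((F : ℝ) : WithBot ℝ) + ((M * Lt.card - M + Q : ℝ) : WithBot ℝ) :=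
            add_le_add (hF Z) (WithBot.coe_le_coe.2 hbound)
        _ = ((F + M * Lt.card - M + Q : ℝ) : WithBot ℝ) := by
            rw [← WithBot.coe_add]
            exact WithBot.coe_inj.mpr (by ring)
  have hG1top : G₁ ≤ ((F + Q : ℝ) : WithBot ℝ) := by
    rw [hG₁def]
    refine Finset.sup_le fun J hJ => ?_
    have hJY₀ : J ⊆ Y₀ := Finset.mem_powerset.mp hJ
    have hq : -∑ j ∈ J, q j ≤ Q := by
      have h0 : -∑ j ∈ J, q j = ∑ j ∈ J, -q j := (Finset.sum_neg_distrib _).symm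
      have h1 : ∑ j ∈ J, -q j ≤ ∑ j ∈ J, |q j| := Finset.sum_le_sum fun j _ => neg_le_abs _
      have h2 : ∑ j ∈ J, |q j| ≤ Q := by
        rw [hQdef]
        exact Finset.sum_le_sum_of_subset_of_nonneg hJY₀ fun j _ _ => abs_nonneg _
      linarith [h0, h1, h2]
    calc f (K ∪ J) + ((-(∑ j ∈ J, q j) : ℝ) : WithBot ℝ)
        ≤ ((F : ℝ) : WithBot ℝ) + ((Q : ℝ) : WithBot ℝ) :=
          add_le_add (hF _) (WithBot.coe_le_coe.2 hq)
      _ = ((F + Q : ℝ) : WithBot ℝ) := (WithBot.coe_add F Q).symm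
  have hG2top : G₂ ≤ ((F + Q : ℝ) : WithBot ℝ) := by
    rw [hG₂def]
    refine Finset.sup_le fun J hJ => ?_
    have hJY₀ : J ⊆ Y₀ := Finset.mem_powerset.mp hJ
    have hq : ∑ j ∈ J, q j ≤ Q := by
      have h1 : ∑ j ∈ J, q j ≤ ∑ j ∈ J, |q j| := Finset.sum_le_sum fun j _ => le_abs_self _
      have h2 : ∑ j ∈ J, |q j| ≤ Q := by
        rw [hQdef]
        exact Finset.sum_le_sum_of_subset_of_nonneg hJY₀ fun j _ _ => abs_nonneg _
      linarith
    calc f (Lt ∪ (Y₀ \ J)) + (((∑ j ∈ J, q j : ℝ)) : WithBot ℝ)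
        ≤ ((F : ℝ) : WithBot ℝ) + ((Q : ℝ) : WithBot ℝ) :=
          add_le_add (hF _) (WithBot.coe_le_coe.2 hq)
      _ = ((F + Q : ℝ) : WithBot ℝ) := (WithBot.coe_add F Q).symm
  have hcard : (K.card : ℝ) + (Lt.card : ℝ) = (X.card : ℝ) + (C.card : ℝ) := by
    have hIX : I ⊆ X := fun a ha => (hIa a ha).1
    have h1 : (X \ I).card + I.card = X.card := Finset.card_sdiff_add_card_eq_card hIX
    have hdisj : Disjoint I C := by
      rw [Finset.disjoint_left]
      intro a haI haC
      exact (hIa a haI).2 (Finset.mem_inter.mp (hCdef ▸ haC)).2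
    have h2 : Lt.card = I.card + C.card := by
      have : Lt = I ∪ C := by rw [hLtdef, hCdef]
      rw [this, Finset.card_union_of_disjoint hdisj]
    have h1' : ((X \ I).card : ℝ) + (I.card : ℝ) = (X.card : ℝ) := by exact_mod_cast h1
    have h2' : (Lt.card : ℝ) = (I.card : ℝ) + (C.card : ℝ) := by exact_mod_cast h2
    rw [hKeq]
    linarith
  have hMcard : M * (K.card : ℝ) + M * (Lt.card : ℝ) = M * (X.card : ℝ) + M * (C.card : ℝ) := by
    rw [← mul_add, ← mul_add, hcard]
  -- submodularity
  have hsubm := submod f hne hf (univ : Finset N) p p' (fun a ha => absurd (mem_univ a) ha)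
  have hsubW : g f (fun e => max (p e) (p' e)) + g f (fun e => min (p e) (p' e))
      ≤ g f p + g f p' := by
    rw [g_eq_gr f hne, g_eq_gr f hne, g_eq_gr f hne, g_eq_gr f hne, ← WithBot.coe_add,
      ← WithBot.coe_add, WithBot.coe_le_coe]
    exact hsubm
  -- the chain
  have hchain : ((x + y + (M * X.card + (M * C.card - qY)) : ℝ) : WithBot ℝ)
      ≤ max (G₁ + ((M * K.card : ℝ) : WithBot ℝ)) ((F + M * K.card - M + Q : ℝ) : WithBot ℝ)
        + max (G₂ + ((M * Lt.card - qY : ℝ) : WithBot ℝ))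
            ((F + M * Lt.card - M + Q : ℝ) : WithBot ℝ) := by
    calc ((x + y + (M * X.card + (M * C.card - qY)) : ℝ) : WithBot ℝ)
        = (((x : ℝ) : WithBot ℝ) + ((M * X.card : ℝ) : WithBot ℝ))
          + (((y : ℝ) : WithBot ℝ) + ((M * C.card - qY : ℝ) : WithBot ℝ)) := by
          rw [comb, ← WithBot.coe_add]
          exact WithBot.coe_inj.mpr (by ring)
      _ ≤ g f (fun e => min (p e) (p' e)) + g f (fun e => max (p e) (p' e)) :=
          add_le_add hlow1 hlow2
      _ = g f (fun e => max (p e) (p' e)) + g f (fun e => min (p e) (p' e)) := add_comm _ _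
      _ ≤ g f p + g f p' := hsubW
      _ ≤ _ := add_le_add hup1 hup2
  rw [hx, hy]
  rcases max_choice (G₁ + ((M * K.card : ℝ) : WithBot ℝ))
      ((F + M * K.card - M + Q : ℝ) : WithBot ℝ) with h1 | h1 <;>
    rcases max_choice (G₂ + ((M * Lt.card - qY : ℝ) : WithBot ℝ))
      ((F + M * Lt.card - M + Q : ℝ) : WithBot ℝ) with h2 | h2 <;>
    rw [h1, h2] at hchain
  · -- good, good
    rw [comb] at hchain
    have hconst : x + y + (M * X.card + (M * C.card - qY))
        = (x + y) + (M * K.card + (M * Lt.card - qY)) := by linarith [hMcard]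
    rw [hconst, WithBot.coe_add (x + y)] at hchain
    have := cancel_coe _ hchain
    rwa [← WithBot.coe_add] 
  · -- good, bad : contradiction
    exfalso
    have hle : ((x + y + (M * X.card + (M * C.card - qY)) : ℝ) : WithBot ℝ)
        ≤ (((F + Q) + (M * K.card + (F + M * Lt.card - M + Q)) : ℝ) : WithBot ℝ) := by
      calc ((x + y + (M * X.card + (M * C.card - qY)) : ℝ) : WithBot ℝ)
          ≤ (G₁ + ((M * K.card : ℝ) : WithBot ℝ)) + ((F + M * Lt.card - M + Q : ℝ) : WithBot ℝ) := hchain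
        _ ≤ (((F + Q : ℝ) : WithBot ℝ) + ((M * K.card : ℝ) : WithBot ℝ))
            + ((F + M * Lt.card - M + Q : ℝ) : WithBot ℝ) := by
            refine add_le_add (add_le_add_left hG1top _) le_rfl
        _ = _ := by
            rw [← WithBot.coe_add, ← WithBot.coe_add]
            try exact WithBot.coe_inj.mpr (by ring)
    have := WithBot.coe_le_coe.mp hle
    have h1 := le_abs_self qY
    have h2 := neg_abs_le x
    have h3 := neg_abs_le y
    have h4 := neg_abs_le qY
    linarith [hMcard, hMdef, this]
  · -- bad, good : contradiction
    exfalso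
    have hle : ((x + y + (M * X.card + (M * C.card - qY)) : ℝ) : WithBot ℝ)
        ≤ (((F + M * K.card - M + Q) + ((F + Q) + (M * Lt.card - qY)) : ℝ) : WithBot ℝ) := by
      calc ((x + y + (M * X.card + (M * C.card - qY)) : ℝ) : WithBot ℝ)
          ≤ ((F + M * K.card - M + Q : ℝ) : WithBot ℝ) + (G₂ + ((M * Lt.card - qY : ℝ) : WithBot ℝ)) := hchain
        _ ≤ ((F + M * K.card - M + Q : ℝ) : WithBot ℝ)
            + (((F + Q : ℝ) : WithBot ℝ) + ((M * Lt.card - qY : ℝ) : WithBot ℝ)) := by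
            refine add_le_add le_rfl (add_le_add_left hG2top _)
        _ = _ := by
            rw [← WithBot.coe_add, ← WithBot.coe_add]
            try exact WithBot.coe_inj.mpr (by ring)
    have := WithBot.coe_le_coe.mp hle
    have h1 := le_abs_self qY
    have h2 := neg_abs_le x
    have h3 := neg_abs_le y
    have h4 := neg_abs_le qY
    linarith [hMcard, hMdef, this]
  · -- bad, bad : contradiction
    exfalso
    rw [← WithBot.coe_add] at hchain
    have := WithBot.coe_le_coe.mp hchain
    have h1 := le_abs_self qY
    have h2 := neg_abs_le x
    have h3 := neg_abs_le y
    have h4 := neg_abs_le qY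
    linarith [hMcard, hMdef, this]
end

section
/- If a set function f : 2^N → ℝ ∪ {-∞} with dom f ≠ ∅ satisfies the strong no complementarities property (SNC), then it satisfies the simultaneous no complementarities property (NCsim). -/
open Finset

/-- Demand correspondence: the maximizers of `f(Z) - p(Z)` over all `Z ⊆ N`. -/
def Demand {N : Type*} (f : Finset N → WithBot ℝ) (p : N → ℝ) : Set (Finset N) :=
  {X | ∀ Z : Finset N, f Z + ((-(∑ i ∈ Z, p i) : ℝ) : WithBot ℝ)
        ≤ f X + ((-(∑ i ∈ X, p i) : ℝ) : WithBot ℝ)}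

/-- (SNC): strong no complementarities property. -/
def SNC {N : Type*} [DecidableEq N] (f : Finset N → WithBot ℝ) : Prop :=
  ∀ X Y : Finset N, ∀ I ⊆ X \ Y, ∃ J ⊆ Y \ X,
    f X + f Y ≤ f ((X \ I) ∪ J) + f ((Y \ J) ∪ I)

/-- (NCsim): simultaneous no complementarities property. -/
def NCsim {N : Type*} [DecidableEq N] (f : Finset N → WithBot ℝ) : Prop :=
  ∀ p : N → ℝ, ∀ X ∈ Demand f p, ∀ Y ∈ Demand f p, ∀ I ⊆ X \ Y,
    ∃ J ⊆ Y \ X, (X \ I) ∪ J ∈ Demand f p ∧ (Y \ J) ∪ I ∈ Demand f p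

theorem snc_implies_ncsim {N : Type*} [Fintype N] [DecidableEq N]
    (f : Finset N → WithBot ℝ) (hdom : ∃ X, f X ≠ ⊥) (hf : SNC f) :
    NCsim f := by
  intro p X hX Y hY I hI
  obtain ⟨X0, hX0⟩ := hdom
  have hne : ∀ Z ∈ Demand f p, f Z ≠ ⊥ := by
    intro Z hZ hbot
    have h1 := hZ X0
    rw [hbot, WithBot.bot_add, le_bot_iff, WithBot.add_eq_bot] at h1
    rcases h1 with h | h
    · exact hX0 h
    · exact WithBot.coe_ne_bot h
  obtain ⟨x, hx⟩ := WithBot.ne_bot_iff_exists.mp (hne X hX)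
  obtain ⟨y, hy⟩ := WithBot.ne_bot_iff_exists.mp (hne Y hY)
  obtain ⟨J, hJ, hSNC⟩ := hf X Y I hI
  refine ⟨J, hJ, ?_⟩
  set X' := (X \ I) ∪ J with hX'def
  set Y' := (Y \ J) ∪ I with hY'def
  have hfX' : f X' ≠ ⊥ := by
    intro h
    rw [h, WithBot.bot_add, le_bot_iff, WithBot.add_eq_bot] at hSNC
    rcases hSNC with h | h
    · exact hne X hX h
    · exact hne Y hY h
  have hfY' : f Y' ≠ ⊥ := by
    intro h
    rw [h, WithBot.add_bot, le_bot_iff, WithBot.add_eq_bot] at hSNC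
    rcases hSNC with h | h
    · exact hne X hX h
    · exact hne Y hY h
  obtain ⟨x', hx'⟩ := WithBot.ne_bot_iff_exists.mp hfX'
  obtain ⟨y', hy'⟩ := WithBot.ne_bot_iff_exists.mp hfY'
  -- price sum identity
  have hIX : I ⊆ X := hI.trans (sdiff_subset)
  have hJY : J ⊆ Y := hJ.trans (sdiff_subset)
  have hd1 : Disjoint (X \ I) J := disjoint_sdiff.mono sdiff_subset hJ
  have hd2 : Disjoint (Y \ J) I := disjoint_sdiff.mono sdiff_subset hI
  have hsum : (∑ i ∈ X', p i) + (∑ i ∈ Y', p i) = (∑ i ∈ X, p i) + (∑ i ∈ Y, p i) := by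
    rw [hX'def, hY'def, Finset.sum_union hd1, Finset.sum_union hd2,
      Finset.sum_sdiff_eq_sub hIX, Finset.sum_sdiff_eq_sub hJY]
    ring
  -- real number inequalities
  have hsnc' : x + y ≤ x' + y' := by
    rw [← hx, ← hy, ← hx', ← hy', ← WithBot.coe_add, ← WithBot.coe_add,
      WithBot.coe_le_coe] at hSNC
    exact hSNC
  have h1 : x' - ∑ i ∈ X', p i ≤ x - ∑ i ∈ X, p i := by
    have := hX X'
    rw [← hx, ← hx', ← WithBot.coe_add, ← WithBot.coe_add, WithBot.coe_le_coe] at this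
    linarith
  have h2 : y' - ∑ i ∈ Y', p i ≤ y - ∑ i ∈ Y, p i := by
    have := hY Y'
    rw [← hy, ← hy', ← WithBot.coe_add, ← WithBot.coe_add, WithBot.coe_le_coe] at this
    linarith
  have hXY : x - ∑ i ∈ X, p i = y - ∑ i ∈ Y, p i := by
    have h3 := hX Y
    have h4 := hY X
    rw [← hx, ← hy, ← WithBot.coe_add, ← WithBot.coe_add, WithBot.coe_le_coe] at h3 h4
    linarith
  have e1 : x' - ∑ i ∈ X', p i = x - ∑ i ∈ X, p i := by linarith
  have e2 : y' - ∑ i ∈ Y', p i = y - ∑ i ∈ Y, p i := by linarith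
  constructor
  · intro Z
    calc f Z + ((-(∑ i ∈ Z, p i) : ℝ) : WithBot ℝ)
        ≤ f X + ((-(∑ i ∈ X, p i) : ℝ) : WithBot ℝ) := hX Z
      _ = f X' + ((-(∑ i ∈ X', p i) : ℝ) : WithBot ℝ) := by
          rw [← hx, ← hx', ← WithBot.coe_add, ← WithBot.coe_add, WithBot.coe_inj]
          linarith
  · intro Z
    calc f Z + ((-(∑ i ∈ Z, p i) : ℝ) : WithBot ℝ)
        ≤ f Y + ((-(∑ i ∈ Y, p i) : ℝ) : WithBot ℝ) := hY Z
      _ = f Y' + ((-(∑ i ∈ Y', p i) : ℝ) : WithBot ℝ) := by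
          rw [← hy, ← hy', ← WithBot.coe_add, ← WithBot.coe_add, WithBot.coe_inj]
          linarith
end

section
/- For a set family F ⊆ 2^N on a finite set N, the multiple exchange property (B♮-EXC_m) implies the exchange property (B♮-EXC). -/
open Finset

/-- (B♮-EXC_m): multiple exchange property for set families. -/
def BExcM {N : Type*} [DecidableEq N] (F : Set (Finset N)) : Prop :=
  ∀ X ∈ F, ∀ Y ∈ F, ∀ I ⊆ X \ Y, ∃ J ⊆ Y \ X,
    (X \ I) ∪ J ∈ F ∧ (Y \ J) ∪ I ∈ F

/-- (B♮-EXC): exchange property for set families. -/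
def BExc {N : Type*} [DecidableEq N] (F : Set (Finset N)) : Prop :=
  ∀ X ∈ F, ∀ Y ∈ F, ∀ i ∈ X \ Y,
    (X.erase i ∈ F ∧ insert i Y ∈ F) ∨
      ∃ j ∈ Y \ X, insert j (X.erase i) ∈ F ∧ (insert i Y).erase j ∈ F

lemma bexcm_aux {N : Type*} [DecidableEq N]
    (F : Set (Finset N)) (hF : BExcM F) :
    ∀ n : ℕ, ∀ X ∈ F, ∀ Y ∈ F, ∀ i ∈ X \ Y, (Y \ X).card ≤ n →
      (X.erase i ∈ F ∧ insert i Y ∈ F) ∨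
        ∃ j ∈ Y \ X, insert j (X.erase i) ∈ F ∧ (insert i Y).erase j ∈ F := by
  intro n
  induction n with
  | zero =>
    intro X hX Y hY i hi hcard
    obtain ⟨J, hJsub, hP, hQ⟩ := hF X hX Y hY {i} (Finset.singleton_subset_iff.mpr hi)
    have hYX : Y \ X = ∅ := Finset.card_eq_zero.mp (Nat.le_zero.mp hcard)
    rw [hYX, Finset.subset_empty] at hJsub
    subst hJsub
    rw [Finset.mem_sdiff] at hi
    left
    constructor
    · rw [Finset.erase_eq]; simpa using hP
    · have e : insert i Y = (Y \ (∅ : Finset N)) ∪ {i} := by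
        ext x; simp [or_comm]
      rw [e]; exact hQ
  | succ n ihn =>
    intro X hX Y hY i hi hcard
    rw [Finset.mem_sdiff] at hi
    obtain ⟨hiX, hiY⟩ := hi
    by_contra hcon
    push_neg at hcon
    obtain ⟨h1, h2⟩ := hcon
    have inner : ∀ J : Finset N, J ⊆ Y \ X →
        (X \ {i}) ∪ J ∈ F → (Y \ J) ∪ {i} ∈ F → False := by
      intro J
      induction J using Finset.strongInductionOn with
      | _ J ih =>
      intro hJsub hP hQ
      rcases J.eq_empty_or_nonempty with rfl | ⟨j, hj⟩
      · refine h1 ?_ ?_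
        · rw [Finset.erase_eq]; simpa using hP
        · have e : insert i Y = (Y \ (∅ : Finset N)) ∪ {i} := by
            ext x; simp [or_comm]
          rw [e]; exact hQ
      · obtain ⟨hjY, hjX⟩ := Finset.mem_sdiff.mp (hJsub hj)
        have hij : i ≠ j := fun h => hiY (by rw [h]; exact hjY)
        have hjYX : j ∈ Y \ X := Finset.mem_sdiff.mpr ⟨hjY, hjX⟩
        have hJX : ∀ x, x ∈ J → x ∉ X := fun x hx => (Finset.mem_sdiff.mp (hJsub hx)).2
        have hJY : ∀ x, x ∈ J → x ∈ Y := fun x hx => (Finset.mem_sdiff.mp (hJsub hx)).1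
        have hiJ : i ∉ J := fun h => hiY (hJY i h)
        -- first application : to (P, X) with I = J.erase j
        have hs1 : J.erase j ⊆ ((X \ {i}) ∪ J) \ X := by
          intro x hx
          have hxJ := Finset.mem_of_mem_erase hx
          simp only [Finset.mem_sdiff, Finset.mem_union]
          exact ⟨Or.inr hxJ, hJX x hxJ⟩
        obtain ⟨J7, hJ7sub, hO1, hO2⟩ := hF _ hP X hX (J.erase j) hs1
        have hJ7 : J7 ⊆ {i} := by
          refine hJ7sub.trans ?_
          intro x hx
          rw [Finset.mem_sdiff] at hx
          obtain ⟨hxX, hxP⟩ := hx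
          rw [Finset.mem_singleton]
          by_contra hne
          exact hxP (Finset.mem_union_left _
            (Finset.mem_sdiff.mpr ⟨hxX, fun h => hne (Finset.mem_singleton.mp h)⟩))
        -- second application : to (Y, Q) with I = J.erase j
        have hs2 : J.erase j ⊆ Y \ ((Y \ J) ∪ {i}) := by
          intro x hx
          have hxJ := Finset.mem_of_mem_erase hx
          simp only [Finset.mem_sdiff, Finset.mem_union, Finset.mem_singleton, not_or]
          refine ⟨hJY x hxJ, ⟨?_, ?_⟩⟩
          · simp only [Finset.mem_sdiff, not_and, not_not]
            intro _; exact hxJ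
          · intro h; exact hiJ (h ▸ hxJ)
        obtain ⟨J8, hJ8sub, hU1, hU2⟩ := hF Y hY _ hQ (J.erase j) hs2
        have hJ8 : J8 ⊆ {i} := by
          refine hJ8sub.trans ?_
          intro x hx
          rw [Finset.mem_sdiff] at hx
          obtain ⟨hxQ, hxY⟩ := hx
          rcases Finset.mem_union.mp hxQ with h | h
          · exact absurd (Finset.mem_sdiff.mp h).1 hxY
          · exact h
        -- the four cases
        have A1 : ((X \ {i}) ∪ J) \ (J.erase j) = insert j (X.erase i) := by
          ext x
          have f1 : x ∈ J → x ∉ X := hJX x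
          have f2 : x = j → x ∈ J := fun h => h ▸ hj
          simp only [Finset.mem_sdiff, Finset.mem_union, Finset.mem_singleton,
            Finset.mem_erase, Finset.mem_insert, not_and]
          constructor
          · rintro ⟨hx1 | hx2, hx3⟩
            · exact Or.inr ⟨hx1.2, hx1.1⟩
            · left; by_contra hne; exact hx3 hne hx2
          · rintro (rfl | ⟨hxi, hxX⟩)
            · exact ⟨Or.inr hj, fun h => absurd rfl h⟩
            · exact ⟨Or.inl ⟨hxX, hxi⟩, fun _ hxJ => f1 hxJ hxX⟩
        have A2 : (((X \ {i}) ∪ J) \ (J.erase j)) ∪ {i} = insert j X := by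
          rw [A1]
          ext x
          simp only [Finset.mem_union, Finset.mem_insert, Finset.mem_erase,
            Finset.mem_singleton]
          constructor
          · rintro ((rfl | ⟨hxi, hxX⟩) | rfl)
            · exact Or.inl rfl
            · exact Or.inr hxX
            · exact Or.inr hiX
          · rintro (rfl | hxX)
            · exact Or.inl (Or.inl rfl)
            · by_cases hxi : x = i
              · exact Or.inr hxi
              · exact Or.inl (Or.inr ⟨hxi, hxX⟩)
        have A3 : (((Y \ J) ∪ {i})) ∪ J.erase j = (insert i Y).erase j := by
          ext x
          have f1 : x ∈ J → x ∈ Y := hJY x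
          simp only [Finset.mem_union, Finset.mem_sdiff, Finset.mem_singleton,
            Finset.mem_erase, Finset.mem_insert]
          constructor
          · rintro ((⟨hxY, hxJ⟩ | rfl) | ⟨hxj, hxJ⟩)
            · exact ⟨fun h => hxJ (by rw [h]; exact hj), Or.inr hxY⟩
            · exact ⟨hij, Or.inl rfl⟩
            · exact ⟨hxj, Or.inr (f1 hxJ)⟩
          · rintro ⟨hxj, rfl | hxY⟩
            · exact Or.inl (Or.inr rfl)
            · by_cases hxJ : x ∈ J
              · exact Or.inr ⟨hxj, hxJ⟩
              · exact Or.inl (Or.inl ⟨hxY, hxJ⟩)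
        have A4 : (((Y \ J) ∪ {i}) \ {i}) ∪ J.erase j = Y.erase j := by
          ext x
          have f1 : x ∈ J → x ∈ Y := hJY x
          simp only [Finset.mem_union, Finset.mem_sdiff, Finset.mem_singleton,
            Finset.mem_erase]
          constructor
          · rintro (⟨⟨hxY, hxJ⟩ | rfl, hxi⟩ | ⟨hxj, hxJ⟩)
            · exact ⟨fun h => hxJ (by rw [h]; exact hj), hxY⟩
            · exact absurd rfl hxi
            · exact ⟨hxj, f1 hxJ⟩
          · rintro ⟨hxj, hxY⟩
            by_cases hxJ : x ∈ J
            · exact Or.inr ⟨hxj, hxJ⟩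
            · exact Or.inl ⟨Or.inl ⟨hxY, hxJ⟩, fun h => hiY (h ▸ hxY)⟩
        rcases Finset.subset_singleton_iff.mp hJ7 with h7 | h7 <;>
          rcases Finset.subset_singleton_iff.mp hJ8 with h8 | h8
        · -- a1 ∧ b1 : exchange with j works, contradiction with h2
          rw [h7, Finset.union_empty, A1] at hO1
          rw [h8, Finset.sdiff_empty, A3] at hU2
          exact h2 j hjYX hO1 hU2
        · -- a1 ∧ b2 : use outer induction on (X, Y.erase j)
          rw [h7, Finset.union_empty, A1] at hO1
          rw [h8, A4] at hU2
          have ecard : (Y.erase j) \ X = (Y \ X).erase j := by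
            ext x
            simp only [Finset.mem_sdiff, Finset.mem_erase]
            tauto
          have hcard' : ((Y.erase j) \ X).card ≤ n := by
            rw [ecard, Finset.card_erase_of_mem hjYX]
            omega
          have hmem : i ∈ X \ (Y.erase j) := by
            simp only [Finset.mem_sdiff, Finset.mem_erase]
            exact ⟨hiX, fun h => hiY h.2⟩
          rcases ihn X hX (Y.erase j) hU2 i hmem hcard' with ⟨hA, hB⟩ | ⟨j', hj', hA', hB'⟩
          · have e2 : (insert i Y).erase j = insert i (Y.erase j) := by
              ext x
              simp only [Finset.mem_erase, Finset.mem_insert]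
              constructor
              · rintro ⟨hxj, rfl | hxY⟩
                · exact Or.inl rfl
                · exact Or.inr ⟨hxj, hxY⟩
              · rintro (rfl | ⟨hxj, hxY⟩)
                · exact ⟨hij, Or.inl rfl⟩
                · exact ⟨hxj, Or.inr hxY⟩
            refine h2 j hjYX hO1 ?_
            rw [e2]; exact hB
          · obtain ⟨hj'e, hj'X⟩ := Finset.mem_sdiff.mp hj'
            obtain ⟨hj'j, hj'Y⟩ := Finset.mem_erase.mp hj'e
            have hij' : i ≠ j' := fun h => hiY (h ▸ hj'Y)
            have hj'YX : j' ∈ Y \ X := Finset.mem_sdiff.mpr ⟨hj'Y, hj'X⟩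
            -- third application : to (Y, B) with I = {j}
            have hsB : ({j} : Finset N) ⊆ Y \ ((insert i (Y.erase j)).erase j') := by
              rw [Finset.singleton_subset_iff, Finset.mem_sdiff]
              refine ⟨hjY, ?_⟩
              rw [Finset.mem_erase]
              rintro ⟨-, hjm⟩
              rcases Finset.mem_insert.mp hjm with h | h
              · exact hij h.symm
              · exact (Finset.mem_erase.mp h).1 rfl
            obtain ⟨J9, hJ9sub, hV1, hV2⟩ := hF Y hY _ hB' {j} hsB
            have hJ9 : J9 ⊆ {i} := by
              refine hJ9sub.trans ?_
              intro x hx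
              rw [Finset.mem_sdiff] at hx
              obtain ⟨hxB, hxY⟩ := hx
              have := Finset.mem_of_mem_erase hxB
              rcases Finset.mem_insert.mp this with rfl | hxe
              · exact Finset.mem_singleton_self x
              · exact absurd (Finset.mem_of_mem_erase hxe) hxY
            rcases Finset.subset_singleton_iff.mp hJ9 with h9 | h9
            · rw [h9, Finset.sdiff_empty] at hV2
              have e3 : ((insert i (Y.erase j)).erase j') ∪ {j} = (insert i Y).erase j' := by
                ext x
                simp only [Finset.mem_union, Finset.mem_erase, Finset.mem_insert,
                  Finset.mem_singleton]
                constructor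
                · rintro (⟨hxj', rfl | ⟨hxj, hxY⟩⟩ | rfl)
                  · exact ⟨hxj', Or.inl rfl⟩
                  · exact ⟨hxj', Or.inr hxY⟩
                  · exact ⟨fun h => hj'j (h.symm), Or.inr hjY⟩
                · rintro ⟨hxj', rfl | hxY⟩
                  · exact Or.inl ⟨hxj', Or.inl rfl⟩
                  · by_cases hxj : x = j
                    · exact Or.inr hxj
                    · exact Or.inl ⟨hxj', Or.inr ⟨hxj, hxY⟩⟩
              refine h2 j' hj'YX hA' ?_
              rw [← e3]; exact hV2
            · rw [h9] at hV1
              have e4 : (Y \ {j}) ∪ {i} = (insert i Y).erase j := by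
                ext x
                simp only [Finset.mem_union, Finset.mem_sdiff, Finset.mem_singleton,
                  Finset.mem_erase, Finset.mem_insert]
                constructor
                · rintro (⟨hxY, hxj⟩ | rfl)
                  · exact ⟨hxj, Or.inr hxY⟩
                  · exact ⟨hij, Or.inl rfl⟩
                · rintro ⟨hxj, rfl | hxY⟩
                  · exact Or.inr rfl
                  · exact Or.inl ⟨hxY, hxj⟩
              refine h2 j hjYX hO1 ?_
              rw [← e4]; exact hV1
        · -- a2 ∧ b1 : use outer induction on (insert j X, Y)
          rw [h7, A2] at hO1
          rw [h8, Finset.sdiff_empty, A3] at hU2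
          have ecard : Y \ (insert j X) = (Y \ X).erase j := by
            ext x
            simp only [Finset.mem_sdiff, Finset.mem_insert, Finset.mem_erase, not_or]
            tauto
          have hcard' : (Y \ (insert j X)).card ≤ n := by
            rw [ecard, Finset.card_erase_of_mem hjYX]
            omega
          have hmem : i ∈ (insert j X) \ Y := by
            simp only [Finset.mem_sdiff, Finset.mem_insert]
            exact ⟨Or.inr hiX, hiY⟩
          rcases ihn (insert j X) hO1 Y hY i hmem hcard' with ⟨hA, hB⟩ | ⟨j', hj', hA', hB'⟩
          · have e5 : (insert j X).erase i = insert j (X.erase i) := by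
              ext x
              simp only [Finset.mem_erase, Finset.mem_insert]
              constructor
              · rintro ⟨hxi, rfl | hxX⟩
                · exact Or.inl rfl
                · exact Or.inr ⟨hxi, hxX⟩
              · rintro (rfl | ⟨hxi, hxX⟩)
                · exact ⟨Ne.symm hij, Or.inl rfl⟩
                · exact ⟨hxi, Or.inr hxX⟩
            refine h2 j hjYX ?_ hU2
            rw [← e5]; exact hA
          · obtain ⟨hj'Y, hj'ni⟩ := Finset.mem_sdiff.mp hj'
            rw [Finset.mem_insert, not_or] at hj'ni
            obtain ⟨hj'j, hj'X⟩ := hj'ni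
            have hij' : i ≠ j' := fun h => hiY (h ▸ hj'Y)
            have hj'YX : j' ∈ Y \ X := Finset.mem_sdiff.mpr ⟨hj'Y, hj'X⟩
            -- third application : to (A, X) with I = {j}
            have hsA : ({j} : Finset N) ⊆ (insert j' ((insert j X).erase i)) \ X := by
              rw [Finset.singleton_subset_iff, Finset.mem_sdiff]
              exact ⟨Finset.mem_insert_of_mem
                (Finset.mem_erase.mpr ⟨Ne.symm hij, Finset.mem_insert_self _ _⟩), hjX⟩
            obtain ⟨J10, hJ10sub, hW1, hW2⟩ := hF _ hA' X hX {j} hsA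
            have hJ10 : J10 ⊆ {i} := by
              refine hJ10sub.trans ?_
              intro x hx
              rw [Finset.mem_sdiff] at hx
              obtain ⟨hxX, hxA⟩ := hx
              rw [Finset.mem_singleton]
              by_contra hne
              exact hxA (Finset.mem_insert_of_mem
                (Finset.mem_erase.mpr ⟨hne, Finset.mem_insert_of_mem hxX⟩))
            rcases Finset.subset_singleton_iff.mp hJ10 with h10 | h10
            · rw [h10, Finset.union_empty] at hW1
              have e6 : (insert j' ((insert j X).erase i)) \ {j} = insert j' (X.erase i) := by
                ext x
                simp only [Finset.mem_sdiff, Finset.mem_insert, Finset.mem_erase,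
                  Finset.mem_singleton]
                constructor
                · rintro ⟨rfl | ⟨hxi, rfl | hxX⟩, hxj⟩
                  · exact Or.inl rfl
                  · exact absurd rfl hxj
                  · exact Or.inr ⟨hxi, hxX⟩
                · rintro (rfl | ⟨hxi, hxX⟩)
                  · exact ⟨Or.inl rfl, hj'j⟩
                  · exact ⟨Or.inr ⟨hxi, Or.inr hxX⟩, fun h => hjX (h ▸ hxX)⟩
              refine h2 j' hj'YX ?_ hB'
              rw [← e6]; exact hW1
            · rw [h10] at hW2
              have e7 : (X \ {i}) ∪ {j} = insert j (X.erase i) := by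
                ext x
                simp only [Finset.mem_union, Finset.mem_sdiff, Finset.mem_singleton,
                  Finset.mem_insert, Finset.mem_erase]
                tauto
              refine h2 j hjYX ?_ hU2
              rw [← e7]; exact hW2
        · -- a2 ∧ b2 : recurse with J.erase j
          rw [h7] at hO2
          rw [h8] at hU1
          have hO2' : (X \ {i}) ∪ J.erase j ∈ F := hO2
          exact ih (J.erase j) (Finset.erase_ssubset hj)
            ((Finset.erase_subset _ _).trans hJsub) hO2' hU1
    obtain ⟨J, hJsub, hP, hQ⟩ := hF X hX Y hY {i}
      (Finset.singleton_subset_iff.mpr (Finset.mem_sdiff.mpr ⟨hiX, hiY⟩))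
    exact inner J hJsub hP hQ

theorem bexcm_implies_bexc {N : Type*} [Fintype N] [DecidableEq N]
    (F : Set (Finset N)) (hF : BExcM F) : BExc F := by
  intro X hX Y hY i hi
  exact bexcm_aux F hF (Y \ X).card X hX Y hY i hi le_rfl
end

section
/- For a set family F ⊆ 2^N on a finite set N, the multiple exchange property (B♮-EXC_m) implies the one-sided exchange property (B♮-EXC±). -/
open Finset

/-- (B♮-EXC±): one-sided exchange property for set families. -/
def BExcPm {N : Type*} [DecidableEq N] (F : Set (Finset N)) : Prop :=
  ∀ X ∈ F, ∀ Y ∈ F, ∀ i ∈ X \ Y,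
    (X.erase i ∈ F ∨ ∃ j ∈ Y \ X, insert j (X.erase i) ∈ F) ∧
      (insert i Y ∈ F ∨ ∃ k ∈ Y \ X, (insert i Y).erase k ∈ F)

lemma aux_a {N : Type*} [DecidableEq N] {F : Set (Finset N)} (hF : BExcM F)
    {X Y : Finset N} (hX : X ∈ F) {i : N} (hiX : i ∈ X) (hiY : i ∉ Y) :
    ∀ n (J : Finset N), J.card ≤ n → J ⊆ Y \ X → (X \ {i}) ∪ J ∈ F →
      (X.erase i ∈ F ∨ ∃ j ∈ Y \ X, insert j (X.erase i) ∈ F) := by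
  intro n
  induction n with
  | zero =>
    intro J hcard hJ hXJ
    have : J = ∅ := Finset.card_eq_zero.mp (Nat.le_zero.mp hcard)
    subst this
    left; simpa [Finset.erase_eq] using hXJ
  | succ n ih =>
    intro J hcard hJ hXJ
    rcases J.eq_empty_or_nonempty with rfl | ⟨j, hjJ⟩
    · left; simpa [Finset.erase_eq] using hXJ
    · have hjYX : j ∈ Y \ X := hJ hjJ
      have hJX : ∀ a ∈ J, a ∉ X := fun a ha => (Finset.mem_sdiff.mp (hJ ha)).2
      have hiJ : i ∉ J := fun h => hJX i h hiX
      set X' := (X \ {i}) ∪ J with hX'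
      have hIsub : J \ {j} ⊆ X' \ X := by
        intro a ha
        rw [Finset.mem_sdiff] at ha ⊢
        exact ⟨Finset.mem_union_right _ ha.1, hJX a ha.1⟩
      obtain ⟨J', hJ', h1, h2⟩ := hF X' hXJ X hX (J \ {j}) hIsub
      have hJ'i : J' ⊆ {i} := by
        intro a ha
        have h := hJ' ha
        rw [Finset.mem_sdiff] at h
        simp only [hX', Finset.mem_union, Finset.mem_sdiff, Finset.mem_singleton,
          not_or, not_and, not_not] at h
        exact Finset.mem_singleton.mpr (h.2.1 h.1)
      rcases Finset.subset_singleton_iff.mp hJ'i with rfl | rfl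
      · -- J' = ∅ : X' \ (J \ {j}) = insert j (X.erase i) ∈ F
        right
        refine ⟨j, hjYX, ?_⟩
        have heq : (X' \ (J \ {j})) ∪ ∅ = insert j (X.erase i) := by
          ext a
          simp only [hX', Finset.union_empty, Finset.mem_sdiff, Finset.mem_union,
            Finset.mem_singleton, Finset.mem_insert, Finset.mem_erase, not_and]
          constructor
          · rintro ⟨h1 | h1, h2⟩
            · exact Or.inr ⟨h1.2, h1.1⟩
            · by_cases haj : a = j
              · exact Or.inl haj
              · exact absurd (h2 h1) (by simpa using haj)
          · rintro (rfl | ⟨hne, haX⟩)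
            · exact ⟨Or.inr hjJ, fun _ => by simp⟩
            · exact ⟨Or.inl ⟨haX, hne⟩, fun hc => absurd haX (hJX a hc)⟩
        rw [heq] at h1
        exact h1
      · -- J' = {i} : h2 : (X \ {i}) ∪ (J \ {j}) ∈ F, recurse
        have hcard' : (J \ {j}).card ≤ n := by
          rw [Finset.sdiff_singleton_eq_erase, Finset.card_erase_of_mem hjJ]
          omega
        exact ih (J \ {j}) hcard' (fun a ha => hJ (Finset.mem_sdiff.mp ha).1) h2

lemma aux_b {N : Type*} [DecidableEq N] {F : Set (Finset N)} (hF : BExcM F)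
    {X Y : Finset N} (hY : Y ∈ F) {i : N} (hiX : i ∈ X) (hiY : i ∉ Y) :
    ∀ n (J : Finset N), J.card ≤ n → J ⊆ Y \ X → (Y \ J) ∪ {i} ∈ F →
      (insert i Y ∈ F ∨ ∃ k ∈ Y \ X, (insert i Y).erase k ∈ F) := by
  intro n
  induction n with
  | zero =>
    intro J hcard hJ hYJ
    have : J = ∅ := Finset.card_eq_zero.mp (Nat.le_zero.mp hcard)
    subst this
    left
    have : (Y \ (∅ : Finset N)) ∪ {i} = insert i Y := by
      ext a; simp [or_comm]
    rwa [this] at hYJ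
  | succ n ih =>
    intro J hcard hJ hYJ
    rcases J.eq_empty_or_nonempty with rfl | ⟨k, hkJ⟩
    · left
      have : (Y \ (∅ : Finset N)) ∪ {i} = insert i Y := by
        ext a; simp [or_comm]
      rwa [this] at hYJ
    · have hkYX : k ∈ Y \ X := hJ hkJ
      have hJY : ∀ a ∈ J, a ∈ Y := fun a ha => (Finset.mem_sdiff.mp (hJ ha)).1
      have hiJ : i ∉ J := fun h => hiY (hJY i h)
      set Y' := (Y \ J) ∪ {i} with hY'
      have hIsub : J \ {k} ⊆ Y \ Y' := by
        intro a ha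
        rw [Finset.mem_sdiff] at ha ⊢
        refine ⟨hJY a ha.1, ?_⟩
        simp only [hY', Finset.mem_union, Finset.mem_sdiff, Finset.mem_singleton, not_or,
          not_and, not_not]
        exact ⟨fun _ => ha.1, fun hai => hiJ (hai ▸ ha.1)⟩
      obtain ⟨J', hJ', h1, h2⟩ := hF Y hY Y' hYJ (J \ {k}) hIsub
      have hJ'i : J' ⊆ {i} := by
        intro a ha
        have h := hJ' ha
        rw [Finset.mem_sdiff] at h
        simp only [hY', Finset.mem_union, Finset.mem_sdiff, Finset.mem_singleton] at h
        rcases h.1 with h' | h'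
        · exact absurd h'.1 h.2
        · exact Finset.mem_singleton.mpr h'
      rcases Finset.subset_singleton_iff.mp hJ'i with rfl | rfl
      · -- J' = ∅ : h2 : Y' ∪ (J \ {k}) = (insert i Y).erase k ∈ F
        right
        refine ⟨k, hkYX, ?_⟩
        have heq : (Y' \ ∅) ∪ (J \ {k}) = (insert i Y).erase k := by
          have hki : k ≠ i := fun h => hiY (h ▸ hJY k hkJ)
          ext a
          simp only [hY', Finset.sdiff_empty, Finset.mem_union, Finset.mem_sdiff,
            Finset.mem_singleton, Finset.mem_erase, Finset.mem_insert]
          constructor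
          · rintro ((⟨haY, haJ⟩ | rfl) | ⟨haJ, hak⟩)
            · exact ⟨fun h => haJ (h ▸ hkJ), Or.inr haY⟩
            · exact ⟨fun h => hki (h.symm), Or.inl rfl⟩
            · exact ⟨hak, Or.inr (hJY a haJ)⟩
          · rintro ⟨hak, rfl | haY⟩
            · exact Or.inl (Or.inr rfl)
            · by_cases haJ : a ∈ J
              · exact Or.inr ⟨haJ, hak⟩
              · exact Or.inl (Or.inl ⟨haY, haJ⟩)
        rw [heq] at h2
        exact h2
      · -- J' = {i} : h1 : (Y \ (J \ {k})) ∪ {i} ∈ F, recurse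
        have hcard' : (J \ {k}).card ≤ n := by
          rw [Finset.sdiff_singleton_eq_erase, Finset.card_erase_of_mem hkJ]
          omega
        exact ih (J \ {k}) hcard' (fun a ha => hJ (Finset.mem_sdiff.mp ha).1) h1

theorem bexcm_implies_bexcpm {N : Type*} [Fintype N] [DecidableEq N]
    (F : Set (Finset N)) (hF : BExcM F) : BExcPm F := by
  intro X hX Y hY i hi
  rw [Finset.mem_sdiff] at hi
  obtain ⟨hiX, hiY⟩ := hi
  have hIsub : ({i} : Finset N) ⊆ X \ Y := by
    simpa using Finset.mem_sdiff.mpr ⟨hiX, hiY⟩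
  obtain ⟨J, hJ, h1, h2⟩ := hF X hX Y hY {i} hIsub
  constructor
  · exact aux_a hF hX hiX hiY J.card J le_rfl hJ h1
  · exact aux_b hF hY hiX hiY J.card J le_rfl hJ h2
end

section
/- For a set family F ⊆ 2^N on a finite set N, the one-sided exchange property (B♮-EXC±) holds if and only if the exchange property (B♮-EXC) holds. -/
open Finset


namespace BexcAux

variable {N : Type*} [DecidableEq N]

/-- The coupled exchange conclusion for a triple. -/
def Exch (F : Set (Finset N)) (X Y : Finset N) (i : N) : Prop :=
  (X.erase i ∈ F ∧ insert i Y ∈ F) ∨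
    ∃ j ∈ Y \ X, insert j (X.erase i) ∈ F ∧ (insert i Y).erase j ∈ F

theorem bexc_to_bexcpm (F : Set (Finset N)) (h : BExc F) : BExcPm F := by
  intro X hX Y hY i hi
  rcases h X hX Y hY i hi with ⟨h1, h2⟩ | ⟨j, hj, h1, h2⟩
  · exact ⟨Or.inl h1, Or.inl h2⟩
  · exact ⟨Or.inr ⟨j, hj, h1⟩, Or.inr ⟨j, hj, h2⟩⟩

section Dual
variable [Fintype N]

theorem mem_compl_image (F : Set (Finset N)) (A : Finset N) :
    Aᶜ ∈ (fun s : Finset N => sᶜ) '' F ↔ A ∈ F := by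
  constructor
  · rintro ⟨B, hB, hBA⟩
    have : B = A := by
      have := congrArg (·ᶜ) hBA
      simpa using this
    exact this ▸ hB
  · intro hA
    exact ⟨A, hA, rfl⟩

theorem bexcpm_compl (F : Set (Finset N)) (h : BExcPm F) :
    BExcPm ((fun s : Finset N => sᶜ) '' F) := by
  rintro X' ⟨A, hA, rfl⟩ Y' ⟨B, hB, rfl⟩ i hi
  have hi' : i ∈ B \ A := by
    simp only [mem_sdiff, mem_compl] at hi
    simp only [mem_sdiff]
    tauto
  obtain ⟨ha, hb⟩ := h B hB A hA i hi'
  constructor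
  · rcases hb with h1 | ⟨k, hk, h1⟩
    · left
      rw [show (Aᶜ).erase i = (insert i A)ᶜ by rw [Finset.compl_insert]]
      rw [mem_compl_image]; exact h1
    · right
      refine ⟨k, ?_, ?_⟩
      · simp only [mem_sdiff] at hk
        simp only [mem_sdiff, mem_compl]
        tauto
      · rw [show insert k ((Aᶜ).erase i) = ((insert i A).erase k)ᶜ by
          simp [Finset.compl_erase, Finset.compl_insert]]
        rw [mem_compl_image]; exact h1
  · rcases ha with h1 | ⟨j, hj, h1⟩
    · left
      rw [show insert i (Bᶜ) = (B.erase i)ᶜ by rw [Finset.compl_erase]]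
      rw [mem_compl_image]; exact h1
    · right
      refine ⟨j, ?_, ?_⟩
      · simp only [mem_sdiff] at hj
        simp only [mem_sdiff, mem_compl]
        tauto
      · rw [show (insert i (Bᶜ)).erase j = (insert j (B.erase i))ᶜ by
          simp [Finset.compl_erase, Finset.compl_insert]]
        rw [mem_compl_image]; exact h1

end Dual

/-- In a putative counterexample with `insert i Y ∉ F`, no `insert p X` for
`p ∈ Y \ X` can belong to `F`. -/
theorem lem_plus (F : Set (Finset N)) {m : ℕ}
    (IH : ∀ X' Y', X' ∈ F → Y' ∈ F → ∀ i', i' ∈ X' \ Y' →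
      (X' \ Y').card + (Y' \ X').card < m → Exch F X' Y' i')
    (X Y : Finset N) (hX : X ∈ F) (hY : Y ∈ F) (i : N) (hi : i ∈ X \ Y)
    (hm : (X \ Y).card + (Y \ X).card = m)
    (hYi : insert i Y ∉ F)
    (H2 : ∀ j ∈ Y \ X, ¬(insert j (X.erase i) ∈ F ∧ (insert i Y).erase j ∈ F))
    (hm4 : 4 ≤ m) :
    ∀ p ∈ Y \ X, insert p X ∉ F := by
  obtain ⟨hiX, hiY⟩ := mem_sdiff.mp hi
  -- step: from `insert p X ∈ F` produce `u` with `insert u X ∈ F` and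
  -- `insert u (X.erase i) ∉ F`.
  have step : ∀ p ∈ Y \ X, insert p X ∈ F →
      ∃ u ∈ Y \ X, insert u X ∈ F ∧ insert u (X.erase i) ∉ F := by
    intro p hp hpX
    obtain ⟨hpY, hpnX⟩ := mem_sdiff.mp hp
    have hpi : p ≠ i := fun h => hpnX (h ▸ hiX)
    -- IH on (insert p X, Y, i)
    have hmem1 : i ∈ insert p X \ Y := mem_sdiff.mpr ⟨mem_insert_of_mem hiX, hiY⟩
    have hcard1 : ((insert p X) \ Y).card + (Y \ insert p X).card < m := by
      rw [insert_sdiff_of_mem _ hpY, sdiff_insert]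
      have := card_erase_of_mem (mem_sdiff.mpr ⟨hpY, hpnX⟩)
      have hYXpos : 0 < (Y \ X).card := card_pos.mpr ⟨p, hp⟩
      omega
    rcases IH (insert p X) Y hpX hY i hmem1 hcard1 with ⟨_, h⟩ | ⟨u, hu, h1, h2⟩
    · exact absurd h hYi
    · obtain ⟨huY, hunXp⟩ := mem_sdiff.mp hu
      have hunX : u ∉ X := fun h => hunXp (mem_insert_of_mem h)
      have hup : u ≠ p := fun h => hunXp (h ▸ mem_insert_self p X)
      have hui : u ≠ i := fun h => hunX (h ▸ hiX)
      have huYX : u ∈ Y \ X := mem_sdiff.mpr ⟨huY, hunX⟩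
      have hXu' : insert u (X.erase i) ∉ F := fun hc => H2 u huYX ⟨hc, h2⟩
      -- IH on (A, X, p), A := insert u ((insert p X).erase i)
      set A := insert u ((insert p X).erase i) with hA
      have hpA : p ∈ A \ X := mem_sdiff.mpr ⟨by simp [hA, hpi], hpnX⟩
      have hsub1 : A \ X ⊆ {p, u} := by
        intro a ha
        simp only [hA, mem_sdiff, mem_insert, mem_erase] at ha
        simp only [mem_insert, mem_singleton]
        rcases ha.1 with h | ⟨_, h | h⟩
        · exact Or.inr h
        · exact Or.inl h
        · exact absurd h ha.2
      have hsub2 : X \ A ⊆ {i} := by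
        intro a ha
        simp only [hA, mem_sdiff, mem_insert, mem_erase] at ha
        simp only [mem_singleton]
        by_contra hne
        exact ha.2 (Or.inr ⟨hne, Or.inr ha.1⟩)
      have hcard2 : (A \ X).card + (X \ A).card < m := by
        have c1 : (A \ X).card ≤ 2 := le_trans (card_le_card hsub1)
          (le_trans (card_insert_le _ _) (by simp))
        have c2 : (X \ A).card ≤ 1 := le_trans (card_le_card hsub2) (by simp)
        omega
      have hAerase : A.erase p = insert u (X.erase i) := by
        ext a
        simp only [hA, mem_erase, mem_insert]
        constructor
        · rintro ⟨hap, h | ⟨h1, h2⟩⟩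
          · exact Or.inl h
          · rcases h2 with rfl | h2
            · exact absurd rfl hap
            · exact Or.inr ⟨h1, h2⟩
        · rintro (rfl | ⟨h1, h2⟩)
          · exact ⟨hup, Or.inl rfl⟩
          · exact ⟨fun h => hpnX (h ▸ h2), Or.inr ⟨h1, Or.inr h2⟩⟩
      rcases IH A X h1 hX p hpA hcard2 with ⟨hc1, _⟩ | ⟨j, hj, hc1, _⟩
      · rw [hAerase] at hc1
        exact absurd hc1 hXu'
      · have hji : j = i := mem_singleton.mp (hsub2 hj)
        subst hji
        refine ⟨u, huYX, ?_, hXu'⟩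
        rwa [hAerase, Finset.insert_comm, insert_erase hiX] at hc1
  -- step2: from `insert u X ∈ F` with `insert u (X.erase i) ∉ F`, contradiction.
  have step2 : ∀ u ∈ Y \ X, insert u X ∈ F → insert u (X.erase i) ∉ F → False := by
    intro u hu huX hXu'
    obtain ⟨huY, hunX⟩ := mem_sdiff.mp hu
    have hui : u ≠ i := fun h => hunX (h ▸ hiX)
    have hmem1 : i ∈ insert u X \ Y := mem_sdiff.mpr ⟨mem_insert_of_mem hiX, hiY⟩
    have hcard1 : ((insert u X) \ Y).card + (Y \ insert u X).card < m := by
      rw [insert_sdiff_of_mem _ huY, sdiff_insert]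
      have := card_erase_of_mem (mem_sdiff.mpr ⟨huY, hunX⟩)
      have hYXpos : 0 < (Y \ X).card := card_pos.mpr ⟨u, hu⟩
      omega
    rcases IH (insert u X) Y huX hY i hmem1 hcard1 with ⟨_, h⟩ | ⟨v, hv, h1, h2⟩
    · exact absurd h hYi
    · obtain ⟨hvY, hvnXu⟩ := mem_sdiff.mp hv
      have hvnX : v ∉ X := fun h => hvnXu (mem_insert_of_mem h)
      have hvu : v ≠ u := fun h => hvnXu (h ▸ mem_insert_self u X)
      have hvi : v ≠ i := fun h => hvnX (h ▸ hiX)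
      have hvYX : v ∈ Y \ X := mem_sdiff.mpr ⟨hvY, hvnX⟩
      have hXv' : insert v (X.erase i) ∉ F := fun hc => H2 v hvYX ⟨hc, h2⟩
      set B := insert v ((insert u X).erase i) with hB
      have huB : u ∈ B \ X := mem_sdiff.mpr ⟨by simp [hB, hui], hunX⟩
      have hsub1 : B \ X ⊆ {u, v} := by
        intro a ha
        simp only [hB, mem_sdiff, mem_insert, mem_erase] at ha
        simp only [mem_insert, mem_singleton]
        rcases ha.1 with h | ⟨_, h | h⟩
        · exact Or.inr h
        · exact Or.inl h
        · exact absurd h ha.2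
      have hsub2 : X \ B ⊆ {i} := by
        intro a ha
        simp only [hB, mem_sdiff, mem_insert, mem_erase] at ha
        simp only [mem_singleton]
        by_contra hne
        exact ha.2 (Or.inr ⟨hne, Or.inr ha.1⟩)
      have hcard2 : (B \ X).card + (X \ B).card < m := by
        have c1 : (B \ X).card ≤ 2 := le_trans (card_le_card hsub1)
          (le_trans (card_insert_le _ _) (by simp))
        have c2 : (X \ B).card ≤ 1 := le_trans (card_le_card hsub2) (by simp)
        omega
      have hBerase : B.erase u = insert v (X.erase i) := by
        ext a
        simp only [hB, mem_erase, mem_insert]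
        constructor
        · rintro ⟨hau, h | ⟨h1, h2⟩⟩
          · exact Or.inl h
          · rcases h2 with rfl | h2
            · exact absurd rfl hau
            · exact Or.inr ⟨h1, h2⟩
        · rintro (rfl | ⟨h1, h2⟩)
          · exact ⟨hvu, Or.inl rfl⟩
          · exact ⟨fun h => hunX (h ▸ h2), Or.inr ⟨h1, Or.inr h2⟩⟩
      rcases IH B X h1 hX u huB hcard2 with ⟨hc1, _⟩ | ⟨j, hj, _, hc2⟩
      · rw [hBerase] at hc1
        exact absurd hc1 hXv'
      · have hji : j = i := mem_singleton.mp (hsub2 hj)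
        subst hji
        rw [erase_insert_of_ne hui] at hc2
        exact absurd hc2 hXu'
  intro p hp hpX
  obtain ⟨u, hu, huX, hXu'⟩ := step p hp hpX
  exact step2 u hu huX hXu'


theorem caseB (F : Set (Finset N)) {m : ℕ}
    (IH : ∀ X' Y', X' ∈ F → Y' ∈ F → ∀ i', i' ∈ X' \ Y' →
      (X' \ Y').card + (Y' \ X').card < m → Exch F X' Y' i')
    (hF : BExcPm F) (X Y : Finset N) (hX : X ∈ F) (hY : Y ∈ F) (i : N)
    (hi : i ∈ X \ Y)
    (hm : (X \ Y).card + (Y \ X).card = m)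
    (hXi : X.erase i ∈ F) (hYi : insert i Y ∉ F)
    (H2 : ∀ j ∈ Y \ X, ¬(insert j (X.erase i) ∈ F ∧ (insert i Y).erase j ∈ F)) :
    False := by
  obtain ⟨hiX, hiY⟩ := mem_sdiff.mp hi
  -- get k₀ from axiom (b)
  rcases (hF X hX Y hY i hi).2 with h | ⟨k₀, hk₀, hYk₀⟩
  · exact hYi h
  obtain ⟨hk₀Y, hk₀nX⟩ := mem_sdiff.mp hk₀
  have hk₀i : k₀ ≠ i := fun h => hk₀nX (h ▸ hiX)
  have hXk₀ : insert k₀ (X.erase i) ∉ F := fun h => H2 k₀ hk₀ ⟨h, hYk₀⟩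
  -- IH1 on (Y, X.erase i, k₀)
  have e1 : Y \ (X.erase i) = Y \ X := by
    ext a
    simp only [mem_sdiff, mem_erase, not_and]
    constructor
    · rintro ⟨h1, h2⟩
      exact ⟨h1, fun hX' => h2 (fun h => hiY (h ▸ h1)) hX'⟩
    · rintro ⟨h1, h2⟩
      exact ⟨h1, fun _ => h2⟩
  have hck₀ : k₀ ∈ Y \ (X.erase i) := by rw [e1]; exact hk₀
  have hcard1 : (Y \ X.erase i).card + (X.erase i \ Y).card < m := by
    rw [e1, erase_sdiff_comm, card_erase_of_mem hi]
    have : 0 < (X \ Y).card := card_pos.mpr ⟨i, hi⟩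
    omega
  rcases IH Y (X.erase i) hY hXi k₀ hck₀ hcard1 with ⟨_, h⟩ | ⟨w, hw, hC₁, hE₁⟩
  · exact hXk₀ h
  obtain ⟨hwXi, hwnY⟩ := mem_sdiff.mp hw
  obtain ⟨hwi, hwX⟩ := mem_erase.mp hwXi
  have hwXY : w ∈ X \ Y := mem_sdiff.mpr ⟨hwX, hwnY⟩
  have hk₀w : k₀ ≠ w := fun h => hk₀nX (h ▸ hwX)
  have c1 : 2 ≤ (X \ Y).card := one_lt_card.mpr ⟨i, hi, w, hwXY, fun h => hwi h.symm⟩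
  have c2 : 1 ≤ (Y \ X).card := card_pos.mpr ⟨k₀, hk₀⟩
  -- characterizations helper
  by_cases hm3 : m = 3
  · -- shape (2,1) bespoke
    have cardiw : ({i, w} : Finset N).card = 2 := by
      rw [card_insert_of_notMem (fun h => hwi (mem_singleton.mp h).symm), card_singleton]
    have hXY2 : (X \ Y).card = 2 := by omega
    have hYX1 : (Y \ X).card = 1 := by omega
    have eXY : X \ Y = {i, w} := by
      apply (eq_of_subset_of_card_le ?_ ?_).symm
      · intro a ha
        rcases mem_insert.mp ha with rfl | ha
        · exact hi
        · rw [mem_singleton] at ha; exact ha ▸ hwXY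
      · rw [cardiw, hXY2]
    have eYX : Y \ X = {k₀} := by
      apply (eq_of_subset_of_card_le ?_ ?_).symm
      · intro a ha
        rw [mem_singleton] at ha; exact ha ▸ hk₀
      · rw [card_singleton, hYX1]
    have hXc : ∀ a, a ∈ X ∧ a ∉ Y ↔ (a = i ∨ a = w) := by
      intro a
      rw [← mem_sdiff, eXY]; simp
    have hYc : ∀ a, a ∈ Y ∧ a ∉ X ↔ a = k₀ := by
      intro a
      rw [← mem_sdiff, eYX]; simp
    have idXw : (insert k₀ X).erase w = insert i Y := by
      ext a
      simp only [mem_erase, mem_insert]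
      constructor
      · rintro ⟨hne, rfl | haX⟩
        · exact Or.inr hk₀Y
        · by_cases haY : a ∈ Y
          · exact Or.inr haY
          · rcases (hXc a).mp ⟨haX, haY⟩ with rfl | rfl
            · exact Or.inl rfl
            · exact absurd rfl hne
      · rintro (rfl | haY)
        · exact ⟨fun h => hwi h.symm, Or.inr hiX⟩
        · refine ⟨fun h => hwnY (h ▸ haY), ?_⟩
          by_cases haX : a ∈ X
          · exact Or.inr haX
          · exact Or.inl ((hYc a).mp ⟨haY, haX⟩)
    -- get `insert k₀ X ∈ F`
    have hXk : insert k₀ X ∈ F := by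
      rcases (hF Y hY X hX k₀ hk₀).2 with h | ⟨k, hk, hc⟩
      · exact h
      · exfalso
        rcases (hXc k).mp (mem_sdiff.mp hk) with rfl | rfl
        · rw [erase_insert_of_ne hk₀i] at hc
          exact hXk₀ hc
        · rw [idXw] at hc
          exact hYi hc
    -- X.erase w ∈ F via identity with (insert i Y).erase k₀
    have idXerw : X.erase w = (insert i Y).erase k₀ := by
      ext a
      simp only [mem_erase, mem_insert]
      constructor
      · rintro ⟨h1, h2⟩
        refine ⟨fun h => hk₀nX (h ▸ h2), ?_⟩
        by_cases haY : a ∈ Y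
        · exact Or.inr haY
        · rcases (hXc a).mp ⟨h2, haY⟩ with rfl | rfl
          · exact Or.inl rfl
          · exact absurd rfl h1
      · rintro ⟨h1, rfl | haY⟩
        · exact ⟨fun h => hwi h.symm, hiX⟩
        · refine ⟨fun h => hwnY (h ▸ haY), ?_⟩
          by_contra haX
          exact h1 ((hYc a).mp ⟨haY, haX⟩)
    have hXw : X.erase w ∈ F := by rw [idXerw]; exact hYk₀
    -- final contradiction via (a) of (insert k₀ X, X.erase w, w)
    have hwmem : w ∈ (insert k₀ X) \ (X.erase w) := by
      simp only [mem_sdiff, mem_insert, mem_erase]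
      exact ⟨Or.inr hwX, fun h => h.1 rfl⟩
    rcases (hF (insert k₀ X) hXk (X.erase w) hXw w hwmem).1 with h | ⟨j, hj, _⟩
    · rw [idXw] at h
      exact hYi h
    · simp only [mem_sdiff, mem_erase, mem_insert] at hj
      exact hj.2 (Or.inr hj.1.2)
  · -- m ≥ 4
    have hm4 : 4 ≤ m := by omega
    -- IH2 on (X, E₁, i), E₁ := (insert k₀ (X.erase i)).erase w
    set E₁ := (insert k₀ (X.erase i)).erase w with hE₁def
    have hinE₁ : i ∉ E₁ := by
      simp only [hE₁def, mem_erase, mem_insert]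
      rintro ⟨h1, h2 | ⟨h3, _⟩⟩
      · exact hk₀i h2.symm
      · exact h3 rfl
    have hsubXE₁ : X \ E₁ ⊆ {i, w} := by
      intro a ha
      obtain ⟨haX, hanE₁⟩ := mem_sdiff.mp ha
      simp only [mem_insert, mem_singleton]
      by_contra hcon
      push_neg at hcon
      exact hanE₁ (by
        simp only [hE₁def, mem_erase, mem_insert]
        exact ⟨hcon.2, Or.inr ⟨hcon.1, haX⟩⟩)
    have hsubE₁X : E₁ \ X ⊆ {k₀} := by
      intro a ha
      obtain ⟨haE₁, hanX⟩ := mem_sdiff.mp ha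
      simp only [hE₁def, mem_erase, mem_insert] at haE₁
      simp only [mem_singleton]
      rcases haE₁.2 with h | ⟨_, h⟩
      · exact h
      · exact absurd h hanX
    have hcard2 : (X \ E₁).card + (E₁ \ X).card < m := by
      have d1 : (X \ E₁).card ≤ 2 := le_trans (card_le_card hsubXE₁)
        (le_trans (card_insert_le _ _) (by simp))
      have d2 : (E₁ \ X).card ≤ 1 := le_trans (card_le_card hsubE₁X) (by simp)
      omega
    have h2 : insert i E₁ ∈ F := by
      rcases IH X E₁ hX hE₁ i (mem_sdiff.mpr ⟨hiX, hinE₁⟩) hcard2 with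
        ⟨_, h⟩ | ⟨j, hj, hc, _⟩
      · exact h
      · exfalso
        have := mem_singleton.mp (hsubE₁X hj)
        subst this
        exact hXk₀ hc
    by_cases hm42 : m = 4 ∧ (Y \ X).card = 2
    · -- shape (2,2) bespoke
      have hXY2 : (X \ Y).card = 2 := by omega
      have cardiw : ({i, w} : Finset N).card = 2 := by
        rw [card_insert_of_notMem (fun h => hwi (mem_singleton.mp h).symm),
          card_singleton]
      have eXY : X \ Y = {i, w} := by
        apply (eq_of_subset_of_card_le ?_ ?_).symm
        · intro a ha
          rcases mem_insert.mp ha with rfl | ha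
          · exact hi
          · rw [mem_singleton] at ha; exact ha ▸ hwXY
        · rw [cardiw, hXY2]
      obtain ⟨p, hp⟩ : ((Y \ X).erase k₀).Nonempty := by
        rw [← card_pos, card_erase_of_mem hk₀]
        omega
      obtain ⟨hpk₀, hpYX⟩ := mem_erase.mp hp
      obtain ⟨hpY, hpnX⟩ := mem_sdiff.mp hpYX
      have cardkp : ({k₀, p} : Finset N).card = 2 := by
        rw [card_insert_of_notMem (fun h => hpk₀ (mem_singleton.mp h).symm),
          card_singleton]
      have eYX : Y \ X = {k₀, p} := by
        apply (eq_of_subset_of_card_le ?_ ?_).symm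
        · intro a ha
          rcases mem_insert.mp ha with rfl | ha
          · exact hk₀
          · rw [mem_singleton] at ha; exact ha ▸ hpYX
        · rw [cardkp]; omega
      have hXc : ∀ a, a ∈ X ∧ a ∉ Y ↔ (a = i ∨ a = w) := by
        intro a; rw [← mem_sdiff, eXY]; simp
      have hYc : ∀ a, a ∈ Y ∧ a ∉ X ↔ (a = k₀ ∨ a = p) := by
        intro a; rw [← mem_sdiff, eYX]; simp
      have id1 : insert i E₁ = (insert i Y).erase p := by
        ext a
        simp only [hE₁def, mem_insert, mem_erase]
        constructor
        · rintro (rfl | ⟨hnw, rfl | ⟨hni, haX⟩⟩)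
          · exact ⟨fun h => hpnX (h ▸ hiX), Or.inl rfl⟩
          · exact ⟨fun h => hpk₀ h.symm, Or.inr hk₀Y⟩
          · refine ⟨fun h => hpnX (h ▸ haX), ?_⟩
            by_cases haY : a ∈ Y
            · exact Or.inr haY
            · rcases (hXc a).mp ⟨haX, haY⟩ with rfl | rfl
              · exact absurd rfl hni
              · exact absurd rfl hnw
        · rintro ⟨hnp, rfl | haY⟩
          · exact Or.inl rfl
          · by_cases haX : a ∈ X
            · exact Or.inr ⟨fun h => hwnY (h ▸ haY),
                Or.inr ⟨fun h => hiY (h ▸ haY), haX⟩⟩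
            · rcases (hYc a).mp ⟨haY, haX⟩ with rfl | rfl
              · exact Or.inr ⟨hk₀w, Or.inl rfl⟩
              · exact absurd rfl hnp
      have id2 : insert w (Y.erase k₀) = insert p (X.erase i) := by
        ext a
        simp only [mem_insert, mem_erase]
        constructor
        · rintro (rfl | ⟨hnk, haY⟩)
          · exact Or.inr ⟨hwi, hwX⟩
          · by_cases haX : a ∈ X
            · exact Or.inr ⟨fun h => hiY (h ▸ haY), haX⟩
            · rcases (hYc a).mp ⟨haY, haX⟩ with rfl | rfl
              · exact absurd rfl hnk
              · exact Or.inl rfl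
        · rintro (rfl | ⟨hni, haX⟩)
          · exact Or.inr ⟨hpk₀, hpY⟩
          · by_cases haY : a ∈ Y
            · exact Or.inr ⟨fun h => hk₀nX (h ▸ haX), haY⟩
            · rcases (hXc a).mp ⟨haX, haY⟩ with rfl | rfl
              · exact absurd rfl hni
              · exact Or.inl rfl
      exact H2 p hpYX ⟨id2 ▸ hC₁, id1 ▸ h2⟩
    · -- general chain
      have idE₂ : insert i E₁ = insert k₀ (X.erase w) := by
        ext a
        simp only [hE₁def, mem_insert, mem_erase]
        constructor
        · rintro (rfl | ⟨hnw, rfl | ⟨hni, haX⟩⟩)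
          · exact Or.inr ⟨fun h => hwi h.symm, hiX⟩
          · exact Or.inl rfl
          · exact Or.inr ⟨hnw, haX⟩
        · rintro (rfl | ⟨hnw, haX⟩)
          · exact Or.inr ⟨hk₀w, Or.inl rfl⟩
          · by_cases hai : a = i
            · exact Or.inl hai
            · exact Or.inr ⟨hnw, Or.inr ⟨hai, haX⟩⟩
      rw [idE₂] at h2
      set E₂ := insert k₀ (X.erase w) with hE₂def
      have hiE₂ : i ∈ E₂ \ Y :=
        mem_sdiff.mpr ⟨mem_insert_of_mem (mem_erase.mpr ⟨fun h => hwi h.symm, hiX⟩), hiY⟩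
      have hsub3 : E₂ \ Y ⊆ (X \ Y).erase w := by
        intro a ha
        obtain ⟨haE₂, hanY⟩ := mem_sdiff.mp ha
        rcases mem_insert.mp haE₂ with rfl | h
        · exact absurd hk₀Y hanY
        · exact mem_erase.mpr ⟨(mem_erase.mp h).1, mem_sdiff.mpr ⟨(mem_erase.mp h).2, hanY⟩⟩
      have hsub4 : Y \ E₂ ⊆ (Y \ X).erase k₀ := by
        intro a ha
        obtain ⟨haY, hanE₂⟩ := mem_sdiff.mp ha
        have hak₀ : a ≠ k₀ := fun h => hanE₂ (h ▸ mem_insert_self k₀ _)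
        have hanX : a ∉ X := fun haX => hanE₂
          (mem_insert_of_mem (mem_erase.mpr ⟨fun h => hwnY (h ▸ haY), haX⟩))
        exact mem_erase.mpr ⟨hak₀, mem_sdiff.mpr ⟨haY, hanX⟩⟩
      have hcard3 : (E₂ \ Y).card + (Y \ E₂).card < m := by
        have d1 := card_le_card hsub3
        have d2 := card_le_card hsub4
        rw [card_erase_of_mem hwXY] at d1
        rw [card_erase_of_mem hk₀] at d2
        omega
      rcases IH E₂ Y h2 hY i hiE₂ hcard3 with ⟨_, h⟩ | ⟨v, hv, hGmem, hYv⟩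
      · exact hYi h
      obtain ⟨hvY, hvnE₂⟩ := mem_sdiff.mp hv
      have hvk₀ : v ≠ k₀ := fun h => hvnE₂ (h ▸ mem_insert_self k₀ _)
      have hvnX : v ∉ X := fun haX => hvnE₂
        (mem_insert_of_mem (mem_erase.mpr ⟨fun h => hwnY (h ▸ hvY), haX⟩))
      have hvYX : v ∈ Y \ X := mem_sdiff.mpr ⟨hvY, hvnX⟩
      have hvi : v ≠ i := fun h => hvnX (h ▸ hiX)
      have hXv' : insert v (X.erase i) ∉ F := fun hc => H2 v hvYX ⟨hc, hYv⟩
      have c2' : 2 ≤ (Y \ X).card :=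
        one_lt_card.mpr ⟨k₀, hk₀, v, hvYX, fun h => hvk₀ h.symm⟩
      have hm5 : 5 ≤ m := by omega
      have hplus := lem_plus F IH X Y hX hY i hi hm hYi H2 hm4
      set G := insert v (E₂.erase i) with hGdef
      have hk₀G : k₀ ∈ G \ X := by
        refine mem_sdiff.mpr ⟨?_, hk₀nX⟩
        exact mem_insert_of_mem (mem_erase.mpr ⟨hk₀i, mem_insert_self k₀ _⟩)
      have hsub5 : G \ X ⊆ {k₀, v} := by
        intro a ha
        obtain ⟨haG, hanX⟩ := mem_sdiff.mp ha
        simp only [mem_insert, mem_singleton]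
        rcases mem_insert.mp haG with rfl | h
        · exact Or.inr rfl
        · rcases mem_insert.mp (mem_erase.mp h).2 with rfl | h'
          · exact Or.inl rfl
          · exact absurd (mem_erase.mp h').2 hanX
      have hsub6 : X \ G ⊆ {i, w} := by
        intro a ha
        obtain ⟨haX, hanG⟩ := mem_sdiff.mp ha
        simp only [mem_insert, mem_singleton]
        by_contra hcon
        push_neg at hcon
        exact hanG (mem_insert_of_mem (mem_erase.mpr ⟨hcon.1,
          mem_insert_of_mem (mem_erase.mpr ⟨hcon.2, haX⟩)⟩))
      have hcard4 : (G \ X).card + (X \ G).card < m := by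
        have d1 : (G \ X).card ≤ 2 := le_trans (card_le_card hsub5)
          (le_trans (card_insert_le _ _) (by simp))
        have d2 : (X \ G).card ≤ 2 := le_trans (card_le_card hsub6)
          (le_trans (card_insert_le _ _) (by simp))
        omega
      rcases IH G X hGmem hX k₀ hk₀G hcard4 with ⟨_, h⟩ | ⟨j, hj, hc1, hc2⟩
      · exact hplus k₀ hk₀ h
      rcases mem_insert.mp (hsub6 hj) with rfl | hj'
      · rw [erase_insert_of_ne hk₀i] at hc2
        exact hXk₀ hc2
      · rw [mem_singleton] at hj'
        subst hj'
        have idG : insert j (G.erase k₀) = insert v (X.erase i) := by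
          ext a
          simp only [hGdef, hE₂def, mem_insert, mem_erase]
          constructor
          · rintro (rfl | ⟨hnk, rfl | ⟨hni, rfl | ⟨hnw, haX⟩⟩⟩)
            · exact Or.inr ⟨hwi, hwX⟩
            · exact Or.inl rfl
            · exact absurd rfl hnk
            · exact Or.inr ⟨hni, haX⟩
          · rintro (rfl | ⟨hni, haX⟩)
            · exact Or.inr ⟨hvk₀, Or.inl rfl⟩
            · by_cases haw : a = j
              · exact Or.inl haw
              · exact Or.inr ⟨fun h => hk₀nX (h ▸ haX),
                  Or.inr ⟨hni, Or.inr ⟨haw, haX⟩⟩⟩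
        rw [idG] at hc1
        exact hXv' hc1

theorem caseD (F : Set (Finset N)) {m : ℕ}
    (IH : ∀ X' Y', X' ∈ F → Y' ∈ F → ∀ i', i' ∈ X' \ Y' →
      (X' \ Y').card + (Y' \ X').card < m → Exch F X' Y' i')
    (hF : BExcPm F) (X Y : Finset N) (hX : X ∈ F) (hY : Y ∈ F) (i : N)
    (hi : i ∈ X \ Y)
    (hm : (X \ Y).card + (Y \ X).card = m)
    (hXi : X.erase i ∉ F) (hYi : insert i Y ∉ F)
    (H2 : ∀ j ∈ Y \ X, ¬(insert j (X.erase i) ∈ F ∧ (insert i Y).erase j ∈ F)) :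
    False := by
  obtain ⟨hiX, hiY⟩ := mem_sdiff.mp hi
  rcases (hF X hX Y hY i hi).1 with h | ⟨j₀, hj₀, hXj₀⟩
  · exact hXi h
  rcases (hF X hX Y hY i hi).2 with h | ⟨k₀, hk₀, hYk₀⟩
  · exact hYi h
  obtain ⟨hj₀Y, hj₀nX⟩ := mem_sdiff.mp hj₀
  obtain ⟨hk₀Y, hk₀nX⟩ := mem_sdiff.mp hk₀
  have hj₀i : j₀ ≠ i := fun h => hj₀nX (h ▸ hiX)
  have hk₀i : k₀ ≠ i := fun h => hk₀nX (h ▸ hiX)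
  have h2j₀ : (insert i Y).erase j₀ ∉ F := fun h => H2 j₀ hj₀ ⟨hXj₀, h⟩
  have h2k₀ : insert k₀ (X.erase i) ∉ F := fun h => H2 k₀ hk₀ ⟨h, hYk₀⟩
  have hj₀k₀ : j₀ ≠ k₀ := fun h => h2k₀ (h ▸ hXj₀)
  have c1 : 1 ≤ (X \ Y).card := card_pos.mpr ⟨i, hi⟩
  have c2 : 2 ≤ (Y \ X).card :=
    one_lt_card.mpr ⟨j₀, hj₀, k₀, hk₀, hj₀k₀⟩
  by_cases hm3 : m = 3
  · -- shape (1,2) bespoke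
    have hXY1 : (X \ Y).card = 1 := by omega
    have eXY : X \ Y = {i} := by
      apply (eq_of_subset_of_card_le ?_ ?_).symm
      · intro a ha
        rw [mem_singleton] at ha; exact ha ▸ hi
      · rw [card_singleton, hXY1]
    have cardjk : ({j₀, k₀} : Finset N).card = 2 := by
      rw [card_insert_of_notMem (fun h => hj₀k₀ (mem_singleton.mp h)),
        card_singleton]
    have eYX : Y \ X = {j₀, k₀} := by
      apply (eq_of_subset_of_card_le ?_ ?_).symm
      · intro a ha
        rcases mem_insert.mp ha with rfl | ha
        · exact hj₀
        · rw [mem_singleton] at ha; exact ha ▸ hk₀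
      · rw [cardjk]; omega
    have hXc : ∀ a, a ∈ X ∧ a ∉ Y ↔ a = i := by
      intro a; rw [← mem_sdiff, eXY]; simp
    have hYc : ∀ a, a ∈ Y ∧ a ∉ X ↔ (a = j₀ ∨ a = k₀) := by
      intro a; rw [← mem_sdiff, eYX]; simp
    rcases (hF Y hY X hX k₀ hk₀).2 with h | ⟨k, hk, hc⟩
    · -- insert k₀ X = (insert i Y).erase j₀
      have idA : insert k₀ X = (insert i Y).erase j₀ := by
        ext a
        simp only [mem_insert, mem_erase]
        constructor
        · rintro (rfl | haX)
          · exact ⟨fun h => hj₀k₀ h.symm, Or.inr hk₀Y⟩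
          · refine ⟨fun h => hj₀nX (h ▸ haX), ?_⟩
            by_cases haY : a ∈ Y
            · exact Or.inr haY
            · exact Or.inl ((hXc a).mp ⟨haX, haY⟩)
        · rintro ⟨hnj, rfl | haY⟩
          · exact Or.inr hiX
          · by_cases haX : a ∈ X
            · exact Or.inr haX
            · rcases (hYc a).mp ⟨haY, haX⟩ with rfl | rfl
              · exact absurd rfl hnj
              · exact Or.inl rfl
      rw [idA] at h
      exact h2j₀ h
    · have : k = i := (hXc k).mp (mem_sdiff.mp hk)
      subst this
      rw [erase_insert_of_ne hk₀i] at hc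
      exact h2k₀ hc
  by_cases hm42 : m = 4 ∧ (X \ Y).card = 2
  · -- shape (2,2) bespoke
    obtain ⟨w, hw⟩ : ((X \ Y).erase i).Nonempty := by
      rw [← card_pos, card_erase_of_mem hi]
      omega
    obtain ⟨hwi, hwXY⟩ := mem_erase.mp hw
    obtain ⟨hwX, hwnY⟩ := mem_sdiff.mp hwXY
    have hYX2 : (Y \ X).card = 2 := by omega
    have cardjk : ({j₀, k₀} : Finset N).card = 2 := by
      rw [card_insert_of_notMem (fun h => hj₀k₀ (mem_singleton.mp h)),
        card_singleton]
    have eYX : Y \ X = {j₀, k₀} := by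
      apply (eq_of_subset_of_card_le ?_ ?_).symm
      · intro a ha
        rcases mem_insert.mp ha with rfl | ha
        · exact hj₀
        · rw [mem_singleton] at ha; exact ha ▸ hk₀
      · rw [cardjk, hYX2]
    have cardiw : ({i, w} : Finset N).card = 2 := by
      rw [card_insert_of_notMem (fun h => hwi (mem_singleton.mp h).symm),
        card_singleton]
    have eXY : X \ Y = {i, w} := by
      apply (eq_of_subset_of_card_le ?_ ?_).symm
      · intro a ha
        rcases mem_insert.mp ha with rfl | ha
        · exact hi
        · rw [mem_singleton] at ha; exact ha ▸ hwXY
      · rw [cardiw]; omega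
    have hXc : ∀ a, a ∈ X ∧ a ∉ Y ↔ (a = i ∨ a = w) := by
      intro a; rw [← mem_sdiff, eXY]; simp
    have hYc : ∀ a, a ∈ Y ∧ a ∉ X ↔ (a = j₀ ∨ a = k₀) := by
      intro a; rw [← mem_sdiff, eYX]; simp
    -- derive insert k₀ X ∈ F
    have hXq : insert k₀ X ∈ F := by
      rcases (hF Y hY X hX k₀ hk₀).2 with h | ⟨k, hk, hc⟩
      · exact h
      · exfalso
        rcases (hXc k).mp (mem_sdiff.mp hk) with rfl | rfl
        · rw [erase_insert_of_ne hk₀i] at hc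
          exact h2k₀ hc
        · have idB : (insert k₀ X).erase k = (insert i Y).erase j₀ := by
            ext a
            simp only [mem_insert, mem_erase]
            constructor
            · rintro ⟨hnw, rfl | haX⟩
              · exact ⟨fun h => hj₀k₀ h.symm, Or.inr hk₀Y⟩
              · refine ⟨fun h => hj₀nX (h ▸ haX), ?_⟩
                by_cases haY : a ∈ Y
                · exact Or.inr haY
                · rcases (hXc a).mp ⟨haX, haY⟩ with rfl | rfl
                  · exact Or.inl rfl
                  · exact absurd rfl hnw
            · rintro ⟨hnj, rfl | haY⟩
              · exact ⟨fun h => hwi h.symm, Or.inr hiX⟩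
              · refine ⟨fun h => hwnY (h ▸ haY), ?_⟩
                by_cases haX : a ∈ X
                · exact Or.inr haX
                · rcases (hYc a).mp ⟨haY, haX⟩ with rfl | rfl
                  · exact absurd rfl hnj
                  · exact Or.inl rfl
          rw [idB] at hc
          exact h2j₀ hc
    have hik₀mem : i ∈ (insert k₀ X) \ Y :=
      mem_sdiff.mpr ⟨mem_insert_of_mem hiX, hiY⟩
    have hcardq : ((insert k₀ X) \ Y).card + (Y \ (insert k₀ X)).card < m := by
      rw [insert_sdiff_of_mem _ hk₀Y, sdiff_insert, card_erase_of_mem hk₀]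
      omega
    rcases IH (insert k₀ X) Y hXq hY i hik₀mem hcardq with ⟨hc, _⟩ | ⟨t, ht, _, hc2⟩
    · rw [erase_insert_of_ne hk₀i] at hc
      exact h2k₀ hc
    · obtain ⟨htY, htnXk⟩ := mem_sdiff.mp ht
      have htnX : t ∉ X := fun h => htnXk (mem_insert_of_mem h)
      have htk₀ : t ≠ k₀ := fun h => htnXk (h ▸ mem_insert_self k₀ X)
      rcases (hYc t).mp ⟨htY, htnX⟩ with rfl | rfl
      · exact h2j₀ hc2
      · exact absurd rfl htk₀
  · -- general chain
    have hm4 : 4 ≤ m := by omega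
    have hplus := lem_plus F IH X Y hX hY i hi hm hYi H2 hm4
    have idX₁i : insert i (insert j₀ (X.erase i)) = insert j₀ X := by
      ext a
      simp only [mem_insert, mem_erase]
      constructor
      · rintro (rfl | rfl | ⟨_, haX⟩)
        · exact Or.inr hiX
        · exact Or.inl rfl
        · exact Or.inr haX
      · rintro (rfl | haX)
        · exact Or.inr (Or.inl rfl)
        · by_cases hai : a = i
          · exact Or.inl hai
          · exact Or.inr (Or.inr ⟨hai, haX⟩)
    have hiY₁X₁ : i ∈ ((insert i Y).erase k₀) \ (insert j₀ (X.erase i)) := by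
      refine mem_sdiff.mpr ⟨mem_erase.mpr ⟨fun h => hk₀i h.symm, mem_insert_self i Y⟩, ?_⟩
      simp only [mem_insert, mem_erase]
      rintro (h | ⟨h, _⟩)
      · exact hj₀i h.symm
      · exact h rfl
    have hsubY₁ : ((insert i Y).erase k₀) \ (insert j₀ (X.erase i)) ⊆
        insert i ((Y \ X).erase j₀) := by
      intro a ha
      obtain ⟨haY₁, hanX₁⟩ := mem_sdiff.mp ha
      obtain ⟨hak₀, haiY⟩ := mem_erase.mp haY₁
      simp only [mem_insert, mem_erase] at hanX₁ ⊢
      push_neg at hanX₁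
      rcases mem_insert.mp haiY with rfl | haY
      · exact Or.inl rfl
      · have hai : a ≠ i := fun h => hiY (h ▸ haY)
        exact Or.inr ⟨hanX₁.1, mem_sdiff.mpr ⟨haY, fun haX => hanX₁.2 hai haX⟩⟩
    have hsubX₁ : (insert j₀ (X.erase i)) \ ((insert i Y).erase k₀) ⊆
        (X \ Y).erase i := by
      intro a ha
      obtain ⟨haX₁, hanY₁⟩ := mem_sdiff.mp ha
      rcases mem_insert.mp haX₁ with rfl | h
      · exact absurd (mem_erase.mpr ⟨hj₀k₀, mem_insert_of_mem hj₀Y⟩) hanY₁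
      · obtain ⟨hai, haX⟩ := mem_erase.mp h
        have hak₀ : a ≠ k₀ := fun h' => hk₀nX (h' ▸ haX)
        have hanY : a ∉ Y := fun haY =>
          hanY₁ (mem_erase.mpr ⟨hak₀, mem_insert_of_mem haY⟩)
        exact mem_erase.mpr ⟨hai, mem_sdiff.mpr ⟨haX, hanY⟩⟩
    have hcardY₁ : (((insert i Y).erase k₀) \ (insert j₀ (X.erase i))).card +
        ((insert j₀ (X.erase i)) \ ((insert i Y).erase k₀)).card < m := by
      have d1 := card_le_card hsubY₁
      have d2 := card_le_card hsubX₁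
      have e1 : (insert i ((Y \ X).erase j₀)).card ≤ (Y \ X).card := by
        refine le_trans (card_insert_le _ _) ?_
        rw [card_erase_of_mem hj₀]
        omega
      rw [card_erase_of_mem hi] at d2
      omega
    rcases IH ((insert i Y).erase k₀) (insert j₀ (X.erase i)) hYk₀ hXj₀ i
      hiY₁X₁ hcardY₁ with ⟨_, h⟩ | ⟨t, ht, _, hB₁pre⟩
    · rw [idX₁i] at h
      exact hplus j₀ hj₀ h
    rw [idX₁i] at hB₁pre
    have htXYe := hsubX₁ ht
    obtain ⟨hti, htXY⟩ := mem_erase.mp htXYe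
    obtain ⟨htX, htnY⟩ := mem_sdiff.mp htXY
    have htj₀ : t ≠ j₀ := fun h => hj₀nX (h ▸ htX)
    have c1' : 2 ≤ (X \ Y).card :=
      one_lt_card.mpr ⟨i, hi, t, htXY, fun h => hti h.symm⟩
    have hm5 : 5 ≤ m := by omega
    -- B₁ := (insert j₀ X).erase t
    have hiB₁Y : i ∈ ((insert j₀ X).erase t) \ Y := by
      refine mem_sdiff.mpr ⟨mem_erase.mpr ⟨fun h => hti h.symm, mem_insert_of_mem hiX⟩, hiY⟩
    have hsubB₁ : ((insert j₀ X).erase t) \ Y ⊆ (X \ Y).erase t := by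
      intro a ha
      obtain ⟨haB₁, hanY⟩ := mem_sdiff.mp ha
      obtain ⟨hat, h⟩ := mem_erase.mp haB₁
      rcases mem_insert.mp h with rfl | haX
      · exact absurd hj₀Y hanY
      · exact mem_erase.mpr ⟨hat, mem_sdiff.mpr ⟨haX, hanY⟩⟩
    have hsubYB₁ : Y \ ((insert j₀ X).erase t) ⊆ (Y \ X).erase j₀ := by
      intro a ha
      obtain ⟨haY, hanB₁⟩ := mem_sdiff.mp ha
      have haj₀ : a ≠ j₀ := fun h => hanB₁ (by
        rw [h]; exact mem_erase.mpr ⟨Ne.symm htj₀, mem_insert_self j₀ X⟩)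
      have hanX : a ∉ X := fun haX => hanB₁ (mem_erase.mpr
        ⟨fun h => htnY (h ▸ haY), mem_insert_of_mem haX⟩)
      exact mem_erase.mpr ⟨haj₀, mem_sdiff.mpr ⟨haY, hanX⟩⟩
    have hcardB₁ : (((insert j₀ X).erase t) \ Y).card +
        (Y \ ((insert j₀ X).erase t)).card < m := by
      have d1 := card_le_card hsubB₁
      have d2 := card_le_card hsubYB₁
      rw [card_erase_of_mem htXY] at d1
      rw [card_erase_of_mem hj₀] at d2
      omega
    rcases IH ((insert j₀ X).erase t) Y hB₁pre hY i hiB₁Y hcardB₁ with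
      ⟨_, h⟩ | ⟨u, hu, hD₁pre, hYu⟩
    · exact hYi h
    obtain ⟨huY, hunB₁⟩ := mem_sdiff.mp hu
    have huj₀ : u ≠ j₀ := fun h => hunB₁ (by
      rw [h]; exact mem_erase.mpr ⟨Ne.symm htj₀, mem_insert_self j₀ X⟩)
    have hunX : u ∉ X := fun haX => hunB₁ (mem_erase.mpr
      ⟨fun h => htnY (h ▸ huY), mem_insert_of_mem haX⟩)
    have huYX : u ∈ Y \ X := mem_sdiff.mpr ⟨huY, hunX⟩
    have hui : u ≠ i := fun h => hunX (h ▸ hiX)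
    have hut : u ≠ t := fun h => hunX (h ▸ htX)
    have hXu' : insert u (X.erase i) ∉ F := fun hc => H2 u huYX ⟨hc, hYu⟩
    -- D₁ := insert u (B₁.erase i)
    have hj₀D₁ : j₀ ∈ (insert u ((((insert j₀ X).erase t)).erase i)) \ X := by
      refine mem_sdiff.mpr ⟨mem_insert_of_mem (mem_erase.mpr ⟨hj₀i,
        mem_erase.mpr ⟨Ne.symm htj₀, mem_insert_self j₀ X⟩⟩), hj₀nX⟩
    have hsubD₁ : (insert u ((((insert j₀ X).erase t)).erase i)) \ X ⊆ {j₀, u} := by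
      intro a ha
      obtain ⟨haD₁, hanX⟩ := mem_sdiff.mp ha
      simp only [mem_insert, mem_singleton]
      rcases mem_insert.mp haD₁ with rfl | h
      · exact Or.inr rfl
      · obtain ⟨_, h⟩ := mem_erase.mp h
        obtain ⟨_, h⟩ := mem_erase.mp h
        rcases mem_insert.mp h with rfl | haX
        · exact Or.inl rfl
        · exact absurd haX hanX
    have hsubXD₁ : X \ (insert u ((((insert j₀ X).erase t)).erase i)) ⊆ {i, t} := by
      intro a ha
      obtain ⟨haX, hanD₁⟩ := mem_sdiff.mp ha
      simp only [mem_insert, mem_singleton]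
      by_contra hcon
      push_neg at hcon
      exact hanD₁ (mem_insert_of_mem (mem_erase.mpr ⟨hcon.1,
        mem_erase.mpr ⟨hcon.2, mem_insert_of_mem haX⟩⟩))
    have hcardD₁ : ((insert u ((((insert j₀ X).erase t)).erase i)) \ X).card +
        (X \ (insert u ((((insert j₀ X).erase t)).erase i))).card < m := by
      have d1 : _ ≤ 2 := le_trans (card_le_card hsubD₁)
        (le_trans (card_insert_le _ _) (by simp))
      have d2 : _ ≤ 2 := le_trans (card_le_card hsubXD₁)
        (le_trans (card_insert_le _ _) (by simp))
      omega
    have hF₁ : insert u (X.erase t) ∈ F := by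
      rcases IH (insert u ((((insert j₀ X).erase t)).erase i)) X hD₁pre hX j₀
        hj₀D₁ hcardD₁ with ⟨_, h⟩ | ⟨j, hj, hc1, _⟩
      · exact absurd h (hplus j₀ hj₀)
      rcases mem_insert.mp (hsubXD₁ hj) with rfl | hj'
      · -- j = i : clean identity gives insert u (X.erase t)
        have idF₁ : insert j ((insert u ((((insert j₀ X).erase t)).erase j)).erase j₀)
            = insert u (X.erase t) := by
          ext a
          simp only [mem_insert, mem_erase]
          constructor
          · rintro (rfl | ⟨hnj₀, rfl | ⟨hni, hnt, rfl | haX⟩⟩)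
            · exact Or.inr ⟨fun h => hti h.symm, hiX⟩
            · exact Or.inl rfl
            · exact absurd rfl hnj₀
            · exact Or.inr ⟨hnt, haX⟩
          · rintro (rfl | ⟨hnt, haX⟩)
            · exact Or.inr ⟨huj₀, Or.inl rfl⟩
            · by_cases hai : a = j
              · exact Or.inl hai
              · exact Or.inr ⟨fun h => hj₀nX (h ▸ haX),
                  Or.inr ⟨hai, hnt, Or.inr haX⟩⟩
        rw [idF₁] at hc1
        exact hc1
      · exfalso
        rw [mem_singleton] at hj'
        subst hj'
        have idT : insert j ((insert u ((((insert j₀ X).erase j)).erase i)).erase j₀)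
            = insert u (X.erase i) := by
          ext a
          simp only [mem_insert, mem_erase]
          constructor
          · rintro (rfl | ⟨hnj₀, rfl | ⟨hni, hnt, rfl | haX⟩⟩)
            · exact Or.inr ⟨hti, htX⟩
            · exact Or.inl rfl
            · exact absurd rfl hnj₀
            · exact Or.inr ⟨hni, haX⟩
          · rintro (rfl | ⟨hni, haX⟩)
            · exact Or.inr ⟨huj₀, Or.inl rfl⟩
            · by_cases hat : a = j
              · exact Or.inl hat
              · exact Or.inr ⟨fun h => hj₀nX (h ▸ haX),
                  Or.inr ⟨hni, hat, Or.inr haX⟩⟩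
        rw [idT] at hc1
        exact hXu' hc1
    -- F₁ := insert u (X.erase t)
    have hiF₁Y : i ∈ (insert u (X.erase t)) \ Y :=
      mem_sdiff.mpr ⟨mem_insert_of_mem (mem_erase.mpr ⟨fun h => hti h.symm, hiX⟩), hiY⟩
    have hsubF₁ : (insert u (X.erase t)) \ Y ⊆ (X \ Y).erase t := by
      intro a ha
      obtain ⟨haF₁, hanY⟩ := mem_sdiff.mp ha
      rcases mem_insert.mp haF₁ with rfl | h
      · exact absurd huY hanY
      · exact mem_erase.mpr ⟨(mem_erase.mp h).1,
          mem_sdiff.mpr ⟨(mem_erase.mp h).2, hanY⟩⟩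
    have hsubYF₁ : Y \ (insert u (X.erase t)) ⊆ (Y \ X).erase u := by
      intro a ha
      obtain ⟨haY, hanF₁⟩ := mem_sdiff.mp ha
      have hau : a ≠ u := fun h => hanF₁ (by rw [h]; exact mem_insert_self u _)
      have hanX : a ∉ X := fun haX => hanF₁ (mem_insert_of_mem
        (mem_erase.mpr ⟨fun h => htnY (h ▸ haY), haX⟩))
      exact mem_erase.mpr ⟨hau, mem_sdiff.mpr ⟨haY, hanX⟩⟩
    have hcardF₁ : ((insert u (X.erase t)) \ Y).card +
        (Y \ (insert u (X.erase t))).card < m := by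
      have d1 := card_le_card hsubF₁
      have d2 := card_le_card hsubYF₁
      rw [card_erase_of_mem htXY] at d1
      rw [card_erase_of_mem huYX] at d2
      omega
    rcases IH (insert u (X.erase t)) Y hF₁ hY i hiF₁Y hcardF₁ with
      ⟨_, h⟩ | ⟨v, hv, hG₁pre, hYv⟩
    · exact hYi h
    obtain ⟨hvY, hvnF₁⟩ := mem_sdiff.mp hv
    have hvu : v ≠ u := fun h => hvnF₁ (by rw [h]; exact mem_insert_self u _)
    have hvnX : v ∉ X := fun haX => hvnF₁ (mem_insert_of_mem
      (mem_erase.mpr ⟨fun h => htnY (h ▸ hvY), haX⟩))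
    have hvYX : v ∈ Y \ X := mem_sdiff.mpr ⟨hvY, hvnX⟩
    have hvi : v ≠ i := fun h => hvnX (h ▸ hiX)
    have hXv' : insert v (X.erase i) ∉ F := fun hc => H2 v hvYX ⟨hc, hYv⟩
    -- G₁ := insert v (F₁.erase i)
    have huG₁ : u ∈ (insert v ((insert u (X.erase t)).erase i)) \ X :=
      mem_sdiff.mpr ⟨mem_insert_of_mem (mem_erase.mpr ⟨hui, mem_insert_self u _⟩), hunX⟩
    have hsubG₁ : (insert v ((insert u (X.erase t)).erase i)) \ X ⊆ {u, v} := by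
      intro a ha
      obtain ⟨haG₁, hanX⟩ := mem_sdiff.mp ha
      simp only [mem_insert, mem_singleton]
      rcases mem_insert.mp haG₁ with rfl | h
      · exact Or.inr rfl
      · rcases mem_insert.mp (mem_erase.mp h).2 with rfl | h'
        · exact Or.inl rfl
        · exact absurd (mem_erase.mp h').2 hanX
    have hsubXG₁ : X \ (insert v ((insert u (X.erase t)).erase i)) ⊆ {i, t} := by
      intro a ha
      obtain ⟨haX, hanG₁⟩ := mem_sdiff.mp ha
      simp only [mem_insert, mem_singleton]
      by_contra hcon
      push_neg at hcon
      exact hanG₁ (mem_insert_of_mem (mem_erase.mpr ⟨hcon.1,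
        mem_insert_of_mem (mem_erase.mpr ⟨hcon.2, haX⟩)⟩))
    have hcardG₁ : ((insert v ((insert u (X.erase t)).erase i)) \ X).card +
        (X \ (insert v ((insert u (X.erase t)).erase i))).card < m := by
      have d1 : _ ≤ 2 := le_trans (card_le_card hsubG₁)
        (le_trans (card_insert_le _ _) (by simp))
      have d2 : _ ≤ 2 := le_trans (card_le_card hsubXG₁)
        (le_trans (card_insert_le _ _) (by simp))
      omega
    rcases IH (insert v ((insert u (X.erase t)).erase i)) X hG₁pre hX u huG₁
      hcardG₁ with ⟨_, h⟩ | ⟨j, hj, hc1, hc2⟩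
    · exact hplus u huYX h
    rcases mem_insert.mp (hsubXG₁ hj) with rfl | hj'
    · rw [erase_insert_of_ne hui] at hc2
      exact hXu' hc2
    · rw [mem_singleton] at hj'
      subst hj'
      have idG₁ : insert j ((insert v ((insert u (X.erase j)).erase i)).erase u)
          = insert v (X.erase i) := by
        ext a
        simp only [mem_insert, mem_erase]
        constructor
        · rintro (rfl | ⟨hnu, rfl | ⟨hni, rfl | ⟨hnt, haX⟩⟩⟩)
          · exact Or.inr ⟨hti, htX⟩
          · exact Or.inl rfl
          · exact absurd rfl hnu
          · exact Or.inr ⟨hni, haX⟩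
        · rintro (rfl | ⟨hni, haX⟩)
          · exact Or.inr ⟨hvu, Or.inl rfl⟩
          · by_cases hat : a = j
            · exact Or.inl hat
            · exact Or.inr ⟨fun h => hunX (h ▸ haX),
                Or.inr ⟨hni, Or.inr ⟨hat, haX⟩⟩⟩
      rw [idG₁] at hc1
      exact hXv' hc1



variable [Fintype N]

theorem compl_sdiff_compl' (A B : Finset N) : Aᶜ \ Bᶜ = B \ A := by
  ext a
  simp only [mem_sdiff, mem_compl, not_not]
  tauto

theorem key (m : ℕ) : ∀ (F : Set (Finset N)), BExcPm F → ∀ X Y : Finset N,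
    X ∈ F → Y ∈ F → ∀ i, i ∈ X \ Y → (X \ Y).card + (Y \ X).card = m →
    Exch F X Y i := by
  induction m using Nat.strong_induction_on with
  | _ m IH =>
    intro F hF X Y hX hY i hi hm
    by_contra hcon
    have H1 : ¬(X.erase i ∈ F ∧ insert i Y ∈ F) := fun h => hcon (Or.inl h)
    have H2 : ∀ j ∈ Y \ X,
        ¬(insert j (X.erase i) ∈ F ∧ (insert i Y).erase j ∈ F) :=
      fun j hj h => hcon (Or.inr ⟨j, hj, h⟩)
    have IH' : ∀ X' Y', X' ∈ F → Y' ∈ F → ∀ i', i' ∈ X' \ Y' →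
        (X' \ Y').card + (Y' \ X').card < m → Exch F X' Y' i' :=
      fun X' Y' hX' hY' i' hi' hlt => IH _ hlt F hF X' Y' hX' hY' i' hi' rfl
    by_cases hXi : X.erase i ∈ F
    · by_cases hYi : insert i Y ∈ F
      · exact H1 ⟨hXi, hYi⟩
      · exact caseB F IH' hF X Y hX hY i hi hm hXi hYi H2
    · by_cases hYi : insert i Y ∈ F
      · -- dualize and use caseB
        set F' : Set (Finset N) := (fun s : Finset N => sᶜ) '' F with hF'def
        have hF' : BExcPm F' := bexcpm_compl F hF
        have IH'' : ∀ X' Y', X' ∈ F' → Y' ∈ F' → ∀ i', i' ∈ X' \ Y' →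
            (X' \ Y').card + (Y' \ X').card < m → Exch F' X' Y' i' :=
          fun X' Y' hX' hY' i' hi' hlt => IH _ hlt F' hF' X' Y' hX' hY' i' hi' rfl
        have hYc : Yᶜ ∈ F' := ⟨Y, hY, rfl⟩
        have hXc : Xᶜ ∈ F' := ⟨X, hX, rfl⟩
        have e1 : Yᶜ \ Xᶜ = X \ Y := compl_sdiff_compl' Y X
        have e2 : Xᶜ \ Yᶜ = Y \ X := compl_sdiff_compl' X Y
        have hi' : i ∈ Yᶜ \ Xᶜ := by rw [e1]; exact hi
        have hm' : (Yᶜ \ Xᶜ).card + (Xᶜ \ Yᶜ).card = m := by rw [e1, e2]; exact hm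
        have hXi' : (Yᶜ).erase i ∈ F' := by
          rw [show (Yᶜ).erase i = (insert i Y)ᶜ by rw [Finset.compl_insert],
            mem_compl_image]
          exact hYi
        have hYi' : insert i (Xᶜ) ∉ F' := by
          rw [show insert i (Xᶜ) = (X.erase i)ᶜ by rw [Finset.compl_erase],
            mem_compl_image]
          exact hXi
        have H2' : ∀ j ∈ Xᶜ \ Yᶜ,
            ¬(insert j ((Yᶜ).erase i) ∈ F' ∧ (insert i (Xᶜ)).erase j ∈ F') := by
          intro j hj hcc
          rw [e2] at hj
          rw [show insert j ((Yᶜ).erase i) = ((insert i Y).erase j)ᶜ by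
                simp [Finset.compl_erase, Finset.compl_insert],
              mem_compl_image] at hcc
          rw [show (insert i (Xᶜ)).erase j = (insert j (X.erase i))ᶜ by
                simp [Finset.compl_erase, Finset.compl_insert],
              mem_compl_image] at hcc
          exact H2 j hj ⟨hcc.2, hcc.1⟩
        exact caseB F' IH'' hF' (Yᶜ) (Xᶜ) hYc hXc i hi' hm' hXi' hYi' H2'
      · exact caseD F IH' hF X Y hX hY i hi hm hXi hYi H2

end BexcAux

theorem bexcpm_iff_bexc {N : Type*} [Fintype N] [DecidableEq N]
    (F : Set (Finset N)) : BExcPm F ↔ BExc F := by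
  constructor
  · intro h X hX Y hY i hi
    exact BexcAux.key _ F h X Y hX hY i hi rfl
  · exact BexcAux.bexc_to_bexcpm F
end
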